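/- arXiv:1905.02266 — 7 statements merged into one kernel-verified Lean document; each statement's English description precedes it below -/
import Mathlib

section
/- A graph G has a clique forest (a spanning forest of its clique graph satisfying the clique-intersection property) if and only if G is chordal. -/
open SimpleGraph

/-- A graph is chordal if every cycle of length ≥ 4 has a chord: an edge of the
graph between two vertices of the cycle that is not an edge of the cycle. -/
def IsChordal {V : Type*} (G : SimpleGraph V) : Prop :=
  ∀ (v : V) (w : G.Walk v v), w.IsCycle → 4 ≤ w.length →
    ∃ a b, a ∈ w.support ∧ b ∈ w.support ∧ G.Adj a b ∧ s(a, b) ∉ w.edges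

/-- A maximal complete set of vertices. -/
def IsMaxClique {V : Type*} (G : SimpleGraph V) (s : Set V) : Prop :=
  G.IsClique s ∧ ∀ t : Set V, G.IsClique t → s ⊆ t → t = s

/-- The clique graph: vertices are the maximal cliques of `G`, with an edge between
two distinct cliques whenever their intersection is nonempty. -/
def cliqueGraph {V : Type*} (G : SimpleGraph V) :
    SimpleGraph {s : Set V // IsMaxClique G s} :=
  SimpleGraph.fromRel (fun c d => ((c : Set V) ∩ (d : Set V)).Nonempty)

namespace CFP

variable {V : Type*}

lemma exists_maxClique [Finite V] (G : SimpleGraph V) {s : Set V} (hs : G.IsClique s) :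
    ∃ t : Set V, IsMaxClique G t ∧ s ⊆ t := by
  obtain ⟨t, ht, hmax⟩ := Set.Finite.exists_maximalFor (id : Set V → Set V)
    {t | G.IsClique t ∧ s ⊆ t} (Set.toFinite _) ⟨s, hs, subset_rfl⟩
  refine ⟨t, ⟨ht.1, fun t' ht' hst' => ?_⟩, ht.2⟩
  exact le_antisymm (hmax ⟨ht', ht.2.trans hst'⟩ hst') hst'

namespace W

variable {G : SimpleGraph V}

lemma edge_getVert_mem_edges : ∀ {u v : V} (p : G.Walk u v) {i : ℕ}, i < p.length →
    s(p.getVert i, p.getVert (i + 1)) ∈ p.edges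
  | _, _, .cons h q, 0, _ => by
      simp [Walk.getVert_zero, Walk.getVert_cons_succ, Walk.edges_cons]
  | _, _, .cons h q, (i+1), hi => by
      simp only [Walk.getVert_cons_succ, Walk.edges_cons, List.mem_cons]
      exact Or.inr (edge_getVert_mem_edges q (by simpa using hi))

lemma exists_getVert_of_mem_edges : ∀ {u v : V} (p : G.Walk u v) {e : Sym2 V}, e ∈ p.edges →
    ∃ i, i < p.length ∧ e = s(p.getVert i, p.getVert (i + 1))
  | _, _, .cons h q, e, he => by
      rw [Walk.edges_cons, List.mem_cons] at he
      rcases he with he | he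
      · exact ⟨0, by simp, by simpa [Walk.getVert_zero, Walk.getVert_cons_succ] using he⟩
      · obtain ⟨i, hi, hei⟩ := exists_getVert_of_mem_edges q he
        exact ⟨i + 1, by simpa using hi, by simpa [Walk.getVert_cons_succ] using hei⟩

lemma support_eq_map_getVert : ∀ {u v : V} (p : G.Walk u v),
    p.support = (List.range (p.length + 1)).map p.getVert
  | _, _, .nil => rfl
  | _, _, .cons h q => by
      rw [Walk.support_cons, support_eq_map_getVert q, Walk.length_cons,
        List.range_succ_eq_map (n := q.length + 1)]
      simp only [List.map_cons, List.map_map, Walk.getVert_zero]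
      congr 1

/-- injectivity of `getVert` on `[1, n]` for a cycle -/
lemma cycle_getVert_injOn {v : V} {w : G.Walk v v} (hw : w.IsCycle) :
    ∀ {i j : ℕ}, 1 ≤ i → i ≤ w.length → 1 ≤ j → j ≤ w.length →
      w.getVert i = w.getVert j → i = j := by
  have hsup := support_eq_map_getVert w
  have htail : w.support.tail = (List.range w.length).map (fun k => w.getVert (k + 1)) := by
    rw [hsup, List.range_succ_eq_map]
    simp only [List.map_cons, List.tail_cons, List.map_map]
    rfl
  have hnd := hw.support_nodup
  rw [htail] at hnd
  intro i j hi1 hin hj1 hjn hij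
  have := List.inj_on_of_nodup_map hnd (x := i - 1) (y := j - 1)
    (by rw [List.mem_range]; omega) (by rw [List.mem_range]; omega)
  have h' : w.getVert (i - 1 + 1) = w.getVert (j - 1 + 1) := by
    rw [(by omega : i - 1 + 1 = i), (by omega : j - 1 + 1 = j)]; exact hij
  have := this h'
  omega

/-- Two cyclically non-consecutive positions on a cycle (indices in `[1,n]`,
`p + 2 ≤ q`, not the wrap pair `(1, n)`) give distinct vertices with no cycle edge. -/
lemma cycle_nonconsec {v : V} {w : G.Walk v v} (hw : w.IsCycle)
    {p q : ℕ} (hp1 : 1 ≤ p) (hq : p + 2 ≤ q) (hqn : q ≤ w.length)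
    (hwrap : ¬(p = 1 ∧ q = w.length)) :
    w.getVert p ≠ w.getVert q ∧ s(w.getVert p, w.getVert q) ∉ w.edges := by
  constructor
  · intro h
    have := cycle_getVert_injOn hw hp1 (by omega) (by omega) hqn h
    omega
  · intro hmem
    obtain ⟨i, hi, hei⟩ := exists_getVert_of_mem_edges w hmem
    have h0n : w.getVert 0 = w.getVert w.length := by
      rw [Walk.getVert_zero, Walk.getVert_length]
    rw [Sym2.eq_iff] at hei
    rcases hei with ⟨h1, h2⟩ | ⟨h1, h2⟩
    · rcases Nat.eq_zero_or_pos i with rfl | hipos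
      · rw [h0n] at h1
        have := cycle_getVert_injOn hw hp1 (by omega) (by omega) le_rfl h1
        have := cycle_getVert_injOn hw (by omega) hqn (by omega) (by omega) h2
        omega
      · have := cycle_getVert_injOn hw hp1 (by omega) (by omega) (by omega) h1
        have := cycle_getVert_injOn hw (by omega) hqn (by omega) (by omega) h2
        omega
    · rcases Nat.eq_zero_or_pos i with rfl | hipos
      · rw [h0n] at h2
        have := cycle_getVert_injOn hw hp1 (by omega) (by omega) (by omega) h1
        have := cycle_getVert_injOn hw (by omega) hqn (by omega) le_rfl h2
        omega
      · have := cycle_getVert_injOn hw hp1 (by omega) (by omega) (by omega) h1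
        have := cycle_getVert_injOn hw (by omega) hqn (by omega) (by omega) h2
        omega

end W
end CFP

namespace CFP
section Forward

variable {V : Type*} {G : SimpleGraph V}

abbrev MC (G : SimpleGraph V) := {s : Set V // IsMaxClique G s}

variable {F : SimpleGraph (MC G)}

lemma reach_of_inter (hreach : ∀ c d, (cliqueGraph G).Reachable c d → F.Reachable c d)
    {c d : MC G} (h : ((c : Set V) ∩ (d : Set V)).Nonempty) : F.Reachable c d := by
  rcases eq_or_ne c d with rfl | hne
  · rfl
  · exact hreach c d (Adj.reachable (by rw [cliqueGraph, fromRel_adj]; exact ⟨hne, Or.inl h⟩))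

lemma reach_delete_or {K K' : MC G} :
    ∀ {a x : MC G} (_ : F.Walk a x),
      ((F.deleteEdges {s(K, K')}).Reachable a K ∨ (F.deleteEdges {s(K, K')}).Reachable a K') →
      ((F.deleteEdges {s(K, K')}).Reachable x K ∨ (F.deleteEdges {s(K, K')}).Reachable x K')
  | _, _, .nil, h => h
  | a, x, .cons (v := b) hab q, h => by
      by_cases he : s(a, b) = s(K, K')
      · rw [Sym2.eq_iff] at he
        rcases he with ⟨ha, hb⟩ | ⟨ha, hb⟩
        · subst hb; exact reach_delete_or q (Or.inr (Reachable.refl _))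
        · subst hb; exact reach_delete_or q (Or.inl (Reachable.refl _))
      · have hadj : (F.deleteEdges {s(K, K')}).Adj a b := by
          rw [deleteEdges_adj]
          exact ⟨hab, by simpa using he⟩
        refine reach_delete_or q ?_
        rcases h with h | h
        · exact Or.inl (hadj.symm.reachable.trans h)
        · exact Or.inr (hadj.symm.reachable.trans h)

lemma not_reach_both (hacyc : F.IsAcyclic) {K K' x : MC G} (h : F.Adj K K')
    (h1 : (F.deleteEdges {s(K, K')}).Reachable x K)
    (h2 : (F.deleteEdges {s(K, K')}).Reachable x K') : False := by
  have hb := isAcyclic_iff_forall_edge_isBridge.mp hacyc (e := s(K, K')) h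
  rw [isBridge_iff] at hb
  exact hb (h1.symm.trans h2)

lemma exists_drop_edge {P : MC G → Prop} :
    ∀ {c d : MC G} (p : F.Walk c d), P c → ¬ P d →
      ∃ (K K' : MC G) (h : F.Adj K K') (q1 : F.Walk c K) (q2 : F.Walk K' d),
        p = q1.append (Walk.cons h q2) ∧ P K ∧ ¬ P K'
  | _, _, .nil, hc, hd => absurd hc hd
  | c, d, .cons (v := b) hab q, hc, hd => by
      by_cases hb : P b
      · obtain ⟨K, K', h, q1, q2, hdec, hK, hK'⟩ := exists_drop_edge q hb hd
        exact ⟨K, K', h, Walk.cons hab q1, q2, by rw [hdec]; rfl, hK, hK'⟩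
      · exact ⟨c, b, hab, Walk.nil, q, rfl, hc, hb⟩

end Forward
end CFP

namespace CFP
section ForwardMain

variable {V : Type*}

theorem forward [Fintype V] (G : SimpleGraph V)
    (F : SimpleGraph (MC G)) (hacyc : F.IsAcyclic)
    (hreach : ∀ c d, (cliqueGraph G).Reachable c d → F.Reachable c d)
    (hint : ∀ c d (p : F.Walk c d), p.IsPath →
      ∀ e ∈ p.support, (c : Set V) ∩ (d : Set V) ⊆ (e : Set V)) :
    IsChordal G := by
  classical
  intro v w hcyc hlen
  by_contra hncon
  push_neg at hncon
  have hmemsup : ∀ i : ℕ, w.getVert i ∈ w.support := fun i => by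
    rw [Walk.mem_support_iff_exists_getVert]
    rcases le_or_gt i w.length with h | h
    · exact ⟨i, rfl, h⟩
    · exact ⟨w.length, by rw [Walk.getVert_length, Walk.getVert_of_length_le w h.le], le_rfl⟩
  have nocommon : ∀ (S : Set V), G.IsClique S → ∀ p q : ℕ, 1 ≤ p → p + 2 ≤ q →
      q ≤ w.length → ¬(p = 1 ∧ q = w.length) → w.getVert p ∈ S → w.getVert q ∈ S → False := by
    intro S hS p q h1 h2 h3 h4 hp hq
    obtain ⟨hne, hnedge⟩ := W.cycle_nonconsec hcyc h1 h2 h3 h4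
    exact hnedge (hncon _ _ (hmemsup p) (hmemsup q) (hS hp hq hne))
  -- choose a maximal clique through every cycle edge
  have hCex : ∀ i : ℕ, ∃ Ci : MC G, i < w.length →
      w.getVert i ∈ (Ci : Set V) ∧ w.getVert (i+1) ∈ (Ci : Set V) := by
    intro i
    rcases lt_or_ge i w.length with hi | hi
    · have hadj := w.adj_getVert_succ hi
      have hcl : G.IsClique {w.getVert i, w.getVert (i+1)} :=
        by haveI : Std.Symm G.Adj := ⟨fun _ _ h => h.symm⟩; exact (Set.pairwise_pair_of_symmetric (r := G.Adj)).2 fun _ => hadj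
      obtain ⟨t, ht, hsub⟩ := exists_maxClique G hcl
      exact ⟨⟨t, ht⟩, fun _ => ⟨hsub (by simp), hsub (by simp)⟩⟩
    · obtain ⟨t, ht, -⟩ := exists_maxClique G (G.isClique_empty)
      exact ⟨⟨t, ht⟩, fun h => absurd h (not_lt.2 hi)⟩
  choose C hC using hCex
  have hC0 := hC 0 (by omega)
  have hC1 := hC 1 (by omega)
  have hv0C1 : w.getVert 0 ∉ (C 1 : Set V) := by
    intro h
    rw [show w.getVert 0 = w.getVert w.length from by
      rw [Walk.getVert_zero, Walk.getVert_length]] at h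
    exact nocommon _ (C 1).2.1 2 w.length (by omega) (by omega) le_rfl (by omega) hC1.2 h
  obtain ⟨p0⟩ : F.Reachable (C 0) (C 1) :=
    reach_of_inter hreach ⟨w.getVert 1, hC0.2, hC1.1⟩
  set p := p0.bypass with hpdef
  have hp : p.IsPath := Walk.bypass_isPath p0
  have hj : ∀ e ∈ p.support, (C 0 : Set V) ∩ (C 1 : Set V) ⊆ (e : Set V) := hint _ _ p hp
  obtain ⟨K, K', hKK', q1, q2, hdec, hK0, hK'0⟩ :=
    exists_drop_edge (P := fun L : MC G => w.getVert 0 ∈ (L : Set V)) p hC0.1 hv0C1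
  have hKsup : K ∈ p.support := by
    rw [hdec, Walk.support_append]
    exact List.mem_append_left _ (Walk.end_mem_support q1)
  have hK'sup : K' ∈ p.support := by
    rw [hdec, Walk.support_append]
    refine List.mem_append_right _ ?_
    simp only [Walk.support_cons, List.tail_cons]
    exact Walk.start_mem_support q2
  have hv1K : w.getVert 1 ∈ (K : Set V) := hj K hKsup ⟨hC0.2, hC1.1⟩
  have hv1K' : w.getVert 1 ∈ (K' : Set V) := hj K' hK'sup ⟨hC0.2, hC1.1⟩
  have hv2K : w.getVert 2 ∉ (K : Set V) := fun h =>
    nocommon _ K.2.1 2 w.length (by omega) (by omega) le_rfl (by omega) h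
      (by rw [Walk.getVert_length]; rw [Walk.getVert_zero] at hK0; exact hK0)
  have hnd := hp.isTrail.edges_nodup
  rw [hdec, Walk.edges_append, Walk.edges_cons] at hnd
  have he1 : s(K, K') ∉ q1.edges := fun h =>
    (List.disjoint_of_nodup_append hnd) h List.mem_cons_self
  have he2 : s(K, K') ∉ q2.edges := by
    have h2 := (List.nodup_append.mp hnd).2.1
    exact (List.nodup_cons.mp h2).1
  have hA0 : (F.deleteEdges {s(K, K')}).Reachable (C 0) K :=
    (q1.toDeleteEdges {s(K, K')} (fun e' he' hmem => by
      rw [Set.mem_singleton_iff] at hmem; exact he1 (hmem ▸ he'))).reachable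
  have hB1 : (F.deleteEdges {s(K, K')}).Reachable (C 1) K' :=
    ((q2.toDeleteEdges {s(K, K')} (fun e' he' hmem => by
      rw [Set.mem_singleton_iff] at hmem; exact he2 (hmem ▸ he'))).reverse).reachable
  have hdisj : ∀ L : MC G, (F.deleteEdges {s(K, K')}).Reachable L K →
      (F.deleteEdges {s(K, K')}).Reachable L K' → False := fun L h1 h2 =>
    not_reach_both hacyc hKK' h1 h2
  have sideA : ∀ L : MC G, w.getVert 0 ∈ (L : Set V) →
      (F.deleteEdges {s(K, K')}).Reachable L K := by
    intro L hL
    obtain ⟨t0⟩ := reach_of_inter hreach (c := C 0) (d := L) ⟨w.getVert 0, hC0.1, hL⟩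
    have ht : t0.bypass.IsPath := Walk.bypass_isPath t0
    have hjt := hint _ _ t0.bypass ht
    by_cases het : s(K, K') ∈ t0.bypass.edges
    · exact absurd (hjt K' (Walk.snd_mem_support_of_mem_edges _ het) ⟨hC0.1, hL⟩) hK'0
    · have hr : (F.deleteEdges {s(K, K')}).Reachable (C 0) L :=
        (t0.bypass.toDeleteEdges {s(K, K')} (fun e' he' hmem => by
          rw [Set.mem_singleton_iff] at hmem; exact het (hmem ▸ he'))).reachable
      exact hr.symm.trans hA0
  have sideB : ∀ L : MC G, w.getVert 2 ∈ (L : Set V) →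
      (F.deleteEdges {s(K, K')}).Reachable L K' := by
    intro L hL
    obtain ⟨t0⟩ := reach_of_inter hreach (c := C 1) (d := L) ⟨w.getVert 2, hC1.2, hL⟩
    have ht : t0.bypass.IsPath := Walk.bypass_isPath t0
    have hjt := hint _ _ t0.bypass ht
    by_cases het : s(K, K') ∈ t0.bypass.edges
    · exact absurd (hjt K (Walk.fst_mem_support_of_mem_edges _ het) ⟨hC1.2, hL⟩) hv2K
    · have hr : (F.deleteEdges {s(K, K')}).Reachable (C 1) L :=
        (t0.bypass.toDeleteEdges {s(K, K')} (fun e' he' hmem => by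
          rw [Set.mem_singleton_iff] at hmem; exact het (hmem ▸ he'))).reachable
      exact hr.symm.trans hB1
  have hchain : ∀ i, i ≤ w.length - 1 → F.Reachable (C 0) (C i) := by
    intro i
    induction i with
    | zero => exact fun _ => Reachable.refl _
    | succ j ih =>
      intro hji
      exact (ih (by omega)).trans (reach_of_inter hreach
        ⟨w.getVert (j+1), (hC j (by omega)).2, (hC (j+1) (by omega)).1⟩)
  have htot : ∀ i, i ≤ w.length - 1 →
      (F.deleteEdges {s(K, K')}).Reachable (C i) K ∨
      (F.deleteEdges {s(K, K')}).Reachable (C i) K' := by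
    intro i hi
    obtain ⟨wk⟩ := ((hA0.mono (deleteEdges_le _)).symm.trans (hchain i hi))
    exact reach_delete_or wk (Or.inl (Reachable.refl _))
  have hCB2 : (F.deleteEdges {s(K, K')}).Reachable (C 2) K' := sideB (C 2) (hC 2 (by omega)).1
  have hswitch : ∃ j, 2 ≤ j ∧ j + 1 ≤ w.length - 1 ∧
      (F.deleteEdges {s(K, K')}).Reachable (C j) K' ∧
      (F.deleteEdges {s(K, K')}).Reachable (C (j+1)) K := by
    by_contra hsw
    push_neg at hsw
    have hall : ∀ i, 2 ≤ i → i ≤ w.length - 1 →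
        (F.deleteEdges {s(K, K')}).Reachable (C i) K' := by
      intro i
      induction i with
      | zero => omega
      | succ j ih =>
        intro h2 hi
        rcases Nat.lt_or_ge j 2 with hj2 | hj2
        · have hj1 : j + 1 = 2 := by omega
          rw [hj1]; exact hCB2
        · have hjB := ih (by omega) (by omega)
          rcases htot (j+1) hi with hA | hB
          · exact absurd hA (hsw j hj2 (by omega) hjB)
          · exact hB
    have h1 := hall (w.length - 1) (by omega) le_rfl
    have h2 : (F.deleteEdges {s(K, K')}).Reachable (C (w.length - 1)) K := by
      refine sideA _ ?_
      have hm := (hC (w.length - 1) (by omega)).2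
      rw [show w.length - 1 + 1 = w.length by omega, Walk.getVert_length] at hm
      rw [Walk.getVert_zero]
      exact hm
    exact hdisj _ h2 h1
  obtain ⟨j, hj2, hjn, hjB, hjA⟩ := hswitch
  obtain ⟨t0⟩ := reach_of_inter hreach (c := C j) (d := C (j+1))
    ⟨w.getVert (j+1), (hC j (by omega)).2, (hC (j+1) (by omega)).1⟩
  have ht : t0.bypass.IsPath := Walk.bypass_isPath t0
  have hjt := hint _ _ t0.bypass ht
  by_cases het : s(K, K') ∈ t0.bypass.edges
  · have hvK : w.getVert (j+1) ∈ (K : Set V) :=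
      hjt K (Walk.fst_mem_support_of_mem_edges _ het)
        ⟨(hC j (by omega)).2, (hC (j+1) (by omega)).1⟩
    exact nocommon _ K.2.1 1 (j+1) le_rfl (by omega) (by omega) (by omega) hv1K hvK
  · have hr : (F.deleteEdges {s(K, K')}).Reachable (C j) (C (j+1)) :=
      (t0.bypass.toDeleteEdges {s(K, K')} (fun e' he' hmem => by
        rw [Set.mem_singleton_iff] at hmem; exact het (hmem ▸ he'))).reachable
    exact hdisj _ (hr.trans hjA) hjB

end ForwardMain
end CFP

namespace CFP
section Rev1
variable {V : Type*} {G : SimpleGraph V}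

lemma chordal_induce (hch : IsChordal G) (s : Set V) : IsChordal (G.induce s) := by
  intro v' w' hcyc hlen
  set f := (SimpleGraph.Embedding.induce (G := G) s).toHom with hf
  have hinj : Function.Injective f := Subtype.val_injective
  obtain ⟨a, b, ha, hb, hadj, hedge⟩ := hch (f v') (w'.map f)
    ((Walk.map_isCycle_iff_of_injective hinj).2 hcyc) (by rwa [Walk.length_map])
  rw [Walk.support_map, List.mem_map] at ha hb
  obtain ⟨a', ha', rfl⟩ := ha
  obtain ⟨b', hb', rfl⟩ := hb
  refine ⟨a', b', ha', hb', by exact hadj, fun hmem => hedge ?_⟩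
  rw [Walk.edges_map, List.mem_map]
  exact ⟨s(a', b'), hmem, Sym2.map_pair_eq _ _ _⟩

namespace W

/-- take the first `n` steps of a walk -/
def wtake : ∀ {u v : V} (p : G.Walk u v) (n : ℕ), G.Walk u (p.getVert n)
  | _, _, .nil, _ => .nil
  | _, _, .cons _ _, 0 => .nil
  | _, _, .cons h q, (n+1) => .cons h (wtake q n)

lemma wtake_length : ∀ {u v : V} (p : G.Walk u v) (n : ℕ), (wtake p n).length = min n p.length
  | _, _, .nil, n => by simp [wtake]
  | _, _, .cons h q, 0 => by simp [wtake]; rfl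
  | _, _, .cons h q, (n+1) => by
      simp [wtake, wtake_length q n, Nat.succ_min_succ]

lemma wtake_support : ∀ {u v : V} (p : G.Walk u v) (n : ℕ) (x : V),
    x ∈ (wtake p n).support → x ∈ p.support
  | _, _, .nil, n, x => by simp [wtake]
  | _, _, .cons h q, 0, x => by
      intro hx
      rw [List.mem_singleton.1 hx]
      exact Walk.start_mem_support _
  | _, _, .cons h q, (n+1), x => by
      intro hx
      change x ∈ List.cons _ (wtake q n).support at hx
      rw [Walk.support_cons, List.mem_cons]
      rcases List.mem_cons.1 hx with rfl | hx
      · exact Or.inl rfl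
      · exact Or.inr (wtake_support q n x hx)

lemma drop_length : ∀ {u v : V} (p : G.Walk u v) (n : ℕ), (p.drop n).length = p.length - n
  | _, _, .nil, n => by simp [Walk.drop]
  | _, _, .cons h q, 0 => by simp [Walk.drop]
  | _, _, .cons h q, (n+1) => by
      simp [Walk.drop, drop_length q n]

lemma drop_support : ∀ {u v : V} (p : G.Walk u v) (n : ℕ) (x : V),
    x ∈ (p.drop n).support → x ∈ p.support
  | _, _, .nil, n, x => by simp [Walk.drop, Walk.getVert]
  | _, _, .cons h q, 0, x => by simp [Walk.drop]
  | _, _, .cons h q, (n+1), x => by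
      simp only [Walk.drop, Walk.support_copy, Walk.support_cons, List.mem_cons]
      intro hx
      exact Or.inr (drop_support q n x hx)

/-- Shortcut lemma: if a walk has two support vertices joined by an edge of `G`
that is not an edge of the walk, then there is a strictly shorter walk between the
same endpoints whose support is contained in that of the original. -/
lemma shortcut {x y : V} (p : G.Walk x y) {a b : V} (ha : a ∈ p.support)
    (hb : b ∈ p.support) (hadj : G.Adj a b) (hne : s(a, b) ∉ p.edges) :
    ∃ q : G.Walk x y, (∀ z ∈ q.support, z ∈ p.support) ∧ q.length < p.length := by
  rw [Walk.mem_support_iff_exists_getVert] at ha hb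
  obtain ⟨i, rfl, hi⟩ := ha
  obtain ⟨j, rfl, hj⟩ := hb
  -- wlog i < j
  have key : ∀ (i j : ℕ), i < j → j ≤ p.length →
      ∀ (hadj : G.Adj (p.getVert i) (p.getVert j)),
      s(p.getVert i, p.getVert j) ∉ p.edges →
      ∃ q : G.Walk x y, (∀ z ∈ q.support, z ∈ p.support) ∧ q.length < p.length := by
    intro i j hij hjl hadj hne
    have hij1 : i + 1 < j := by
      rcases Nat.lt_or_ge (i+1) j with h | h
      · exact h
      · exfalso
        have : j = i + 1 := by omega
        subst this
        exact hne (edge_getVert_mem_edges p (by omega))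
    refine ⟨(wtake p i).append (Walk.cons hadj (p.drop j)), ?_, ?_⟩
    · intro z hz
      rw [Walk.support_append, List.mem_append] at hz
      rcases hz with hz | hz
      · exact wtake_support p i z hz
      · rw [Walk.support_cons, List.tail_cons] at hz
        exact drop_support p j z hz
    · rw [Walk.length_append, Walk.length_cons, wtake_length, drop_length]
      omega
  have hij : i ≠ j := by
    rintro rfl
    exact G.loopless.irrefl _ hadj
  rcases Nat.lt_or_ge i j with h | h
  · exact key i j h hj hadj hne
  · have h' : j < i := by omega
    rw [Sym2.eq_swap] at hne
    exact key j i h' hi hadj.symm hne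

end W
end Rev1
end CFP

namespace CFP
section Comp
variable {V : Type*} {G : SimpleGraph V}

/-- The set of vertices reachable from `c` by walks avoiding `S`. -/
def avoidComp (G : SimpleGraph V) (S : Set V) (c : V) : Set V :=
  {x | ∃ w : G.Walk c x, ∀ y ∈ w.support, y ∉ S}

lemma avoidComp_self {S : Set V} {c : V} (hc : c ∉ S) : c ∈ avoidComp G S c :=
  ⟨Walk.nil, by simpa using hc⟩

lemma avoidComp_not_mem {S : Set V} {c x : V} (hx : x ∈ avoidComp G S c) : x ∉ S := by
  obtain ⟨w, hw⟩ := hx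
  exact hw x (Walk.end_mem_support w)

lemma avoidComp_closed {S : Set V} {c x y : V} (hx : x ∈ avoidComp G S c)
    (hxy : G.Adj x y) (hy : y ∉ S) : y ∈ avoidComp G S c := by
  obtain ⟨w, hw⟩ := hx
  refine ⟨w.concat hxy, ?_⟩
  intro z hz
  rw [Walk.support_concat, List.mem_append, List.mem_singleton] at hz
  rcases hz with hz | rfl
  · exact hw z hz
  · exact hy

lemma avoidComp_mono {S : Set V} {c c' : V} (hc : c ∉ S) (h : G.Adj c c') :
    avoidComp G S c' ⊆ avoidComp G S c := by
  rintro z ⟨w, hw⟩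
  refine ⟨Walk.cons h w, ?_⟩
  intro y hy
  rw [Walk.support_cons, List.mem_cons] at hy
  rcases hy with rfl | hy
  · exact hc
  · exact hw y hy

lemma avoidComp_walk_mem {S : Set V} :
    ∀ {c x : V} (w : G.Walk c x), (∀ y ∈ w.support, y ∉ S) →
      ∀ y ∈ w.support, y ∈ avoidComp G S c
  | c, _, .nil, hw => by
      intro y hy
      rw [Walk.support_nil, List.mem_singleton] at hy
      subst hy
      exact avoidComp_self (hw y (by simp))
  | c, x, .cons (v := c') h q, hw => by
      intro y hy
      rw [Walk.support_cons, List.mem_cons] at hy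
      have hc : c ∉ S := hw c (by simp)
      rcases hy with rfl | hy
      · exact avoidComp_self hc
      · exact avoidComp_mono hc h
          (avoidComp_walk_mem q (fun z hz => hw z (by rw [Walk.support_cons]; exact List.mem_cons_of_mem _ hz)) y hy)

/-- connect two vertices of a component by a walk all of whose vertices lie
in the component -/
lemma avoidComp_connect {S : Set V} {c x y : V} (hx : x ∈ avoidComp G S c)
    (hy : y ∈ avoidComp G S c) :
    ∃ w : G.Walk x y, ∀ z ∈ w.support, z ∈ avoidComp G S c := by
  obtain ⟨w1, hw1⟩ := hx
  obtain ⟨w2, hw2⟩ := hy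
  refine ⟨w1.reverse.append w2, ?_⟩
  intro z hz
  rw [Walk.support_append, List.mem_append] at hz
  rcases hz with hz | hz
  · rw [Walk.support_reverse, List.mem_reverse] at hz
    exact avoidComp_walk_mem w1 hw1 z hz
  · exact avoidComp_walk_mem w2 hw2 z (List.mem_of_mem_tail hz)

/-- if every walk from `c` to `b` meets `S`, and a walk from a vertex of the
component of `c` reaches `b` meeting `S` only possibly at `s'`, then `s'` has a
neighbour in the component of `c`. -/
lemma avoidComp_pred {S : Set V} {c b s' : V}
    (hb : b ∉ avoidComp G S c) :
    ∀ {x : V} (w : G.Walk x b), x ∈ avoidComp G S c →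
      (∀ y ∈ w.support, y ∈ S → y = s') → ∃ z ∈ avoidComp G S c, G.Adj s' z
  | x, .nil, hx, hmeet => absurd hx hb
  | x, .cons (v := c') h q, hx, hmeet => by
      by_cases hc' : c' ∈ S
      · have : c' = s' := hmeet c' (by rw [Walk.support_cons]; exact List.mem_cons_of_mem _ (Walk.start_mem_support q)) hc'
        subst this
        exact ⟨x, hx, h.symm⟩
      · exact avoidComp_pred hb q (avoidComp_closed hx h hc')
          (fun y hy => hmeet y (by rw [Walk.support_cons]; exact List.mem_cons_of_mem _ hy))

end Comp
end CFP

namespace CFP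
section SepClique
variable {V : Type*} {G : SimpleGraph V}

/-- a minimal-length walk between `x` and `y` with interior in a fixed set `C` -/
lemma minwalk {C : Set V} {x y zx zy : V} (hxy : x ≠ y)
    (hzx : zx ∈ C) (hzy : zy ∈ C) (hax : G.Adj x zx) (hay : G.Adj y zy)
    (hnadj : ¬ G.Adj x y) (hxC : x ∉ C) (hyC : y ∉ C)
    (hconn : ∃ w : G.Walk zx zy, ∀ z ∈ w.support, z ∈ C) :
    ∃ P : G.Walk x y, P.IsPath ∧ 2 ≤ P.length ∧
      (∀ z ∈ P.support, z = x ∨ z = y ∨ z ∈ C) ∧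
      (∀ u1 u2, u1 ∈ P.support → u2 ∈ P.support → G.Adj u1 u2 → s(u1, u2) ∈ P.edges) := by
  classical
  set 𝒲 : Set (G.Walk x y) := {w | ∀ z ∈ w.support, z = x ∨ z = y ∨ z ∈ C} with h𝒲
  have h𝒲ne : 𝒲.Nonempty := by
    obtain ⟨wm, hwm⟩ := hconn
    refine ⟨(Walk.cons hax wm).concat hay.symm, ?_⟩
    intro z hz
    rw [Walk.support_concat, List.mem_append, List.mem_singleton,
      Walk.support_cons, List.mem_cons] at hz
    rcases hz with (rfl | hz) | rfl
    · exact Or.inl rfl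
    · exact Or.inr (Or.inr (hwm z hz))
    · exact Or.inr (Or.inl rfl)
  have hLne : {n | ∃ w ∈ 𝒲, Walk.length w = n}.Nonempty :=
    ⟨h𝒲ne.choose.length, h𝒲ne.choose, h𝒲ne.choose_spec, rfl⟩
  obtain ⟨P0, hP0mem, hP0len⟩ := Nat.sInf_mem hLne
  set P := P0.bypass with hPdef
  have hPmem : P ∈ 𝒲 := fun z hz => hP0mem z (Walk.support_bypass_subset _ hz)
  have hPpath : P.IsPath := Walk.bypass_isPath P0
  have hPmin : ∀ q ∈ 𝒲, P.length ≤ q.length := by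
    intro q hq
    have h1 : P.length ≤ P0.length := Walk.length_bypass_le _
    have h2 : P0.length ≤ q.length := hP0len ▸ Nat.sInf_le ⟨q, hq, rfl⟩
    omega
  have hlen2 : 2 ≤ P.length := by
    rcases Nat.lt_or_ge P.length 2 with h | h
    · exfalso
      interval_cases hl : P.length
      · exact hxy (Walk.eq_of_length_eq_zero hl)
      · have := P.adj_getVert_succ (by omega : 0 < P.length)
        rw [Walk.getVert_zero] at this
        have h1 : P.getVert 1 = y := by
          have := P.getVert_length
          rwa [hl] at this
        rw [h1] at this
        exact hnadj this
    · exact h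
  refine ⟨P, hPpath, hlen2, hPmem, ?_⟩
  intro u1 u2 h1 h2 hadj
  by_contra hne
  obtain ⟨q, hqsub, hqlt⟩ := W.shortcut P h1 h2 hadj hne
  have hq : q ∈ 𝒲 := fun z hz => hPmem z (hqsub z hz)
  exact absurd (hPmin q hq) (by omega)

lemma sep_clique [Fintype V] (hch : IsChordal G) {a b : V} (hab : a ≠ b)
    (hnadj : ¬G.Adj a b) {S : Set V}
    (hsep : ∀ w : G.Walk a b, ∃ x ∈ w.support, x ∈ S)
    (hnbrA : ∀ s' ∈ S, ∃ z ∈ avoidComp G S a, G.Adj s' z)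
    (hnbrB : ∀ s' ∈ S, ∃ z ∈ avoidComp G S b, G.Adj s' z) :
    G.IsClique S := by
  classical
  set Ca := avoidComp G S a with hCa
  set Cb := avoidComp G S b with hCb
  have hdisjAB : ∀ z, z ∈ Ca → z ∈ Cb → False := by
    rintro z ⟨w1, hw1⟩ ⟨w2, hw2⟩
    obtain ⟨t, ht, htS⟩ := hsep (w1.append w2.reverse)
    rw [Walk.support_append, List.mem_append] at ht
    rcases ht with ht | ht
    · exact hw1 t ht htS
    · exact hw2 t (by
        have := List.mem_of_mem_tail ht
        rwa [Walk.support_reverse, List.mem_reverse] at this) htS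
  intro x hx y hy hxy
  by_contra hnadjxy
  obtain ⟨zxa, hzxa, haxa⟩ := hnbrA x hx
  obtain ⟨zya, hzya, haya⟩ := hnbrA y hy
  obtain ⟨zxb, hzxb, haxb⟩ := hnbrB x hx
  obtain ⟨zyb, hzyb, hayb⟩ := hnbrB y hy
  have hxCa : x ∉ Ca := fun h => avoidComp_not_mem h hx
  have hyCa : y ∉ Ca := fun h => avoidComp_not_mem h hy
  have hxCb : x ∉ Cb := fun h => avoidComp_not_mem h hx
  have hyCb : y ∉ Cb := fun h => avoidComp_not_mem h hy
  obtain ⟨P1, hP1path, hP1len, hP1mem, hP1sc⟩ := minwalk hxy hzxa hzya haxa haya hnadjxy hxCa hyCa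
    (by
      obtain ⟨w, hw⟩ := avoidComp_connect hzxa hzya
      exact ⟨w, hw⟩)
  obtain ⟨P2, hP2path, hP2len, hP2mem, hP2sc⟩ := minwalk hxy hzxb hzyb haxb hayb hnadjxy hxCb hyCb
    (by
      obtain ⟨w, hw⟩ := avoidComp_connect hzxb hzyb
      exact ⟨w, hw⟩)
  -- build the cycle
  obtain ⟨z1, h1, P1r, rfl⟩ := Walk.exists_eq_cons_of_ne hxy P1
  have hz1x : z1 ≠ x := h1.ne'
  have hz1y : z1 ≠ y := fun h => hnadjxy (h ▸ h1)
  have hz1Ca : z1 ∈ Ca := by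
    rcases hP1mem z1 (by rw [Walk.support_cons]; exact List.mem_cons_of_mem _ (Walk.start_mem_support P1r)) with h | h | h
    · exact absurd h hz1x
    · exact absurd h hz1y
    · exact h
  have hP1rpath : P1r.IsPath ∧ x ∉ P1r.support := by
    rw [Walk.cons_isPath_iff] at hP1path
    exact hP1path
  have hP1rsub : ∀ z ∈ P1r.support, z = y ∨ z ∈ Ca := by
    intro z hz
    rcases hP1mem z (by rw [Walk.support_cons]; exact List.mem_cons_of_mem _ hz) with h | h | h
    · exact absurd (h ▸ hz) hP1rpath.2
    · exact Or.inl h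
    · exact Or.inr h
  have hP2revsup : P2.reverse.support = y :: P2.reverse.support.tail := Walk.support_eq_cons _
  have hynt : y ∉ P2.reverse.support.tail := by
    have hnd : P2.reverse.support.Nodup := (hP2path.reverse).support_nodup
    rw [hP2revsup] at hnd
    exact (List.nodup_cons.mp hnd).1
  have htailsub : ∀ z ∈ P2.reverse.support.tail, z = x ∨ z ∈ Cb := by
    intro z hz
    have hz' : z ∈ P2.support := by
      have := List.mem_of_mem_tail hz
      rwa [Walk.support_reverse, List.mem_reverse] at this
    rcases hP2mem z hz' with h | h | h
    · exact Or.inl h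
    · exact absurd (h ▸ hz) hynt
    · exact Or.inr h
  have hdisj : ∀ z ∈ P1r.support, z ∉ P2.reverse.support.tail := by
    intro z hz hz2
    rcases hP1rsub z hz with rfl | hzCa
    · exact hynt hz2
    · rcases htailsub z hz2 with rfl | hzCb
      · exact hxCa hzCa
      · exact hdisjAB z hzCa hzCb
  have hcyc : ((Walk.cons h1 P1r).append P2.reverse).IsCycle := by
    rw [Walk.cons_append]
    rw [Walk.cons_isCycle_iff]
    constructor
    · rw [Walk.isPath_def, Walk.support_append]
      rw [List.nodup_append]
      refine ⟨hP1rpath.1.support_nodup, ?_, ?_⟩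
      · have hnd : P2.reverse.support.Nodup := (hP2path.reverse).support_nodup
        rw [hP2revsup] at hnd
        exact (List.nodup_cons.mp hnd).2
      · intro z hz z' hz2 hzz
        subst hzz
        exact hdisj z hz hz2
    · intro hmem
      rw [Walk.edges_append, List.mem_append] at hmem
      rcases hmem with hmem | hmem
      · exact hP1rpath.2 (Walk.fst_mem_support_of_mem_edges P1r hmem)
      · have hz1m : z1 ∈ P2.reverse.support := Walk.snd_mem_support_of_mem_edges _ hmem
        rw [Walk.support_reverse, List.mem_reverse] at hz1m
        rcases hP2mem z1 hz1m with h | h | h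
        · exact hz1x h
        · exact hz1y h
        · exact hdisjAB z1 hz1Ca h
  have hlen4 : 4 ≤ ((Walk.cons h1 P1r).append P2.reverse).length := by
    rw [Walk.length_append, Walk.length_reverse]
    have : (Walk.cons h1 P1r).length = P1r.length + 1 := Walk.length_cons _ _
    omega
  obtain ⟨u1, u2, hu1, hu2, huadj, hue⟩ := hch x _ hcyc hlen4
  have hsupc : ∀ z, z ∈ ((Walk.cons h1 P1r).append P2.reverse).support →
      z ∈ (Walk.cons h1 P1r).support ∨ z ∈ P2.support := by
    intro z hz
    rw [Walk.support_append, List.mem_append] at hz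
    rcases hz with hz | hz
    · exact Or.inl hz
    · right
      have := List.mem_of_mem_tail hz
      rwa [Walk.support_reverse, List.mem_reverse] at this
  have hcase1 : u1 ∈ (Walk.cons h1 P1r).support → u2 ∈ (Walk.cons h1 P1r).support → False := by
    intro hw1 hw2
    refine hue ?_
    rw [Walk.edges_append, List.mem_append]
    exact Or.inl (hP1sc u1 u2 hw1 hw2 huadj)
  have hcase2 : u1 ∈ P2.support → u2 ∈ P2.support → False := by
    intro hw1 hw2
    refine hue ?_
    rw [Walk.edges_append, List.mem_append]
    right
    rw [Walk.edges_reverse, List.mem_reverse]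
    exact hP2sc u1 u2 hw1 hw2 huadj
  have hreg : ∀ z, z ∈ ((Walk.cons h1 P1r).append P2.reverse).support →
      (z ∈ (Walk.cons h1 P1r).support ∧ z ∈ P2.support) ∨
      (z ∈ (Walk.cons h1 P1r).support ∧ z ∈ Ca) ∨ (z ∈ P2.support ∧ z ∈ Cb) := by
    intro z hz
    rcases hsupc z hz with hz1 | hz2
    · rcases hP1mem z hz1 with rfl | rfl | h
      · exact Or.inl ⟨hz1, Walk.start_mem_support P2⟩
      · exact Or.inl ⟨hz1, Walk.end_mem_support P2⟩
      · exact Or.inr (Or.inl ⟨hz1, h⟩)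
    · rcases hP2mem z hz2 with rfl | rfl | h
      · exact Or.inl ⟨Walk.start_mem_support _, hz2⟩
      · exact Or.inl ⟨by
          rw [Walk.support_cons]
          exact List.mem_cons_of_mem _ (Walk.end_mem_support P1r), hz2⟩
      · exact Or.inr (Or.inr ⟨hz2, h⟩)
  rcases hreg u1 hu1 with ⟨hm1, hm1'⟩ | ⟨hm1, hm1'⟩ | ⟨hm1, hm1'⟩ <;>
    rcases hreg u2 hu2 with ⟨hm2, hm2'⟩ | ⟨hm2, hm2'⟩ | ⟨hm2, hm2'⟩
  · exact hcase1 hm1 hm2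
  · exact hcase1 hm1 hm2
  · exact hcase2 hm1' hm2  -- u1 in both: u1 ∈ P2.support is hm1'
  · exact hcase1 hm1 hm2
  · exact hcase1 hm1 hm2
  · exact hdisjAB u2 (avoidComp_closed hm1' huadj (avoidComp_not_mem hm2')) hm2'
  · exact hcase2 hm1 hm2'
  · exact hdisjAB u1 (avoidComp_closed hm2' huadj.symm (avoidComp_not_mem hm1')) hm1'
  · exact hcase2 hm1 hm2
end SepClique
end CFP

namespace CFP

universe u

def Simplicial {V : Type*} (G : SimpleGraph V) (v : V) : Prop := G.IsClique (G.neighborSet v)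

theorem dirac_aux (n : ℕ) : ∀ {V : Type u} [Fintype V] (G : SimpleGraph V),
    Fintype.card V ≤ n → IsChordal G →
    (∀ x y : V, x ≠ y → G.Adj x y) ∨
    ∃ s₁ s₂ : V, s₁ ≠ s₂ ∧ ¬G.Adj s₁ s₂ ∧ Simplicial G s₁ ∧ Simplicial G s₂ := by
  induction n with
  | zero =>
    intro V _ G hcard _
    have : IsEmpty V := by
      rw [← Fintype.card_eq_zero_iff]
      omega
    exact Or.inl (fun x => (this.elim x))
  | succ n IH =>
    intro V _ G hcard hch
    classical
    by_cases hcomp : ∀ x y : V, x ≠ y → G.Adj x y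
    · exact Or.inl hcomp
    right
    push_neg at hcomp
    obtain ⟨a, b, hab, hnadj⟩ := hcomp
    set SS : Set (Set V) := {S | a ∉ S ∧ b ∉ S ∧ ∀ w : G.Walk a b, ∃ x ∈ w.support, x ∈ S}
      with hSS
    have hS0 : {x | x ≠ a ∧ x ≠ b} ∈ SS := by
      refine ⟨by simp, by simp, ?_⟩
      intro w
      cases w with
      | nil => exact absurd rfl hab
      | @cons _ c _ h q =>
        refine ⟨c, by rw [Walk.support_cons]; exact List.mem_cons_of_mem _ (Walk.start_mem_support q), h.ne', ?_⟩
        intro hcb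
        exact hnadj (hcb ▸ h)
    obtain ⟨S, hSmem, hSmin⟩ := Set.Finite.exists_minimalFor id SS (Set.toFinite _) ⟨_, hS0⟩
    obtain ⟨haS, hbS, hsep⟩ := hSmem
    have hbnotA : b ∉ avoidComp G S a := by
      rintro ⟨wb, hwb⟩
      obtain ⟨x, hx, hxS⟩ := hsep wb
      exact hwb x hx hxS
    have hanotB : a ∉ avoidComp G S b := by
      rintro ⟨wa, hwa⟩
      obtain ⟨x, hx, hxS⟩ := hsep wa.reverse
      refine hwa x ?_ hxS
      rwa [Walk.support_reverse, List.mem_reverse] at hx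
    have hnescape : ∀ s' ∈ S, ∃ w : G.Walk a b, ∀ x ∈ w.support, x ∈ S → x = s' := by
      intro s' hs'
      have hnot : ¬(∀ w : G.Walk a b, ∃ x ∈ w.support, x ∈ S \ {s'}) := by
        intro hcon
        have hmem' : S \ {s'} ∈ SS := ⟨fun h => haS h.1, fun h => hbS h.1, hcon⟩
        have heq := le_antisymm (hSmin hmem' (fun x hx => hx.1)) (fun x hx => hx.1)
        simp only [id] at heq
        rw [heq] at hs'
        exact hs'.2 rfl
      push_neg at hnot
      obtain ⟨w, hw⟩ := hnot
      refine ⟨w, ?_⟩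
      intro x hx hxS
      by_contra hne
      exact hw x hx ⟨hxS, hne⟩
    have hnbrA : ∀ s' ∈ S, ∃ z ∈ avoidComp G S a, G.Adj s' z := by
      intro s' hs'
      obtain ⟨w, hw⟩ := hnescape s' hs'
      exact avoidComp_pred hbnotA w (avoidComp_self haS) hw
    have hnbrB : ∀ s' ∈ S, ∃ z ∈ avoidComp G S b, G.Adj s' z := by
      intro s' hs'
      obtain ⟨w, hw⟩ := hnescape s' hs'
      refine avoidComp_pred hanotB w.reverse (avoidComp_self hbS) ?_
      intro x hx hxS
      refine hw x ?_ hxS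
      rwa [Walk.support_reverse, List.mem_reverse] at hx
    have hclique := sep_clique hch hab hnadj hsep hnbrA hnbrB
    have hdisjAB : ∀ z, z ∈ avoidComp G S a → z ∈ avoidComp G S b → False := by
      rintro z ⟨w1, hw1⟩ ⟨w2, hw2⟩
      obtain ⟨t, ht, htS⟩ := hsep (w1.append w2.reverse)
      rw [Walk.support_append, List.mem_append] at ht
      rcases ht with ht | ht
      · exact hw1 t ht htS
      · exact hw2 t (by
          have := List.mem_of_mem_tail ht
          rwa [Walk.support_reverse, List.mem_reverse] at this) htS
    have extract : ∀ (c d : V), c ∉ S → d ∉ S → d ∉ avoidComp G S c →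
        ∃ u ∈ avoidComp G S c, Simplicial G u := by
      intro c d hcS hdS hd
      set C := avoidComp G S c with hC
      have hccl : ∀ u ∈ C, ∀ z, G.Adj u z → z ∈ C ∪ S := by
        intro u hu z hz
        by_cases hzS : z ∈ S
        · exact Or.inr hzS
        · exact Or.inl (avoidComp_closed hu hz hzS)
      have hcard2 : Fintype.card ↥(C ∪ S) ≤ n := by
        have hlt : Fintype.card ↥(C ∪ S) < Fintype.card V := by
          apply Fintype.card_lt_of_injective_of_notMem (Subtype.val) Subtype.val_injective (b := d)
          rintro ⟨⟨x, hxmem⟩, hxd⟩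
          dsimp at hxd
          subst hxd
          rcases hxmem with hmem | hmem
          · exact hd hmem
          · exact hdS hmem
        omega
      have hchA : IsChordal (G.induce (C ∪ S)) := chordal_induce hch _
      rcases IH (G.induce (C ∪ S)) hcard2 hchA with hcomp' | ⟨t1, t2, ht12, htnadj, hts1, hts2⟩
      · refine ⟨c, avoidComp_self hcS, ?_⟩
        intro w1 hw1 w2 hw2 hw12
        have hw1m : w1 ∈ C ∪ S := hccl c (avoidComp_self hcS) w1 hw1
        have hw2m : w2 ∈ C ∪ S := hccl c (avoidComp_self hcS) w2 hw2
        exact hcomp' ⟨w1, hw1m⟩ ⟨w2, hw2m⟩ (fun h => hw12 (congrArg Subtype.val h))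
      · have hkey : ∀ (t : ↥(C ∪ S)), Simplicial (G.induce (C ∪ S)) t → t.1 ∈ C →
            Simplicial G t.1 := by
          intro t hts htC
          intro w1 hw1 w2 hw2 hw12
          have hm1 : w1 ∈ C ∪ S := hccl t.1 htC w1 hw1
          have hm2 : w2 ∈ C ∪ S := hccl t.1 htC w2 hw2
          have h1' : (⟨w1, hm1⟩ : ↥(C ∪ S)) ∈ (G.induce (C ∪ S)).neighborSet t := hw1
          have h2' : (⟨w2, hm2⟩ : ↥(C ∪ S)) ∈ (G.induce (C ∪ S)).neighborSet t := hw2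
          exact hts h1' h2' (fun h => hw12 (congrArg Subtype.val h))
        rcases t1.2 with ht1C | ht1S
        · exact ⟨t1.1, ht1C, hkey t1 hts1 ht1C⟩
        · rcases t2.2 with ht2C | ht2S
          · exact ⟨t2.1, ht2C, hkey t2 hts2 ht2C⟩
          · exfalso
            refine htnadj ?_
            have : G.Adj t1.1 t2.1 := hclique ht1S ht2S (fun h => ht12 (Subtype.ext h))
            exact this
    obtain ⟨s1, hs1C, hs1simp⟩ := extract a b haS hbS hbnotA
    obtain ⟨s2, hs2C, hs2simp⟩ := extract b a hbS haS hanotB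
    refine ⟨s1, s2, ?_, ?_, hs1simp, hs2simp⟩
    · rintro rfl
      exact hdisjAB s1 hs1C hs2C
    · intro hadj
      exact hdisjAB s2 (avoidComp_closed hs1C hadj (avoidComp_not_mem hs2C)) hs2C

theorem dirac {V : Type u} [Fintype V] [Nonempty V] {G : SimpleGraph V} (hch : IsChordal G) :
    ∃ v, Simplicial G v := by
  rcases dirac_aux (Fintype.card V) G le_rfl hch with h | ⟨s1, s2, _, _, h1, _⟩
  · obtain ⟨v⟩ := ‹Nonempty V›
    exact ⟨v, fun w1 hw1 w2 hw2 hne => h w1 w2 hne⟩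
  · exact ⟨s1, h1⟩

end CFP

namespace CFP
section Transfer
variable {V : Type*}

/-- generic helper: reachability descends along per-edge reachability -/
lemma reach_of_adj_reach {α : Type*} {H F : SimpleGraph α}
    (h : ∀ x y, H.Adj x y → F.Reachable x y) {c d : α} (hr : H.Reachable c d) :
    F.Reachable c d := by
  obtain ⟨w⟩ := hr
  induction w with
  | nil => rfl
  | cons hadj _ ih => exact (h _ _ hadj).trans ih

/-- generic helper: transferring walks along a map defined on "good" vertices -/
lemma walk_transfer {α β : Type*} {A : SimpleGraph α} {B : SimpleGraph β} (f : α → β) (bad : α)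
    (hadj : ∀ x y, A.Adj x y → x ≠ bad → y ≠ bad → B.Adj (f x) (f y)) :
    ∀ {c d : α} (p : A.Walk c d), (∀ x ∈ p.support, x ≠ bad) →
      ∃ q : B.Walk (f c) (f d),
        q.support = p.support.map f ∧ q.edges = p.edges.map (Sym2.map f)
  | _, _, .nil, _ => ⟨.nil, by simp⟩
  | c, d, .cons (v := b) h p, hsup => by
      have hc : c ≠ bad := hsup c (by simp)
      have hb : b ≠ bad := hsup b (by
        rw [Walk.support_cons]
        exact List.mem_cons_of_mem _ (Walk.start_mem_support p))
      obtain ⟨q, hq1, hq2⟩ := walk_transfer f bad hadj p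
        (fun x hx => hsup x (by rw [Walk.support_cons]; exact List.mem_cons_of_mem _ hx))
      refine ⟨.cons (hadj c b h hc hb) q, ?_, ?_⟩
      · rw [Walk.support_cons, Walk.support_cons, List.map_cons, hq1]
      · rw [Walk.edges_cons, Walk.edges_cons, List.map_cons, hq2, Sym2.map_pair_eq]

variable {G : SimpleGraph V} {v : V}

lemma clique_image {t : Set ↥{u : V | u ≠ v}} (h : (G.induce {u : V | u ≠ v}).IsClique t) :
    G.IsClique (Subtype.val '' t) := by
  rintro x ⟨x', hx', rfl⟩ y ⟨y', hy', rfl⟩ hxy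
  exact h hx' hy' (fun he => hxy (congrArg Subtype.val he))

lemma clique_preimage {t : Set V} (h : G.IsClique t) :
    (G.induce {u : V | u ≠ v}).IsClique (Subtype.val ⁻¹' t) := by
  intro x hx y hy hxy
  exact h hx hy (fun he => hxy (Subtype.ext he))

lemma neighborSet_subset : G.neighborSet v ⊆ {u : V | u ≠ v} := by
  intro u hu
  exact fun he => G.loopless.irrefl v (he ▸ hu).symm

lemma maxclique_closed (hsimp : Simplicial G v) :
    IsMaxClique G (insert v (G.neighborSet v)) := by
  constructor
  · exact hsimp.insert (fun b hb _ => hb)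
  · intro t ht hsub
    apply Set.Subset.antisymm
    · intro u hu
      by_cases huv : u = v
      · exact huv ▸ Set.mem_insert _ _
      · exact Set.mem_insert_of_mem _ ((ht hu (hsub (Set.mem_insert _ _)) huv).symm)
    · exact hsub

lemma maxclique_of_mem_v {C : Set V} (hC : IsMaxClique G C) (hsimp : Simplicial G v)
    (hv : v ∈ C) : C = insert v (G.neighborSet v) := by
  have hsub : C ⊆ insert v (G.neighborSet v) := by
    intro u hu
    by_cases huv : u = v
    · exact huv ▸ Set.mem_insert _ _
    · exact Set.mem_insert_of_mem _ ((hC.1 hu hv huv).symm)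
  -- C is maximal and insert v Nv is a clique containing it
  have := hC.2 _ (maxclique_closed hsimp).1 hsub
  exact this.symm ▸ rfl

lemma val_image_preimage {C : Set V} (hC : C ⊆ {u : V | u ≠ v}) :
    Subtype.val '' (Subtype.val ⁻¹' C : Set ↥{u : V | u ≠ v}) = C := by
  rw [Subtype.image_preimage_coe]
  exact Set.inter_eq_self_of_subset_right hC

lemma maxclique_image {s' : Set ↥{u : V | u ≠ v}}
    (hs' : IsMaxClique (G.induce {u : V | u ≠ v}) s') (hsimp : Simplicial G v)
    (hne : Subtype.val '' s' ≠ G.neighborSet v) : IsMaxClique G (Subtype.val '' s') := by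
  refine ⟨clique_image hs'.1, ?_⟩
  intro t ht hsub
  by_cases hvt : v ∈ t
  · exfalso
    have htsub : t ⊆ insert v (G.neighborSet v) := by
      intro u hu
      by_cases huv : u = v
      · exact huv ▸ Set.mem_insert _ _
      · exact Set.mem_insert_of_mem _ ((ht hu hvt huv).symm)
    have h1 : Subtype.val '' s' ⊆ G.neighborSet v := by
      intro u hu
      rcases htsub (hsub hu) with rfl | h
      · obtain ⟨u', _, hu'⟩ := hu
        exact absurd hu' u'.2
      · exact h
    have h2 : s' ⊆ Subtype.val ⁻¹' (G.neighborSet v) := by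
      intro x hx
      exact h1 ⟨x, hx, rfl⟩
    have h3 := hs'.2 _ (clique_preimage hsimp) h2
    rw [← h3] at hne
    exact hne (val_image_preimage neighborSet_subset)
  · have htsub : t ⊆ {u : V | u ≠ v} := fun u hu he => hvt (he ▸ hu)
    have h2 : s' ⊆ Subtype.val ⁻¹' t := by
      intro x hx
      exact Set.mem_preimage.mpr (hsub ⟨x, hx, rfl⟩)
    have h3 := hs'.2 _ (clique_preimage ht) h2
    rw [← h3, val_image_preimage htsub]

lemma maxclique_preimage {C : Set V} (hC : IsMaxClique G C) (hv : v ∉ C) :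
    IsMaxClique (G.induce {u : V | u ≠ v}) (Subtype.val ⁻¹' C) := by
  have hCsub : C ⊆ {u : V | u ≠ v} := fun u hu he => hv (he ▸ hu)
  refine ⟨clique_preimage hC.1, ?_⟩
  intro t ht hsub
  have h1 : C ⊆ Subtype.val '' t := by
    rw [← val_image_preimage hCsub]
    exact Set.image_mono hsub
  have h2 := hC.2 _ (clique_image ht) h1
  rw [← Set.preimage_image_eq t Subtype.val_injective, h2]

end Transfer
end CFP

namespace CFP
section CaseA
universe u
variable {V : Type u} [Fintype V]

lemma caseA (G : SimpleGraph V) (v : V) (hsimp : Simplicial G v)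
    (hcase : IsMaxClique (G.induce {u : V | u ≠ v}) (Subtype.val ⁻¹' G.neighborSet v))
    (F' : SimpleGraph (MC (G.induce {u : V | u ≠ v})))
    (hle' : F' ≤ cliqueGraph (G.induce {u : V | u ≠ v}))
    (hacyc' : F'.IsAcyclic)
    (hreach' : ∀ c d, (cliqueGraph (G.induce {u : V | u ≠ v})).Reachable c d → F'.Reachable c d)
    (hint' : ∀ c d (p : F'.Walk c d), p.IsPath →
      ∀ e ∈ p.support, (c : Set ↥{u : V | u ≠ v}) ∩ (d : Set ↥{u : V | u ≠ v}) ⊆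
        (e : Set ↥{u : V | u ≠ v})) :
    ∃ F : SimpleGraph (MC G),
      F ≤ cliqueGraph G ∧ F.IsAcyclic ∧
      (∀ c d, (cliqueGraph G).Reachable c d → F.Reachable c d) ∧
      (∀ c d (p : F.Walk c d), p.IsPath →
        ∀ e ∈ p.support, (c : Set V) ∩ (d : Set V) ⊆ (e : Set V)) := by
  classical
  have hNvmem : ∀ (C : MC G), v ∈ C.1 → C.1 = insert v (G.neighborSet v) :=
    fun C hv => maxclique_of_mem_v C.2 hsimp hv
  set η : MC G → MC (G.induce {u : V | u ≠ v}) := fun C =>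
    if h : v ∈ C.1 then ⟨Subtype.val ⁻¹' G.neighborSet v, hcase⟩
    else ⟨Subtype.val ⁻¹' C.1, maxclique_preimage C.2 h⟩ with hη
  have hmem_η : ∀ (C : MC G) (u : V) (hu : u ∈ C.1) (hne : u ≠ v),
      (⟨u, hne⟩ : ↥{u : V | u ≠ v}) ∈ (η C).1 := by
    intro C u hu hne
    by_cases h : v ∈ C.1
    · simp only [hη, dif_pos h]
      have := hNvmem C h
      rw [this] at hu
      rcases hu with rfl | hu
      · exact absurd rfl hne
      · exact hu
    · simp only [hη, dif_neg h]
      exact hu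
  have hη_mem : ∀ (C : MC G) (x : ↥{u : V | u ≠ v}), x ∈ (η C).1 → x.1 ∈ C.1 := by
    intro C x hx
    by_cases h : v ∈ C.1
    · simp only [hη, dif_pos h] at hx
      rw [hNvmem C h]
      exact Set.mem_insert_of_mem _ hx
    · simp only [hη, dif_neg h] at hx
      exact hx
  have hNvnotmax : ∀ (D : MC G), D.1 ≠ G.neighborSet v := by
    intro D hD
    have hsub : D.1 ⊆ insert v (G.neighborSet v) := hD ▸ Set.subset_insert _ _
    have := D.2.2 _ (maxclique_closed hsimp).1 hsub
    rw [hD] at this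
    have hvin : v ∈ G.neighborSet v := this ▸ Set.mem_insert _ _
    exact G.loopless.irrefl v hvin
  have hηinj : Function.Injective η := by
    intro C D h
    by_cases hvC : v ∈ C.1 <;> by_cases hvD : v ∈ D.1
    · exact Subtype.ext ((hNvmem C hvC).trans (hNvmem D hvD).symm)
    · exfalso
      have h1 : (η C).1 = Subtype.val ⁻¹' G.neighborSet v := by simp only [hη, dif_pos hvC]
      have h2 : (η D).1 = Subtype.val ⁻¹' D.1 := by simp only [hη, dif_neg hvD]
      have h3 : Subtype.val ⁻¹' G.neighborSet v = (Subtype.val ⁻¹' D.1 : Set ↥{u : V | u ≠ v}) := by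
        rw [← h1, ← h2, h]
      have h4 : G.neighborSet v = D.1 := by
        have hDsub : D.1 ⊆ {u : V | u ≠ v} := fun u hu he => hvD (he ▸ hu)
        rw [← val_image_preimage (neighborSet_subset (G := G)), h3, val_image_preimage hDsub]
      exact hNvnotmax D h4.symm
    · exfalso
      have h1 : (η D).1 = Subtype.val ⁻¹' G.neighborSet v := by simp only [hη, dif_pos hvD]
      have h2 : (η C).1 = Subtype.val ⁻¹' C.1 := by simp only [hη, dif_neg hvC]
      have h3 : Subtype.val ⁻¹' G.neighborSet v = (Subtype.val ⁻¹' C.1 : Set ↥{u : V | u ≠ v}) := by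
        rw [← h1, ← h2, h]
      have h4 : G.neighborSet v = C.1 := by
        have hCsub : C.1 ⊆ {u : V | u ≠ v} := fun u hu he => hvC (he ▸ hu)
        rw [← val_image_preimage (neighborSet_subset (G := G)), h3, val_image_preimage hCsub]
      exact hNvnotmax C h4.symm
    · have h1 : (η C).1 = Subtype.val ⁻¹' C.1 := by simp only [hη, dif_neg hvC]
      have h2 : (η D).1 = Subtype.val ⁻¹' D.1 := by simp only [hη, dif_neg hvD]
      have h3 : (Subtype.val ⁻¹' C.1 : Set ↥{u : V | u ≠ v}) = Subtype.val ⁻¹' D.1 := by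
        rw [← h1, ← h2, h]
      have hCsub : C.1 ⊆ {u : V | u ≠ v} := fun u hu he => hvC (he ▸ hu)
      have hDsub : D.1 ⊆ {u : V | u ≠ v} := fun u hu he => hvD (he ▸ hu)
      apply Subtype.ext
      rw [← val_image_preimage hCsub, h3, val_image_preimage hDsub]
  have hηsurj : Function.Surjective η := by
    intro s'
    by_cases h : Subtype.val '' s'.1 = G.neighborSet v
    · refine ⟨⟨insert v (G.neighborSet v), maxclique_closed hsimp⟩, ?_⟩
      apply Subtype.ext
      have h1 : v ∈ (⟨insert v (G.neighborSet v), maxclique_closed hsimp⟩ : MC G).1 :=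
        Set.mem_insert _ _
      simp only [hη, dif_pos h1]
      rw [← h, Set.preimage_image_eq _ Subtype.val_injective]
    · refine ⟨⟨Subtype.val '' s'.1, maxclique_image s'.2 hsimp h⟩, ?_⟩
      apply Subtype.ext
      have h1 : v ∉ (Subtype.val '' s'.1 : Set V) := by
        rintro ⟨u', _, hu'⟩
        exact u'.2 hu'
      simp only [hη, dif_neg h1]
      rw [Set.preimage_image_eq _ Subtype.val_injective]
  set ηhom : SimpleGraph.comap η F' →g F' := ⟨η, fun h => h⟩ with hηhom
  refine ⟨SimpleGraph.comap η F', ?_, ?_, ?_, ?_⟩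
  · intro C D hadj
    rw [comap_adj] at hadj
    have hcq := hle' hadj
    rw [cliqueGraph, fromRel_adj] at hcq ⊢
    obtain ⟨hne', hor⟩ := hcq
    refine ⟨fun h => hne' (by rw [h]), Or.inl ?_⟩
    rcases hor with ⟨x, hx1, hx2⟩ | ⟨x, hx1, hx2⟩
    · exact ⟨x.1, hη_mem C x hx1, hη_mem D x hx2⟩
    · exact ⟨x.1, hη_mem C x hx2, hη_mem D x hx1⟩
  · intro u c hc
    exact hacyc' _ ((Walk.map_isCycle_iff_of_injective (f := ηhom) hηinj).2 hc)
  · set θ := Equiv.ofBijective η ⟨hηinj, hηsurj⟩ with hθ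
    have hιadj : ∀ a b, F'.Adj a b → (SimpleGraph.comap η F').Adj (θ.symm a) (θ.symm b) := by
      intro a b hab
      rw [comap_adj]
      have ha : η (θ.symm a) = a := θ.apply_symm_apply a
      have hb : η (θ.symm b) = b := θ.apply_symm_apply b
      rw [ha, hb]
      exact hab
    set ιhom : F' →g SimpleGraph.comap η F' := ⟨θ.symm, fun h => hιadj _ _ h⟩ with hι
    have hlift : ∀ C D, F'.Reachable (η C) (η D) → (SimpleGraph.comap η F').Reachable C D := by
      intro C D h
      have := SimpleGraph.Reachable.map ιhom h
      have hC : θ.symm (η C) = C := θ.symm_apply_apply C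
      have hD : θ.symm (η D) = D := θ.symm_apply_apply D
      rw [show ιhom (η C) = C from hC, show ιhom (η D) = D from hD] at this
      exact this
    intro c d h
    refine reach_of_adj_reach ?_ h
    intro X Y hXY
    rw [cliqueGraph, fromRel_adj] at hXY
    obtain ⟨hne, hor⟩ := hXY
    obtain ⟨u, hu1, hu2⟩ : ((X : Set V) ∩ (Y : Set V)).Nonempty := by
      rcases hor with h | h
      · exact h
      · obtain ⟨u, h1, h2⟩ := h
        exact ⟨u, h2, h1⟩
    have hune : u ≠ v := by
      rintro rfl
      exact hne (Subtype.ext ((hNvmem X hu1).trans (hNvmem Y hu2).symm))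
    refine hlift X Y (hreach' (η X) (η Y) (Adj.reachable ?_))
    rw [cliqueGraph, fromRel_adj]
    exact ⟨hηinj.ne hne, Or.inl ⟨⟨u, hune⟩, hmem_η X u hu1 hune, hmem_η Y u hu2 hune⟩⟩
  · intro c d p hp e he u hu
    by_cases hcd : c = d
    · subst hcd
      rw [(Walk.isPath_iff_eq_nil (p := p)).1 hp] at he
      rw [Walk.support_nil, List.mem_singleton] at he
      subst he
      exact hu.1
    · have hune : u ≠ v := by
        rintro rfl
        exact hcd (Subtype.ext ((hNvmem c hu.1).trans (hNvmem d hu.2).symm))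
      have hp' : (p.map ηhom).IsPath := Walk.map_isPath_of_injective hηinj hp
      have he' : η e ∈ (p.map ηhom).support := by
        rw [Walk.support_map]
        exact List.mem_map_of_mem he
      have key := hint' (η c) (η d) (p.map ηhom) hp' (η e) he'
      exact hη_mem e _ (key ⟨hmem_η c u hu.1 hune, hmem_η d u hu.2 hune⟩)
end CaseA
end CFP

namespace CFP
section CaseB
universe u
variable {V : Type u} [Fintype V]

set_option maxHeartbeats 1000000 in
lemma caseB (G : SimpleGraph V) (v : V) (hsimp : Simplicial G v)
    (hcase : ¬IsMaxClique (G.induce {u : V | u ≠ v}) (Subtype.val ⁻¹' G.neighborSet v))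
    (F' : SimpleGraph (MC (G.induce {u : V | u ≠ v})))
    (hle' : F' ≤ cliqueGraph (G.induce {u : V | u ≠ v}))
    (hacyc' : F'.IsAcyclic)
    (hreach' : ∀ c d, (cliqueGraph (G.induce {u : V | u ≠ v})).Reachable c d → F'.Reachable c d)
    (hint' : ∀ c d (p : F'.Walk c d), p.IsPath →
      ∀ e ∈ p.support, (c : Set ↥{u : V | u ≠ v}) ∩ (d : Set ↥{u : V | u ≠ v}) ⊆
        (e : Set ↥{u : V | u ≠ v})) :
    ∃ F : SimpleGraph (MC G),
      F ≤ cliqueGraph G ∧ F.IsAcyclic ∧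
      (∀ c d, (cliqueGraph G).Reachable c d → F.Reachable c d) ∧
      (∀ c d (p : F.Walk c d), p.IsPath →
        ∀ e ∈ p.support, (c : Set V) ∩ (d : Set V) ⊆ (e : Set V)) := by
  classical
  set Nvmc : MC G := ⟨insert v (G.neighborSet v), maxclique_closed hsimp⟩ with hNvmc
  have hvmem : ∀ C : MC G, v ∈ C.1 → C = Nvmc :=
    fun C hv => Subtype.ext (maxclique_of_mem_v C.2 hsimp hv)
  have hnots : ∀ C : MC G, C ≠ Nvmc → v ∉ C.1 := fun C h hv => h (hvmem C hv)
  set ι : MC (G.induce {u : V | u ≠ v}) → MC G := fun s' =>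
    ⟨Subtype.val '' s'.1, maxclique_image s'.2 hsimp (by
      intro h
      apply hcase
      have hs : s'.1 = Subtype.val ⁻¹' G.neighborSet v := by
        rw [← h, Set.preimage_image_eq _ Subtype.val_injective]
      exact hs ▸ s'.2)⟩ with hι
  have hιv : ∀ s', v ∉ (ι s').1 := by
    rintro s' ⟨u', _, hu'⟩
    exact u'.2 hu'
  have hιNv : ∀ s', ι s' ≠ Nvmc := by
    intro s' h
    exact hιv s' (by rw [h]; exact Set.mem_insert _ _)
  obtain ⟨junkset, hjunk, -⟩ := exists_maxClique (G.induce {u : V | u ≠ v}) isClique_empty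
  set η' : MC G → MC (G.induce {u : V | u ≠ v}) := fun C =>
    if h : v ∈ C.1 then ⟨junkset, hjunk⟩ else ⟨Subtype.val ⁻¹' C.1, maxclique_preimage C.2 h⟩
    with hη'
  have hη'val : ∀ C : MC G, C ≠ Nvmc → (η' C).1 = Subtype.val ⁻¹' C.1 := by
    intro C hC
    simp only [hη', dif_neg (hnots C hC)]
  have hηι : ∀ s', η' (ι s') = s' := by
    intro s'
    apply Subtype.ext
    rw [hη'val _ (hιNv s')]
    exact Set.preimage_image_eq _ Subtype.val_injective
  have hιη : ∀ C : MC G, C ≠ Nvmc → ι (η' C) = C := by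
    intro C hC
    apply Subtype.ext
    show Subtype.val '' (η' C).1 = C.1
    rw [hη'val C hC]
    exact val_image_preimage (fun u hu he => (hnots C hC) (he ▸ hu))
  have hη'inj : ∀ C D : MC G, C ≠ Nvmc → D ≠ Nvmc → η' C = η' D → C = D := by
    intro C D hC hD h
    rw [← hιη C hC, ← hιη D hD, h]
  obtain ⟨t0, ht0max, ht0sub⟩ :=
    exists_maxClique (G.induce {u : V | u ≠ v}) (clique_preimage (v := v) hsimp)
  set D0 : MC G := ι ⟨t0, ht0max⟩ with hD0
  have hD0N : G.neighborSet v ⊆ D0.1 := by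
    intro u hu
    exact ⟨⟨u, neighborSet_subset hu⟩, ht0sub hu, rfl⟩
  have hD0Nv : D0 ≠ Nvmc := hιNv _
  set r : MC G → MC G → Prop := fun C D =>
    (C = Nvmc ∧ D = D0 ∧ (G.neighborSet v).Nonempty) ∨
    (C ≠ Nvmc ∧ D ≠ Nvmc ∧ F'.Adj (η' C) (η' D)) with hr
  set F : SimpleGraph (MC G) := SimpleGraph.fromRel r with hF
  have hNvD0adj : (G.neighborSet v).Nonempty → F.Adj Nvmc D0 := by
    intro hnv
    rw [hF, fromRel_adj]
    exact ⟨Ne.symm hD0Nv, Or.inl (Or.inl ⟨rfl, rfl, hnv⟩)⟩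
  have hadj_iff : ∀ s' t', F.Adj (ι s') (ι t') ↔ F'.Adj s' t' := by
    intro s' t'
    constructor
    · intro h
      rw [hF, fromRel_adj] at h
      obtain ⟨hne, hor⟩ := h
      rcases hor with (⟨h1, -, -⟩ | ⟨-, -, hadj⟩) | (⟨h1, -, -⟩ | ⟨-, -, hadj⟩)
      · exact absurd h1 (hιNv s')
      · rwa [hηι, hηι] at hadj
      · exact absurd h1 (hιNv t')
      · rw [hηι, hηι] at hadj
        exact hadj.symm
    · intro h
      rw [hF, fromRel_adj]
      refine ⟨?_, Or.inl (Or.inr ⟨hιNv s', hιNv t', by rw [hηι, hηι]; exact h⟩)⟩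
      intro he
      have : s' = t' := by rw [← hηι s', he, hηι t']
      exact h.ne this
  have hFNvadj : ∀ C, F.Adj Nvmc C → C = D0 ∧ (G.neighborSet v).Nonempty := by
    intro C h
    rw [hF, fromRel_adj] at h
    obtain ⟨hne, hor⟩ := h
    rcases hor with (⟨-, h2, h3⟩ | ⟨h1, -, -⟩) | (⟨h1, -, -⟩ | ⟨-, h2, -⟩)
    · exact ⟨h2, h3⟩
    · exact absurd rfl h1
    · exact absurd h1.symm hne
    · exact absurd rfl h2
  have hFadj' : ∀ C D, F.Adj C D → C ≠ Nvmc → D ≠ Nvmc → F'.Adj (η' C) (η' D) := by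
    intro C D h hC hD
    rw [hF, fromRel_adj] at h
    obtain ⟨hne, hor⟩ := h
    rcases hor with (⟨h1, -, -⟩ | ⟨-, -, hadj⟩) | (⟨h1, -, -⟩ | ⟨-, -, hadj⟩)
    · exact absurd h1 hC
    · exact hadj
    · exact absurd h1 hD
    · exact hadj.symm
  have hrne : ∀ C D, r C D → ((C : Set V) ∩ (D : Set V)).Nonempty := by
    intro C D h
    rcases h with ⟨rfl, rfl, ⟨u, hu⟩⟩ | ⟨hC, hD, hadj⟩
    · exact ⟨u, Set.mem_insert_of_mem _ hu, hD0N hu⟩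
    · have := hle' hadj
      rw [cliqueGraph, fromRel_adj] at this
      obtain ⟨-, hor⟩ := this
      obtain ⟨x, hx1, hx2⟩ : ((η' C).1 ∩ (η' D).1).Nonempty := by
        rcases hor with h | h
        · exact h
        · obtain ⟨x, h1, h2⟩ := h
          exact ⟨x, h2, h1⟩
      rw [hη'val C hC] at hx1
      rw [hη'val D hD] at hx2
      exact ⟨x.1, hx1, hx2⟩
  refine ⟨F, ?_, ?_, ?_, ?_⟩
  · -- F ≤ cliqueGraph G
    intro C D h
    rw [hF, fromRel_adj] at h
    obtain ⟨hne, hor⟩ := h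
    rw [cliqueGraph, fromRel_adj]
    refine ⟨hne, Or.inl ?_⟩
    rcases hor with h | h
    · exact hrne C D h
    · obtain ⟨u, h1, h2⟩ := hrne D C h
      exact ⟨u, h2, h1⟩
  · -- acyclicity
    intro w c hc
    by_cases hm : Nvmc ∈ c.support
    · have hc' := hc.rotate hm
      set c' := c.rotate _ hm with hc'def
      clear_value c'
      cases c' with
      | nil => exact hc'.ne_nil rfl
      | @cons _ x _ h q =>
        obtain ⟨hxD0, hnv⟩ := hFNvadj x h
        subst hxD0
        obtain ⟨y, hy, q2, hq2⟩ := Walk.exists_eq_cons_of_ne h.ne q.reverse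
        have hyD0 : y = D0 := (hFNvadj y hy).1
        subst hyD0
        have hyedge : s(Nvmc, D0) ∈ q.edges := by
          have : s(Nvmc, D0) ∈ q.reverse.edges := by
            rw [hq2, Walk.edges_cons]
            exact List.mem_cons_self
          rwa [Walk.edges_reverse, List.mem_reverse] at this
        have hnd := hc'.isTrail.edges_nodup
        rw [Walk.edges_cons] at hnd
        exact (List.nodup_cons.mp hnd).1 hyedge
    · have hgood : ∀ x ∈ c.support, x ≠ Nvmc := fun x hx he => hm (he ▸ hx)
      obtain ⟨q, hqs, hqe⟩ := walk_transfer η' Nvmc (fun x y h hx hy => hFadj' x y h hx hy) c hgood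
      have hinj2 : ∀ x ∈ c.support, ∀ y ∈ c.support, η' x = η' y → x = y :=
        fun x hx y hy h => hη'inj x y (hgood x hx) (hgood y hy) h
      have hednodup : q.edges.Nodup := by
        rw [hqe]
        refine List.Nodup.map_on ?_ hc.isTrail.edges_nodup
        intro e1 he1 e2 he2 heq
        revert he1 he2 heq
        induction e1 using Sym2.ind with | _ a b =>
        induction e2 using Sym2.ind with | _ x y =>
        intro he1 he2 heq
        rw [Sym2.map_pair_eq, Sym2.map_pair_eq, Sym2.eq_iff] at heq
        have ha := c.fst_mem_support_of_mem_edges he1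
        have hb := c.snd_mem_support_of_mem_edges he1
        have hx := c.fst_mem_support_of_mem_edges he2
        have hy := c.snd_mem_support_of_mem_edges he2
        rw [Sym2.eq_iff]
        rcases heq with ⟨h1, h2⟩ | ⟨h1, h2⟩
        · exact Or.inl ⟨hinj2 a ha x hx h1, hinj2 b hb y hy h2⟩
        · exact Or.inr ⟨hinj2 a ha y hy h1, hinj2 b hb x hx h2⟩
      have hqlen : q.length = c.length := by
        have h1 := q.length_edges
        have h2 := c.length_edges
        rw [hqe, List.length_map] at h1
        omega
      have hnenil : q ≠ Walk.nil := by
        intro hnil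
        have h3 := hc.three_le_length
        rw [hnil] at hqlen
        simp at hqlen
        omega
      have htail : q.support.tail.Nodup := by
        rw [hqs, ← List.map_tail]
        refine List.Nodup.map_on ?_ hc.support_nodup
        intro x hx y hy h
        exact hinj2 x (List.mem_of_mem_tail hx) y (List.mem_of_mem_tail hy) h
      exact hacyc' _ ⟨⟨⟨hednodup⟩, hnenil⟩, htail⟩
  · -- reachability
    have hιhomadj : ∀ a b, F'.Adj a b → F.Adj (ι a) (ι b) := fun a b h => (hadj_iff a b).2 h
    have hreach_nonNv : ∀ C D : MC G, C ≠ Nvmc → D ≠ Nvmc →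
        ((C : Set V) ∩ (D : Set V)).Nonempty → F.Reachable C D := by
      intro C D hC hD ⟨u, hu1, hu2⟩
      by_cases hCD : C = D
      · exact hCD ▸ Reachable.refl _
      have hune : u ≠ v := fun he => (hnots C hC) (he ▸ hu1)
      have hx1 : (⟨u, hune⟩ : ↥{u : V | u ≠ v}) ∈ (η' C).1 := by
        rw [hη'val C hC]; exact hu1
      have hx2 : (⟨u, hune⟩ : ↥{u : V | u ≠ v}) ∈ (η' D).1 := by
        rw [hη'val D hD]; exact hu2
      have hne' : η' C ≠ η' D := fun h => hCD (hη'inj C D hC hD h)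
      have hr' : F'.Reachable (η' C) (η' D) := by
        apply hreach'
        exact Adj.reachable (by rw [cliqueGraph, fromRel_adj]; exact ⟨hne', Or.inl ⟨_, hx1, hx2⟩⟩)
      have hmap := SimpleGraph.Reachable.map (⟨ι, fun h => hιhomadj _ _ h⟩ : F' →g F) hr'
      have h1 : F.Reachable (ι (η' C)) (ι (η' D)) := hmap
      rwa [hιη C hC, hιη D hD] at h1
    intro c d h
    refine reach_of_adj_reach ?_ h
    intro X Y hXY
    rw [cliqueGraph, fromRel_adj] at hXY
    obtain ⟨hne, hor⟩ := hXY
    obtain ⟨u, hu1, hu2⟩ : ((X : Set V) ∩ (Y : Set V)).Nonempty := by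
      rcases hor with h' | h'
      · exact h'
      · obtain ⟨u, h1, h2⟩ := h'
        exact ⟨u, h2, h1⟩
    by_cases hX : X = Nvmc <;> by_cases hY : Y = Nvmc
    · exact absurd (hX.trans hY.symm) hne
    · subst hX
      have hune : u ≠ v := fun he => (hnots Y hY) (he ▸ hu2)
      have huN : u ∈ G.neighborSet v := by
        rcases hu1 with h' | h'
        · exact absurd h' hune
        · exact h'
      exact (hNvD0adj ⟨u, huN⟩).reachable.trans
        (hreach_nonNv D0 Y hD0Nv hY ⟨u, hD0N huN, hu2⟩)
    · subst hY
      have hune : u ≠ v := fun he => (hnots X hX) (he ▸ hu1)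
      have huN : u ∈ G.neighborSet v := by
        rcases hu2 with h' | h'
        · exact absurd h' hune
        · exact h'
      exact ((hNvD0adj ⟨u, huN⟩).reachable.trans
        (hreach_nonNv D0 X hD0Nv hX ⟨u, hD0N huN, hu1⟩)).symm
    · exact hreach_nonNv X Y hX hY ⟨u, hu1, hu2⟩
  · -- intersection property
    have hint_nonNv : ∀ (c' d' : MC G) (q : F.Walk c' d'), q.IsPath →
        (∀ x ∈ q.support, x ≠ Nvmc) →
        ∀ e ∈ q.support, (c' : Set V) ∩ (d' : Set V) ⊆ (e : Set V) := by
      intro c' d' q hq hgood e he u hu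
      have hc' : c' ≠ Nvmc := hgood _ (Walk.start_mem_support q)
      have hd' : d' ≠ Nvmc := hgood _ (Walk.end_mem_support q)
      obtain ⟨q', hqs, hqe⟩ := walk_transfer η' Nvmc (fun x y h hx hy => hFadj' x y h hx hy) q hgood
      have hq'path : q'.IsPath := by
        apply Walk.IsPath.mk'
        rw [hqs]
        refine List.Nodup.map_on ?_ hq.support_nodup
        intro x hx y hy h
        exact hη'inj x y (hgood x hx) (hgood y hy) h
      have he' : η' e ∈ q'.support := by
        rw [hqs]
        exact List.mem_map_of_mem he
      have key := hint' (η' c') (η' d') q' hq'path (η' e) he'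
      have hune : u ≠ v := fun hh => (hnots c' hc') (hh ▸ hu.1)
      have hx1 : (⟨u, hune⟩ : ↥{u : V | u ≠ v}) ∈ (η' c').1 := by
        rw [hη'val c' hc']; exact hu.1
      have hx2 : (⟨u, hune⟩ : ↥{u : V | u ≠ v}) ∈ (η' d').1 := by
        rw [hη'val d' hd']; exact hu.2
      have := key ⟨hx1, hx2⟩
      rw [hη'val e (hgood e he)] at this
      exact this
    have key2 : ∀ (d : MC G) (p : F.Walk Nvmc d), p.IsPath → d ≠ Nvmc →
        ∀ e ∈ p.support, (Nvmc : Set V) ∩ (d : Set V) ⊆ (e : Set V) := by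
      intro d p hp hd e he u hu
      obtain ⟨x, hx, q, rfl⟩ := Walk.exists_eq_cons_of_ne (Ne.symm hd) p
      obtain ⟨hxD0, hnv⟩ := hFNvadj x hx
      subst hxD0
      have hq := (Walk.cons_isPath_iff _ _).1 hp
      have hune : u ≠ v := fun hh => (hnots d hd) (hh ▸ hu.2)
      have huN : u ∈ G.neighborSet v := by
        rcases hu.1 with h' | h'
        · exact absurd h' hune
        · exact h'
      rw [Walk.support_cons, List.mem_cons] at he
      rcases he with rfl | he
      · exact hu.1
      · exact hint_nonNv D0 d q hq.1 (fun x hx' he' => hq.2 (he' ▸ hx')) e he ⟨hD0N huN, hu.2⟩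
    intro c d p hp e he u hu
    by_cases hcd : c = d
    · subst hcd
      rw [(Walk.isPath_iff_eq_nil (p := p)).1 hp] at he
      rw [Walk.support_nil, List.mem_singleton] at he
      subst he
      exact hu.1
    by_cases hc : c = Nvmc
    · subst hc
      exact key2 d p hp (fun h => hcd h.symm) e he hu
    by_cases hd : d = Nvmc
    · subst hd
      refine key2 c p.reverse hp.reverse hc e ?_ ⟨hu.2, hu.1⟩
      rwa [Walk.support_reverse, List.mem_reverse]
    by_cases hm : Nvmc ∈ p.support
    · exfalso
      have ht := hp.takeUntil hm
      have hrr := hp.dropUntil hm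
      obtain ⟨y, hy, t2, hteq⟩ := Walk.exists_eq_cons_of_ne (Ne.symm hc) (p.takeUntil Nvmc hm).reverse
      have hyD0 : y = D0 := (hFNvadj y hy).1
      subst hyD0
      have hyt : D0 ∈ (p.takeUntil Nvmc hm).support := by
        have : D0 ∈ (p.takeUntil Nvmc hm).reverse.support := by
          rw [hteq, Walk.support_cons]
          exact List.mem_cons_of_mem _ (Walk.start_mem_support t2)
        rwa [Walk.support_reverse, List.mem_reverse] at this
      obtain ⟨x, hx, q, hreq⟩ := Walk.exists_eq_cons_of_ne (Ne.symm hd) (p.dropUntil Nvmc hm)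
      have hxD0 : x = D0 := (hFNvadj x hx).1
      subst hxD0
      have hxr : D0 ∈ (p.dropUntil Nvmc hm).support.tail := by
        rw [hreq, Walk.support_cons, List.tail_cons]
        exact Walk.start_mem_support q
      have hspec := Walk.take_spec p hm
      have hnd := hp.support_nodup
      rw [← hspec, Walk.support_append] at hnd
      exact (List.disjoint_of_nodup_append hnd) hyt hxr
    · exact hint_nonNv c d p hp (fun x hx he' => hm (he' ▸ hx)) e he hu
end CaseB
end CFP

namespace CFP
section Assemble
universe u

lemma bot_works {V : Type u} [Fintype V] (G : SimpleGraph V)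
    (hsub : ∀ c d : MC G, c = d) :
    ∃ F : SimpleGraph (MC G),
      F ≤ cliqueGraph G ∧ F.IsAcyclic ∧
      (∀ c d, (cliqueGraph G).Reachable c d → F.Reachable c d) ∧
      (∀ c d (p : F.Walk c d), p.IsPath →
        ∀ e ∈ p.support, (c : Set V) ∩ (d : Set V) ⊆ (e : Set V)) := by
  refine ⟨⊥, bot_le, ?_, ?_, ?_⟩
  · intro u c hc
    cases c with
    | nil => exact hc.ne_nil rfl
    | cons h _ => exact h.elim
  · intro c d _
    exact (hsub c d) ▸ Reachable.refl c
  · intro c d p _ e he u hu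
    cases p with
    | nil =>
      rw [Walk.support_nil, List.mem_singleton] at he
      subst he
      exact hu.1
    | cons h _ => exact h.elim

theorem reverse_aux (n : ℕ) : ∀ {V : Type u} [Fintype V] (G : SimpleGraph V),
    Fintype.card V ≤ n → IsChordal G →
    ∃ F : SimpleGraph (MC G),
      F ≤ cliqueGraph G ∧ F.IsAcyclic ∧
      (∀ c d, (cliqueGraph G).Reachable c d → F.Reachable c d) ∧
      (∀ c d (p : F.Walk c d), p.IsPath →
        ∀ e ∈ p.support, (c : Set V) ∩ (d : Set V) ⊆ (e : Set V)) := by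
  induction n with
  | zero =>
    intro V _ G hcard _
    have hemp : IsEmpty V := by
      rw [← Fintype.card_eq_zero_iff]
      omega
    refine bot_works G ?_
    intro c d
    apply Subtype.ext
    rw [Set.eq_empty_of_isEmpty c.1, Set.eq_empty_of_isEmpty d.1]
  | succ n IH =>
    intro V _ G hcard hch
    classical
    rcases isEmpty_or_nonempty V with hemp | hne
    · refine bot_works G ?_
      intro c d
      apply Subtype.ext
      rw [Set.eq_empty_of_isEmpty c.1, Set.eq_empty_of_isEmpty d.1]
    · obtain ⟨v, hv⟩ := dirac hch
      have hcard' : Fintype.card ↥{u : V | u ≠ v} ≤ n := by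
        have hlt : Fintype.card ↥{u : V | u ≠ v} < Fintype.card V := by
          apply Fintype.card_lt_of_injective_of_notMem (Subtype.val) Subtype.val_injective
            (b := v)
          rintro ⟨⟨x, hxmem⟩, hxd⟩
          exact hxmem hxd
        omega
      obtain ⟨F', h1, h2, h3, h4⟩ := IH (G.induce {u : V | u ≠ v}) hcard'
        (chordal_induce hch _)
      by_cases hcase : IsMaxClique (G.induce {u : V | u ≠ v}) (Subtype.val ⁻¹' G.neighborSet v)
      · exact caseA G v hv hcase F' h1 h2 h3 h4
      · exact caseB G v hv hcase F' h1 h2 h3 h4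

theorem reverse {V : Type u} [Fintype V] (G : SimpleGraph V) (hch : IsChordal G) :
    ∃ F : SimpleGraph {s : Set V // IsMaxClique G s},
      F ≤ cliqueGraph G ∧ F.IsAcyclic ∧
      (∀ c d, (cliqueGraph G).Reachable c d → F.Reachable c d) ∧
      (∀ c d (p : F.Walk c d), p.IsPath →
        ∀ e ∈ p.support, (c : Set V) ∩ (d : Set V) ⊆ (e : Set V)) :=
  reverse_aux (Fintype.card V) G le_rfl hch

end Assemble
end CFP

/-- A graph `G` has a clique forest (a spanning forest of its clique graph
satisfying the clique-intersection property) if and only if `G` is chordal. -/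
theorem clique_forest_iff_chordal {V : Type*} [Fintype V] (G : SimpleGraph V) :
    (∃ F : SimpleGraph {s : Set V // IsMaxClique G s},
      F ≤ cliqueGraph G ∧ F.IsAcyclic ∧
      (∀ c d, (cliqueGraph G).Reachable c d → F.Reachable c d) ∧
      (∀ c d (p : F.Walk c d), p.IsPath →
        ∀ e ∈ p.support, (c : Set V) ∩ (d : Set V) ⊆ (e : Set V)))
    ↔ IsChordal G := by
  constructor
  · rintro ⟨F, hle, hacyc, hreach, hint⟩
    exact CFP.forward G F hacyc hreach hint
  · intro hch
    exact CFP.reverse G hch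
end

section
/- If a graph is built by starting from a single complete clique and repeatedly applying the clique expansion operator (attaching each new isolated vertex to a complete subset of an existing clique), then the resulting sequence of cliques, in order of creation, is a perfect sequence, i.e., it satisfies the running intersection property. -/
open SimpleGraph

/-- If a graph is built by starting from a single complete clique and repeatedly
applying the clique expansion operator (attaching each new isolated vertex to a
subset of an existing clique), then the resulting sequence of cliques, in order
of creation, satisfies the running intersection property with complete
separators, i.e. it is a perfect sequence. -/
theorem clique_expansion_perfect_sequence {V : Type*} (G : SimpleGraph V)
    (m : ℕ) (C : Fin m → Set V)
    (hclique : ∀ i, G.IsClique (C i))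
    (hexp : ∀ i : Fin m, 0 < (i : ℕ) →
      ∃ j, j < i ∧ ∃ (S : Set V) (v : V),
        S ⊆ C j ∧ v ∉ (⋃ k < i, C k) ∧ C i = S ∪ {v}) :
    ∀ i : Fin m, 0 < (i : ℕ) →
      ∃ j, j < i ∧ (C i ∩ ⋃ k < i, C k) ⊆ C j ∧
        G.IsClique (C i ∩ ⋃ k < i, C k) := by
  intro i hi
  obtain ⟨j, hji, S, v, hSj, hv, hCi⟩ := hexp i hi
  refine ⟨j, hji, ?_, (hclique i).subset Set.inter_subset_left⟩
  intro x hx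
  obtain ⟨hx1, hx2⟩ := hx
  rw [hCi] at hx1
  rcases hx1 with hS | hveq
  · exact hSj hS
  · exact absurd (hveq ▸ hx2) hv
end

section
/- If the cliques of a connected graph G admit an ordering with the running intersection property, then G is chordal. -/
open SimpleGraph

section Aux
open SimpleGraph.Walk

variable {V : Type*} {G : SimpleGraph V}

private lemma countP_edges_path [DecidableEq V] {y x : V} (q : G.Walk y x) :
    q.IsPath → y ≠ x → q.edges.countP (fun e => x ∈ e) = 1 := by
  induction q with
  | nil => intro _ h; exact absurd rfl h
  | @cons u z xx hadj r ih =>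
    intro hq h
    rw [edges_cons, List.countP_cons]
    by_cases hxz : xx = z
    · subst hxz
      have : r = Walk.nil := isPath_iff_eq_nil.mp hq.of_cons
      subst this
      simp
    · have : r.edges.countP (fun e => xx ∈ e) = 1 := ih hq.of_cons (fun hh => hxz hh.symm)
      rw [this]
      have : xx ∉ s(u, z) := by
        rw [Sym2.mem_iff]
        push_neg
        exact ⟨h.symm, hxz⟩
      simp [this]

private lemma countP_edges_cycle [DecidableEq V] {v x : V} {w : G.Walk v v}
    (hw : w.IsCycle) (hx : x ∈ w.support) :
    w.edges.countP (fun e => x ∈ e) = 2 := by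
  have hperm := (w.rotate_edges x hx).perm
  rw [← hperm.countP_eq]
  have hWc : (w.rotate x hx).IsCycle := hw.rotate hx
  obtain ⟨y, hadj, q, hWeq⟩ := not_nil_iff.mp hWc.not_nil
  rw [hWeq] at hWc ⊢
  obtain ⟨hqpath, -⟩ := (cons_isCycle_iff q hadj).mp hWc
  rw [edges_cons, List.countP_cons, countP_edges_path q hqpath hadj.ne']
  simp

private lemma three_edges_false [DecidableEq V] {v x : V} {w : G.Walk v v} (hw : w.IsCycle)
    {e1 e2 e3 : Sym2 V} (h1 : e1 ∈ w.edges) (h2 : e2 ∈ w.edges) (h3 : e3 ∈ w.edges)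
    (hx1 : x ∈ e1) (hx2 : x ∈ e2) (hx3 : x ∈ e3)
    (d12 : e1 ≠ e2) (d13 : e1 ≠ e3) (d23 : e2 ≠ e3) : False := by
  obtain ⟨y, rfl⟩ := Sym2.mem_iff_exists.mp hx1
  have hxs : x ∈ w.support := w.fst_mem_support_of_mem_edges h1
  have hc := countP_edges_cycle hw hxs
  rw [List.countP_eq_length_filter] at hc
  set l := w.edges.filter (fun e => decide (x ∈ e)) with hl
  have hnodup : l.Nodup := hw.isTrail.edges_nodup.filter _
  have hm1 : s(x, y) ∈ l := List.mem_filter.mpr ⟨h1, by simpa using hx1⟩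
  have hm2 : e2 ∈ l := List.mem_filter.mpr ⟨h2, by simpa using hx2⟩
  have hm3 : e3 ∈ l := List.mem_filter.mpr ⟨h3, by simpa using hx3⟩
  have hsub : ({s(x,y), e2, e3} : Finset (Sym2 V)) ⊆ l.toFinset := by
    intro e he
    simp only [Finset.mem_insert, Finset.mem_singleton] at he
    rcases he with rfl | rfl | rfl <;> exact List.mem_toFinset.mpr (by assumption)
  have hcard : ({s(x,y), e2, e3} : Finset (Sym2 V)).card = 3 := by
    rw [Finset.card_insert_of_notMem (by simp [d12, d13]),
      Finset.card_insert_of_notMem (by simp [d23]), Finset.card_singleton]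
  have := Finset.card_le_card hsub
  rw [hcard, List.toFinset_card_of_nodup hnodup, hc] at this
  omega

private lemma exists_other_edge [DecidableEq V] {v x y : V} {w : G.Walk v v} (hw : w.IsCycle)
    (he : s(x, y) ∈ w.edges) : ∃ z, z ≠ y ∧ s(x, z) ∈ w.edges := by
  have hxs : x ∈ w.support := w.fst_mem_support_of_mem_edges he
  have hc := countP_edges_cycle hw hxs
  rw [List.countP_eq_length_filter] at hc
  set l := w.edges.filter (fun e => decide (x ∈ e)) with hl
  have hnodup : l.Nodup := hw.isTrail.edges_nodup.filter _
  have hm1 : s(x, y) ∈ l := List.mem_filter.mpr ⟨he, by simp⟩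
  have hex : ∃ f ∈ l, f ≠ s(x, y) := by
    by_contra hall
    push_neg at hall
    have : l.count s(x,y) = l.length := List.count_eq_length.mpr (fun b hb => (hall b hb).symm)
    rw [hc] at this
    have := List.nodup_iff_count_le_one.mp hnodup s(x,y)
    omega
  obtain ⟨f, hfl, hfne⟩ := hex
  obtain ⟨hfe, hxf⟩ := List.mem_filter.mp hfl
  obtain ⟨z, rfl⟩ := Sym2.mem_iff_exists.mp (by simpa using hxf)
  exact ⟨z, fun hzy => hfne (by rw [hzy]), hfe⟩

private lemma sym2_ne {p q r s : V} (h : ¬((p = r ∧ q = s) ∨ (p = s ∧ q = r))) :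
    s(p,q) ≠ s(r,s) := fun he => h (Sym2.eq_iff.mp he)

private lemma triangle_aux [DecidableEq V] {v a b c : V} {w : G.Walk v v} (hw : w.IsCycle)
    (hab : a ≠ b) (hac : a ≠ c) (hbc : b ≠ c)
    (e1 : s(a,b) ∈ w.edges) (e2 : s(b,c) ∈ w.edges) (e3 : s(a,c) ∈ w.edges)
    (q : G.Walk b a) (hq : q.IsPath) (hqlen : 3 ≤ q.length)
    (hqe : ∀ f ∈ q.edges, f ∈ w.edges) (habq : s(a,b) ∉ q.edges)
    (h2q : s(b,c) ∈ q.edges) (h3q : s(a,c) ∈ q.edges) : False := by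
  obtain ⟨z, hbz, r, rfl⟩ := (not_nil_iff (p := q)).mp (not_nil_iff_lt_length.mpr (by omega))
  have hbzw : s(b,z) ∈ w.edges := hqe _ (by simp)
  have hz : z = c := by
    by_contra hzc
    have h1 : s(b,z) = s(a,b) ∨ s(b,z) = s(b,c) := by
      by_contra hcon
      push_neg at hcon
      exact three_edges_false (x := b) hw hbzw e1 e2 (by simp) (by simp) (by simp)
        hcon.1 hcon.2
        (sym2_ne (by rintro (⟨rfl, -⟩ | ⟨rfl, -⟩) <;> simp_all))
    rcases h1 with h1 | h1
    · exact habq (h1 ▸ (by simp : s(b,z) ∈ (Walk.cons hbz r).edges))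
    · rcases Sym2.eq_iff.mp h1 with ⟨-, rfl⟩ | ⟨h, -⟩
      · exact hzc rfl
      · exact hbc h
  subst hz
  have hr : r.IsPath := hq.of_cons
  have hrlen : 2 ≤ r.length := by
    have := hqlen; simp only [length_cons] at this; omega
  obtain ⟨u, hcu, t, rfl⟩ := (not_nil_iff (p := r)).mp (not_nil_iff_lt_length.mpr (by omega))
  have hcuw : s(z,u) ∈ w.edges := hqe _ (by simp)
  have h1 : s(z,u) = s(b,z) ∨ s(z,u) = s(a,z) := by
    by_contra hcon
    push_neg at hcon
    exact three_edges_false (x := z) hw hcuw e2 e3 (by simp) (by simp) (by simp)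
      hcon.1 hcon.2
      (sym2_ne (by rintro (⟨rfl, -⟩ | ⟨-, rfl⟩) <;> simp_all))
  rcases h1 with h1 | h1
  · have hnodup := hq.isTrail.edges_nodup
    simp only [edges_cons, List.nodup_cons] at hnodup
    exact hnodup.1 (by rw [← h1]; exact List.mem_cons_self)
  · rcases Sym2.eq_iff.mp h1 with ⟨h, -⟩ | ⟨-, rfl⟩
    · exact hac h.symm
    · have : t = Walk.nil := isPath_iff_eq_nil.mp hr.of_cons
      subst this
      simp at hrlen

private lemma triangle_not_in_cycle [DecidableEq V] {v a b c : V} {w : G.Walk v v}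
    (hw : w.IsCycle) (hlen : 4 ≤ w.length) (hab : a ≠ b) (hac : a ≠ c) (hbc : b ≠ c)
    (e1 : s(a,b) ∈ w.edges) (e2 : s(b,c) ∈ w.edges) (e3 : s(a,c) ∈ w.edges) : False := by
  have ha : a ∈ w.support := w.fst_mem_support_of_mem_edges e1
  have hperm := (w.rotate_edges a ha).perm
  have hWc : (w.rotate a ha).IsCycle := hw.rotate ha
  obtain ⟨y, hay, q, hWeq⟩ := (not_nil_iff (p := w.rotate a ha)).mp hWc.not_nil
  rw [hWeq] at hWc hperm
  obtain ⟨hqpath, habq⟩ := (cons_isCycle_iff q hay).mp hWc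
  have hmem : ∀ f, f ∈ w.edges ↔ f = s(a,y) ∨ f ∈ q.edges := by
    intro f
    rw [← hperm.mem_iff, edges_cons, List.mem_cons]
  have hqlen : q.length + 1 = w.length := by
    have := hperm.length_eq
    simpa [length_edges] using this
  have hqe : ∀ f ∈ q.edges, f ∈ w.edges := fun f hf => (hmem f).mpr (Or.inr hf)
  have hay_w : s(a,y) ∈ w.edges := (hmem _).mpr (Or.inl rfl)
  have hy : y = b ∨ y = c := by
    by_contra hcon
    push_neg at hcon
    refine three_edges_false (x := a) hw hay_w e1 e3 (by simp) (by simp) (by simp)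
      (sym2_ne ?_) (sym2_ne ?_)
      (sym2_ne (by rintro (⟨-, rfl⟩ | ⟨rfl, -⟩) <;> simp_all)) <;>
    · rintro (⟨-, h⟩ | ⟨h, -⟩) <;> simp_all
  rcases hy with rfl | rfl
  · refine triangle_aux hw hab hac hbc e1 e2 e3 q hqpath (by omega) hqe habq ?_ ?_
    · rcases (hmem _).mp e2 with h | h
      · exact absurd (Sym2.eq_iff.mp h) (by rintro (⟨rfl, -⟩ | ⟨-, rfl⟩) <;> simp_all)
      · exact h
    · rcases (hmem _).mp e3 with h | h
      · exact absurd (Sym2.eq_iff.mp h) (by rintro (⟨-, rfl⟩ | ⟨rfl, -⟩) <;> simp_all)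
      · exact h
  · refine triangle_aux hw hac hab hbc.symm e3 (Sym2.eq_swap ▸ e2) e1 q hqpath (by omega)
      hqe habq ?_ ?_
    · rcases (hmem _).mp e2 with h | h
      · exact absurd (Sym2.eq_iff.mp h) (by rintro (⟨rfl, -⟩ | ⟨-, rfl⟩) <;> simp_all)
      · exact Sym2.eq_swap ▸ h
    · rcases (hmem _).mp e1 with h | h
      · exact absurd (Sym2.eq_iff.mp h) (by rintro (⟨-, rfl⟩ | ⟨rfl, -⟩) <;> simp_all)
      · exact h

end Aux

/-- If the maximal cliques of a connected graph `G` admit an ordering with the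
running intersection property, then `G` is chordal. -/
theorem rip_implies_chordal {V : Type*} [Fintype V] (G : SimpleGraph V)
    (hconn : G.Connected) (m : ℕ) (C : Fin m → Set V)
    (hmax : ∀ i, IsMaxClique G (C i))
    (hall : ∀ s : Set V, IsMaxClique G s → ∃ i, C i = s)
    (hrip : ∀ i : Fin m, 0 < (i : ℕ) →
      ∃ j, j < i ∧ (C i ∩ ⋃ k < i, C k) ⊆ C j) :
    IsChordal G := by
  classical
  intro v w hw hlen
  by_contra hcon
  push_neg at hcon
  -- every edge of the graph lies in some C i
  have hidx : ∀ e ∈ w.edges, ∃ i : Fin m, ∀ z ∈ e, z ∈ C i := by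
    intro e he
    induction e with
    | _ a b =>
      have hadj : G.Adj a b := w.adj_of_mem_edges he
      set S : Set (Set V) := {t | G.IsClique t ∧ a ∈ t ∧ b ∈ t} with hS
      have hfin : S.Finite := Set.toFinite S
      have hne : S.Nonempty :=
        ⟨{a, b}, isClique_pair.mpr (fun _ => hadj), by simp, by simp⟩
      obtain ⟨t, htS, htmax⟩ : ∃ t ∈ S, ∀ u ∈ S, id t ≤ id u → id t = id u := by
        obtain ⟨t, htS, htmax⟩ := hfin.exists_maximalFor id S hne
        exact ⟨t, htS, fun u hu h => le_antisymm h (htmax hu h)⟩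
      have htm : IsMaxClique G t :=
        ⟨htS.1, fun u hu hsub => (htmax u ⟨hu, hsub htS.2.1, hsub htS.2.2⟩ hsub).symm⟩
      obtain ⟨i, hi⟩ := hall t htm
      refine ⟨i, fun z hz => ?_⟩
      rw [hi]
      rcases Sym2.mem_iff.mp hz with rfl | rfl
      · exact htS.2.1
      · exact htS.2.2
  -- minimal clique index of each edge
  set P : Sym2 V → ℕ → Prop := fun e n => ∃ h : n < m, ∀ z ∈ e, z ∈ C ⟨n, h⟩ with hP
  have hex : ∀ e ∈ w.edges, ∃ n, P e n := by
    intro e he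
    obtain ⟨i, hi⟩ := hidx e he
    exact ⟨i.1, i.2, by simpa using hi⟩
  set N : Sym2 V → ℕ := fun e => sInf {n | P e n} with hN
  have hNmem : ∀ e ∈ w.edges, P e (N e) := fun e he => Nat.sInf_mem (hex e he)
  have hNle : ∀ e n, P e n → N e ≤ n := fun e n h => Nat.sInf_le h
  -- pick an edge with maximal N
  have hene : w.edges.toFinset.Nonempty := by
    rw [List.toFinset_nonempty_iff, ← List.length_pos_iff_ne_nil, Walk.length_edges]
    omega
  obtain ⟨e, heF, hemax⟩ := Finset.exists_max_image w.edges.toFinset N hene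
  have he : e ∈ w.edges := List.mem_toFinset.mp heF
  induction e with
  | _ a b =>
    obtain ⟨hm, hCi⟩ := hNmem _ he
    set i : Fin m := ⟨N s(a,b), hm⟩ with hi
    have haC : a ∈ C i := hCi a (by simp)
    have hbC : b ∈ C i := hCi b (by simp)
    have hadj : G.Adj a b := w.adj_of_mem_edges he
    -- the key fact: no third vertex of an edge at a or b can lie in C i
    have key : ∀ (x y z : V), x ∈ C i → y ∈ C i → s(x,y) ∈ w.edges →
        s(x,z) ∈ w.edges → z ≠ y → z ∉ C i := by
      intro x y z hx hy hxy hxz hzy hz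
      have hadjxy : G.Adj x y := w.adj_of_mem_edges hxy
      have hadjxz : G.Adj x z := w.adj_of_mem_edges hxz
      have hadjyz : G.Adj y z := (hmax i).1 hy hz (fun h => hzy h.symm)
      have hyz : s(y,z) ∈ w.edges :=
        hcon y z (w.fst_mem_support_of_mem_edges hxy |> fun _ =>
          w.snd_mem_support_of_mem_edges hxy) (w.snd_mem_support_of_mem_edges hxz) hadjyz
      exact triangle_not_in_cycle hw hlen hadjxy.ne hadjxz.ne hzy.symm hxy hyz hxz
    -- other edges at a and at b
    obtain ⟨a2, ha2b, hea2⟩ := exists_other_edge hw he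
    obtain ⟨b2, hb2a, heb2⟩ := exists_other_edge hw (Sym2.eq_swap ▸ he)
    have hlta : N s(a,a2) < (i : ℕ) := by
      refine lt_of_le_of_ne (hemax _ (List.mem_toFinset.mpr hea2)) (fun heq => ?_)
      obtain ⟨hm', hC'⟩ := hNmem _ hea2
      have : (⟨N s(a,a2), hm'⟩ : Fin m) = i := Fin.ext heq
      exact key a b a2 haC hbC he hea2 ha2b (this ▸ hC' a2 (by simp))
    have hltb : N s(b,b2) < (i : ℕ) := by
      refine lt_of_le_of_ne (hemax _ (List.mem_toFinset.mpr heb2)) (fun heq => ?_)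
      obtain ⟨hm', hC'⟩ := hNmem _ heb2
      have : (⟨N s(b,b2), hm'⟩ : Fin m) = i := Fin.ext heq
      exact key b a b2 hbC haC (Sym2.eq_swap ▸ he) heb2 hb2a (this ▸ hC' b2 (by simp))
    obtain ⟨j, hj, hsub⟩ := hrip i (by omega)
    obtain ⟨hma, hCa⟩ := hNmem _ hea2
    obtain ⟨hmb, hCb⟩ := hNmem _ heb2
    have haJ : a ∈ C j := hsub ⟨haC, Set.mem_biUnion (show (⟨N s(a,a2), hma⟩ : Fin m) < i by
      simpa [Fin.lt_def] using hlta) (hCa a (by simp))⟩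
    have hbJ : b ∈ C j := hsub ⟨hbC, Set.mem_biUnion (show (⟨N s(b,b2), hmb⟩ : Fin m) < i by
      simpa [Fin.lt_def] using hltb) (hCb b (by simp))⟩
    have : N s(a,b) ≤ (j : ℕ) := by
      refine hNle _ _ ⟨j.2, fun z hz => ?_⟩
      rcases Sym2.mem_iff.mp hz with rfl | rfl
      · simpa using haJ
      · simpa using hbJ
    have : (i : ℕ) ≤ (j : ℕ) := this
    exact absurd hj (by rw [Fin.lt_def]; omega)
end

section
/- The MFCF construction adds vertices in reverse perfect elimination order: if a graph is grown by repeated clique expansions starting from cliques whose vertices are in reverse perfect elimination order, and the vertex sequence is extended by the vertices in the order they are attached, then the reverse of this sequence is a perfect elimination order of the final graph. -/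
open SimpleGraph

/-- `σ` is a perfect elimination order of `G` if for every vertex `σ i`, its
neighbours among the later vertices `σ j`, `j > i`, form a complete subgraph. -/
def IsPEO {V : Type*} (G : SimpleGraph V) {n : ℕ} (σ : Fin n ≃ V) : Prop :=
  ∀ i : Fin n, G.IsClique {u | G.Adj (σ i) u ∧ ∃ j, i < j ∧ σ j = u}

/-- The MFCF construction adds vertices in reverse perfect elimination order: if
the edges of `G` arise by attaching each vertex `w i`, in order, to a complete
set `S i` of previously added vertices (clique expansion), then the reverse of
the addition order is a perfect elimination order of the final graph. -/
theorem mfcf_reverse_peo {V : Type*} [Fintype V] (G : SimpleGraph V)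
    (n : ℕ) (w : Fin n ≃ V) (S : Fin n → Set V)
    (hSprev : ∀ i : Fin n, S i ⊆ {u | ∃ j, j < i ∧ w j = u})
    (hScomplete : ∀ i : Fin n, G.IsClique (S i))
    (hedges : ∀ a b : V, G.Adj a b ↔
      ∃ i : Fin n, (a = w i ∧ b ∈ S i) ∨ (b = w i ∧ a ∈ S i)) :
    IsPEO G (Fin.revPerm.trans w) := by
  intro i
  have key : {u | G.Adj ((Fin.revPerm.trans w) i) u ∧
      ∃ j, i < j ∧ (Fin.revPerm.trans w) j = u} = S i.rev := by
    ext u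
    simp only [Set.mem_setOf_eq, Equiv.trans_apply, Fin.revPerm_apply]
    constructor
    · rintro ⟨hadj, j, hij, rfl⟩
      rw [hedges] at hadj
      obtain ⟨k, ⟨h1, h2⟩ | ⟨h1, h2⟩⟩ := hadj
      · rwa [← w.injective h1] at h2
      · exfalso
        obtain ⟨m, hm, hmw⟩ := hSprev k h2
        have hmi : m = i.rev := w.injective hmw
        have hjk : j.rev = k := w.injective h1
        have : j.rev < i.rev := Fin.rev_lt_rev.mpr hij
        omega
    · intro hu
      refine ⟨(hedges _ _).mpr ⟨i.rev, Or.inl ⟨rfl, hu⟩⟩, ?_⟩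
      obtain ⟨m, hm, rfl⟩ := hSprev i.rev hu
      refine ⟨m.rev, ?_, by rw [Fin.rev_rev]⟩
      have : i.rev.rev < m.rev := Fin.rev_lt_rev.mpr hm
      rwa [Fin.rev_rev] at this
  rw [key]
  exact hScomplete i.rev
end

section
/- A graph admits a perfect elimination order of its vertices if and only if it is chordal. -/
open SimpleGraph

open SimpleGraph

namespace SimpleGraph.Walk

variable {V : Type*} {G : SimpleGraph V}

lemma getVert_mem_edges {x y : V} (p : G.Walk x y) :
    ∀ i, i < p.length → s(p.getVert i, p.getVert (i+1)) ∈ p.edges := by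
  induction p with
  | nil => intro i h; simp at h
  | cons hadj q ih =>
    intro i h
    cases i with
    | zero =>
      simp only [Walk.edges_cons, List.mem_cons]
      left
      simp [Walk.getVert_cons_succ, getVert_zero]
    | succ n =>
      simp only [Walk.getVert_cons_succ, Walk.edges_cons, List.mem_cons]
      right
      exact ih n (by simpa using h)

lemma mem_edges_exists_getVert {x y : V} (p : G.Walk x y) {e : Sym2 V} (he : e ∈ p.edges) :
    ∃ i, i < p.length ∧ s(p.getVert i, p.getVert (i+1)) = e := by
  induction p with
  | nil => simp at he
  | cons hadj q ih =>
    simp only [Walk.edges_cons, List.mem_cons] at he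
    rcases he with he | he
    · exact ⟨0, by simp, by simp [Walk.getVert, Walk.getVert_cons_succ, getVert_zero, he.symm]⟩
    · obtain ⟨i, hi, hei⟩ := ih he
      exact ⟨i + 1, by simpa using hi, by simpa [Walk.getVert_cons_succ] using hei⟩

/-- Take the first `n` steps of a walk. -/
def takeW {x y : V} : (p : G.Walk x y) → (n : ℕ) → G.Walk x (p.getVert n)
  | Walk.nil, _ => Walk.nil
  | Walk.cons _ _, 0 => Walk.nil
  | Walk.cons h q, (n+1) => Walk.cons h (takeW q n)

/-- Drop the first `n` steps of a walk. -/
def dropW {x y : V} : (p : G.Walk x y) → (n : ℕ) → G.Walk (p.getVert n) y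
  | Walk.nil, _ => Walk.nil
  | Walk.cons h q, 0 => Walk.cons h q
  | Walk.cons _ q, (n+1) => dropW q n

lemma length_takeW {x y : V} : ∀ (p : G.Walk x y) (n : ℕ), n ≤ p.length →
    (p.takeW n).length = n
  | Walk.nil, n, h => by simp at h; simp [takeW, h]
  | Walk.cons _ _, 0, _ => rfl
  | Walk.cons h q, (n+1), hn => by
      simpa [takeW] using length_takeW q n (by simpa using hn)

lemma length_dropW {x y : V} : ∀ (p : G.Walk x y) (n : ℕ),
    (p.dropW n).length = p.length - n
  | Walk.nil, n => by simp [dropW, Walk.getVert]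
  | Walk.cons _ _, 0 => by simp [dropW]; rfl
  | Walk.cons h q, (n+1) => by
      simpa [dropW] using length_dropW q n

lemma support_takeW_subset {x y : V} : ∀ (p : G.Walk x y) (n : ℕ),
    (p.takeW n).support ⊆ p.support
  | Walk.nil, n => by simp [takeW, Walk.getVert]
  | Walk.cons _ _, 0 => by intro z hz; change z ∈ [x] at hz; simp_all
  | Walk.cons h q, (n+1) => by
      simp only [takeW, Walk.support_cons, List.cons_subset, List.mem_cons, true_or, true_and]
      exact List.cons_subset_cons _ (support_takeW_subset q n)

lemma support_dropW_subset {x y : V} : ∀ (p : G.Walk x y) (n : ℕ),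
    (p.dropW n).support ⊆ p.support
  | Walk.nil, n => by simp [dropW, Walk.getVert]
  | Walk.cons _ _, 0 => by intro z hz; exact hz
  | Walk.cons h q, (n+1) => by
      simp only [dropW, Walk.support_cons]
      exact List.Subset.trans (support_dropW_subset q n) (List.subset_cons_self _ _)

end SimpleGraph.Walk

namespace SimpleGraph.Walk

variable {V : Type*} {G : SimpleGraph V}

lemma exists_shorter_of_not_path {x y : V} (p : G.Walk x y) (h : ¬p.IsPath) :
    ∃ q : G.Walk x y, q.length < p.length ∧ ∀ z ∈ q.support, z ∈ p.support := by
  rw [Walk.isPath_def, List.nodup_iff_injective_getElem, Function.not_injective_iff] at h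
  obtain ⟨⟨i0, hi0⟩, ⟨j0, hj0⟩, hval0, hne0⟩ := h
  have hne : i0 ≠ j0 := by simpa using hne0
  obtain ⟨i, j, hij, hj, hval⟩ :
      ∃ i j, ∃ (hij : i < j) (hj : j < p.support.length),
        p.support[i]'(Nat.lt_trans hij hj) = p.support[j]'hj := by
    rcases Nat.lt_or_ge i0 j0 with hlt | hge
    · exact ⟨i0, j0, hlt, hj0, hval0⟩
    · exact ⟨j0, i0, by omega, hi0, hval0.symm⟩
  have hlen : p.support.length = p.length + 1 := p.length_support
  have hjl : j ≤ p.length := by omega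
  have hil : i ≤ p.length := by omega
  rw [p.support_getElem_eq_getVert (n := i) (by omega), p.support_getElem_eq_getVert (n := j) (by omega)] at hval
  refine ⟨(p.takeW i).append ((p.dropW j).copy hval.symm rfl), ?_, ?_⟩
  · rw [Walk.length_append, Walk.length_copy, p.length_takeW i hil, p.length_dropW j]
    omega
  · intro z hz
    rw [Walk.mem_support_append_iff] at hz
    rcases hz with hz | hz
    · exact p.support_takeW_subset i hz
    · rw [Walk.support_copy] at hz
      exact p.support_dropW_subset j hz

lemma shortcut_aux {x y u v : V} (p : G.Walk x y) {i j : ℕ} (hij : i < j) (hjl : j ≤ p.length)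
    (hu : p.getVert i = u) (hv : p.getVert j = v)
    (ha : G.Adj u v) (he : s(u, v) ∉ p.edges) :
    ∃ q : G.Walk x y, q.length < p.length ∧ ∀ z ∈ q.support, z ∈ p.support := by
  have hj2 : i + 2 ≤ j := by
    rcases Nat.lt_or_ge (i+1) j with h1 | h1
    · omega
    · exfalso
      have : j = i + 1 := by omega
      subst this
      exact he (by rw [← hu, ← hv]; exact p.getVert_mem_edges i (by omega))
  have hadj : G.Adj (p.getVert i) (p.getVert j) := by rw [hu, hv]; exact ha
  refine ⟨(p.takeW i).append (Walk.cons hadj (p.dropW j)), ?_, ?_⟩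
  · rw [Walk.length_append, Walk.length_cons, p.length_takeW i (by omega), p.length_dropW j]
    omega
  · intro z hz
    rw [Walk.mem_support_append_iff] at hz
    rcases hz with hz | hz
    · exact p.support_takeW_subset i hz
    · rw [Walk.support_cons, List.mem_cons] at hz
      rcases hz with rfl | hz
      · exact Walk.mem_support_iff_exists_getVert.mpr ⟨i, rfl, by omega⟩
      · exact p.support_dropW_subset j hz

lemma shortcut {x y u v : V} (p : G.Walk x y) (hu : u ∈ p.support) (hv : v ∈ p.support)
    (ha : G.Adj u v) (he : s(u, v) ∉ p.edges) :
    ∃ q : G.Walk x y, q.length < p.length ∧ ∀ z ∈ q.support, z ∈ p.support := by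
  obtain ⟨i, hiu, hil⟩ := Walk.mem_support_iff_exists_getVert.mp hu
  obtain ⟨j, hjv, hjl⟩ := Walk.mem_support_iff_exists_getVert.mp hv
  have hne : i ≠ j := by rintro rfl; rw [hiu] at hjv; exact ha.ne (hjv ▸ rfl)
  rcases Nat.lt_or_ge i j with hij | hij
  · exact shortcut_aux p hij hjl hiu hjv ha he
  · exact shortcut_aux p (by omega) hil hjv hiu ha.symm (by rwa [Sym2.eq_swap])

end SimpleGraph.Walk
namespace SimpleGraph

variable {V : Type*} {G : SimpleGraph V}

lemma Walk.mem_support_rotate [DecidableEq V] {x u z : V} (c : G.Walk x x) (h : u ∈ c.support) :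
    z ∈ (c.rotate u h).support ↔ z ∈ c.support := by
  rw [Walk.rotate, Walk.mem_support_append_iff]
  conv_rhs => rw [← c.take_spec h]
  rw [Walk.mem_support_append_iff]
  tauto

end SimpleGraph

theorem isChordal_of_peo {V : Type*} {G : SimpleGraph V} {n : ℕ} (σ : Fin n ≃ V)
    (hσ : IsPEO G σ) : IsChordal G := by
  classical
  intro v w hc hlen
  have hvs : v ∈ w.support := w.start_mem_support
  set T : Finset (Fin n) := w.support.toFinset.image σ.symm with hT
  have hTne : T.Nonempty := ⟨σ.symm v, Finset.mem_image.mpr ⟨v, List.mem_toFinset.mpr hvs, rfl⟩⟩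
  set i := T.min' hTne with hi
  set x := σ i with hx
  have hxs : x ∈ w.support := by
    obtain ⟨z, hz, hzi⟩ := Finset.mem_image.mp (T.min'_mem hTne)
    have hzx : z = x := by rw [hx, hi, ← hzi, Equiv.apply_symm_apply]
    exact hzx ▸ List.mem_toFinset.mp hz
  have hmin : ∀ z ∈ w.support, i ≤ σ.symm z := fun z hz =>
    T.min'_le _ (Finset.mem_image.mpr ⟨z, List.mem_toFinset.mpr hz, rfl⟩)
  set c := w.rotate x hxs with hcdef
  have hcc : c.IsCycle := hc.rotate hxs
  have hclen : c.length = w.length := w.length_rotate x hxs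
  set m := c.length with hm
  have hm4 : 4 ≤ m := hclen ▸ hlen
  have hsupp : ∀ z, z ∈ c.support ↔ z ∈ w.support := fun z => w.mem_support_rotate hxs
  have hedge : ∀ e, e ∈ c.edges ↔ e ∈ w.edges := fun e => (w.rotate_edges x hxs).perm.mem_iff
  have hlensupp : c.support.length = m + 1 := c.length_support
  have htail : c.support.tail.Nodup := hcc.support_nodup
  have htlen : c.support.tail.length = m := by
    rw [List.length_tail, hlensupp]
    omega
  have hinj : ∀ k l, 1 ≤ k → k ≤ m → 1 ≤ l → l ≤ m → c.getVert k = c.getVert l → k = l := by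
    intro k l hk1 hk hl1 hl hval
    have e1 : c.support.tail[k-1]'(by omega) = c.getVert k := by
      rw [List.getElem_tail, c.support_getElem_eq_getVert (n := k-1+1) (by omega)]
      congr 1
      omega
    have e2 : c.support.tail[l-1]'(by omega) = c.getVert l := by
      rw [List.getElem_tail, c.support_getElem_eq_getVert (n := l-1+1) (by omega)]
      congr 1
      omega
    have := List.nodup_iff_injective_getElem.mp htail
      (a₁ := ⟨k-1, by omega⟩) (a₂ := ⟨l-1, by omega⟩)
      (by show c.support.tail[k-1]'(by omega) = c.support.tail[l-1]'(by omega)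
          rw [e1, e2, hval])
    have : k - 1 = l - 1 := by simpa using this
    omega
  have hgv0 : c.getVert 0 = x := c.getVert_zero
  have hgvm : c.getVert m = x := c.getVert_length
  obtain ⟨a, ha⟩ : ∃ a, a = c.getVert 1 := ⟨_, rfl⟩
  obtain ⟨b, hb⟩ : ∃ b, b = c.getVert (m-1) := ⟨_, rfl⟩
  have hadj_xa : G.Adj x a := by
    have := c.adj_getVert_succ (i := 0) (by omega)
    rwa [hgv0, ← ha] at this
  have hadj_bx : G.Adj b x := by
    have := c.adj_getVert_succ (i := m-1) (by omega)
    rwa [show m - 1 + 1 = m by omega, hgvm, ← hb] at this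
  have hax : a ≠ x := by
    intro h
    have : (1:ℕ) = m := hinj 1 m (by omega) (by omega) (by omega) (by omega) (ha.symm.trans (h.trans hgvm.symm))
    omega
  have hbx : b ≠ x := by
    intro h
    have : m - 1 = m := hinj (m-1) m (by omega) (by omega) (by omega) (by omega) (hb.symm.trans (h.trans hgvm.symm))
    omega
  have hab : a ≠ b := by
    intro h
    have : (1:ℕ) = m - 1 := hinj 1 (m-1) (by omega) (by omega) (by omega) (by omega) (ha.symm.trans (h.trans hb))
    omega
  have hamem : a ∈ c.support := SimpleGraph.Walk.mem_support_iff_exists_getVert.mpr ⟨1, ha.symm, by omega⟩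
  have hbmem : b ∈ c.support := SimpleGraph.Walk.mem_support_iff_exists_getVert.mpr ⟨m-1, hb.symm, by omega⟩
  have hia : i < σ.symm a := by
    rcases lt_or_eq_of_le (hmin a ((hsupp a).mp hamem)) with h | h
    · exact h
    · exact absurd (by rw [hx, h, Equiv.apply_symm_apply]) hax.symm
  have hib : i < σ.symm b := by
    rcases lt_or_eq_of_le (hmin b ((hsupp b).mp hbmem)) with h | h
    · exact h
    · exact absurd (by rw [hx, h, Equiv.apply_symm_apply]) hbx.symm
  have haS : a ∈ {u | G.Adj (σ i) u ∧ ∃ j, i < j ∧ σ j = u} :=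
    ⟨by rw [← hx]; exact hadj_xa, ⟨σ.symm a, hia, Equiv.apply_symm_apply _ _⟩⟩
  have hbS : b ∈ {u | G.Adj (σ i) u ∧ ∃ j, i < j ∧ σ j = u} :=
    ⟨by rw [← hx]; exact hadj_bx.symm, ⟨σ.symm b, hib, Equiv.apply_symm_apply _ _⟩⟩
  have hadj_ab : G.Adj a b := hσ i haS hbS hab
  refine ⟨a, b, (hsupp a).mp hamem, (hsupp b).mp hbmem, hadj_ab, ?_⟩
  intro hmem
  rw [← hedge] at hmem
  obtain ⟨k, hk, hke⟩ := c.mem_edges_exists_getVert hmem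
  rw [Sym2.eq_iff] at hke
  rcases hke with ⟨hk1, hk2⟩ | ⟨hk1, hk2⟩
  · have hk0 : k ≠ 0 := by
      intro h
      exact hax (by rw [← hk1, h, hgv0])
    have hke1 : k = 1 := hinj k 1 (by omega) (by omega) (by omega) (by omega) (by rw [hk1, ha])
    subst hke1
    have : (2:ℕ) = m - 1 := hinj 2 (m-1) (by omega) (by omega) (by omega) (by omega) (by rw [show (2:ℕ) = 1 + 1 by norm_num, hk2, hb])
    omega
  · have hk0 : k ≠ 0 := by
      intro h
      exact hbx (by rw [← hk1, h, hgv0])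
    have hkm : k = m - 1 := hinj k (m-1) (by omega) (by omega) (by omega) (by omega) (by rw [hk1, hb])
    subst hkm
    exact hax (by rw [← hk2, show m - 1 + 1 = m by omega, hgvm])
section ChordalInfra

variable {V : Type*} {G : SimpleGraph V}

/-- There is a walk from `x` to `y` all of whose vertices lie in `t`. -/
def WalkIn (G : SimpleGraph V) (t : Set V) (x y : V) : Prop :=
  ∃ w : G.Walk x y, ∀ z ∈ w.support, z ∈ t

lemma WalkIn.rfl {t : Set V} {x : V} (hx : x ∈ t) : WalkIn G t x x :=
  ⟨SimpleGraph.Walk.nil, by simpa using hx⟩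

lemma WalkIn.symm {t : Set V} {x y : V} : WalkIn G t x y → WalkIn G t y x := fun ⟨w, hw⟩ =>
  ⟨w.reverse, fun z hz => hw z (by rwa [SimpleGraph.Walk.support_reverse, List.mem_reverse] at hz)⟩

lemma WalkIn.trans {t : Set V} {x y z : V} : WalkIn G t x y → WalkIn G t y z → WalkIn G t x z :=
  fun ⟨w1, h1⟩ ⟨w2, h2⟩ => ⟨w1.append w2, fun u hu => by
    rcases (SimpleGraph.Walk.mem_support_append_iff _ _).mp hu with h | h
    · exact h1 u h
    · exact h2 u h⟩

lemma WalkIn.of_adj {t : Set V} {x y : V} (h : G.Adj x y) (hx : x ∈ t) (hy : y ∈ t) :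
    WalkIn G t x y :=
  ⟨SimpleGraph.Walk.cons h SimpleGraph.Walk.nil, by
    intro z hz
    simp only [SimpleGraph.Walk.support_cons, SimpleGraph.Walk.support_nil, List.mem_cons,
      List.mem_singleton, List.not_mem_nil, or_false] at hz
    rcases hz with rfl | rfl
    · exact hx
    · exact hy⟩

/-- `S` separates `a` from `b` inside `s`. -/
def IsSep (G : SimpleGraph V) (s S : Finset V) (a b : V) : Prop :=
  S ⊆ s ∧ a ∉ S ∧ b ∉ S ∧ ¬ WalkIn G (↑s \ ↑S) a b

/-- The connected component of `a` in `s \ S`. -/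
def Comp (G : SimpleGraph V) (s S : Finset V) (a : V) : Set V :=
  {z | z ∈ (↑s : Set V) \ ↑S ∧ WalkIn G (↑s \ ↑S) a z}

lemma IsSep.symm {s S : Finset V} {a b : V} (h : IsSep G s S a b) : IsSep G s S b a :=
  ⟨h.1, h.2.2.1, h.2.1, fun hw => h.2.2.2 hw.symm⟩

lemma comp_subset {s S : Finset V} {a : V} : Comp G s S a ⊆ (↑s : Set V) \ ↑S :=
  fun _ hz => hz.1

lemma mem_comp_self {s S : Finset V} {a : V} (ha : a ∈ s) (haS : a ∉ S) : a ∈ Comp G s S a :=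
  ⟨⟨ha, haS⟩, WalkIn.rfl ⟨ha, haS⟩⟩

lemma comp_closed {s S : Finset V} {a z u : V} (hz : z ∈ Comp G s S a)
    (hu : u ∈ s) (huS : u ∉ S) (hadj : G.Adj z u) : u ∈ Comp G s S a :=
  ⟨⟨hu, huS⟩, hz.2.trans (WalkIn.of_adj hadj hz.1 ⟨hu, huS⟩)⟩

lemma comp_walkIn [DecidableEq V] {s S : Finset V} {a z : V} (hz : z ∈ Comp G s S a) :
    ∃ w : G.Walk a z, ∀ u ∈ w.support, u ∈ Comp G s S a := by
  obtain ⟨w, hw⟩ := hz.2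
  exact ⟨w, fun u hu =>
    ⟨hw u hu, ⟨w.takeUntil u hu, fun p hp => hw p (w.support_takeUntil_subset hu hp)⟩⟩⟩

lemma comp_connected [DecidableEq V] {s S : Finset V} {a x' y' : V}
    (hx : x' ∈ Comp G s S a) (hy : y' ∈ Comp G s S a) :
    ∃ w : G.Walk x' y', ∀ u ∈ w.support, u ∈ Comp G s S a := by
  obtain ⟨w1, h1⟩ := comp_walkIn hx
  obtain ⟨w2, h2⟩ := comp_walkIn hy
  refine ⟨w1.reverse.append w2, fun u hu => ?_⟩
  rcases (SimpleGraph.Walk.mem_support_append_iff _ _).mp hu with h | h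
  · exact h1 u (by rwa [SimpleGraph.Walk.support_reverse, List.mem_reverse] at h)
  · exact h2 u h

lemma comp_disjoint {s S : Finset V} {a b z : V} (hsep : IsSep G s S a b)
    (hza : z ∈ Comp G s S a) (hzb : z ∈ Comp G s S b) : False :=
  hsep.2.2.2 (hza.2.trans hzb.2.symm)

lemma cross_not_adj {s S : Finset V} {a b u v : V} (hsep : IsSep G s S a b)
    (hu : u ∈ Comp G s S a) (hv : v ∈ Comp G s S b) : ¬ G.Adj u v := fun hadj =>
  hsep.2.2.2 ((hu.2.trans (WalkIn.of_adj hadj hu.1 hv.1)).trans hv.2.symm)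

lemma exists_minimal_walk {x y : V} (Q : G.Walk x y → Prop) (h : ∃ w, Q w) :
    ∃ w, Q w ∧ ∀ w', Q w' → w.length ≤ w'.length := by
  classical
  obtain ⟨w0, hw0⟩ := h
  have hP : ∃ n, ∃ w : G.Walk x y, Q w ∧ w.length = n := ⟨w0.length, w0, hw0, rfl⟩
  obtain ⟨w, hw, hwl⟩ := Nat.find_spec hP
  exact ⟨w, hw, fun w' hw' => by
    rw [hwl]
    exact Nat.find_min' hP ⟨w', hw', rfl⟩⟩

end ChordalInfra
section SepLemmas

open SimpleGraph

variable {V : Type*} {G : SimpleGraph V}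

lemma sep_min_neighbor [DecidableEq V] {s S : Finset V} {a b x : V}
    (hsep : IsSep G s S a b)
    (hmin : ∀ S', IsSep G s S' a b → S.card ≤ S'.card)
    (hxS : x ∈ S) :
    ∃ u ∈ Comp G s S a, G.Adj x u := by
  by_contra hno
  push_neg at hno
  have hsep' : IsSep G s (S.erase x) a b := by
    refine ⟨(S.erase_subset x).trans hsep.1, fun h => hsep.2.1 (S.mem_of_mem_erase h),
      fun h => hsep.2.2.1 (S.mem_of_mem_erase h), ?_⟩
    rintro ⟨w, hw⟩
    set p := w.bypass with hp
    have hppath : p.IsPath := w.bypass_isPath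
    have hpsupp : ∀ z ∈ p.support, z ∈ (↑s : Set V) \ ↑(S.erase x) := fun z hz =>
      hw z (w.support_bypass_subset hz)
    by_cases hxp : x ∈ p.support
    · -- the vertex just before the first `x` on `p` is a neighbour of `x` in `Comp a`
      set t := p.takeUntil x hxp with ht
      have htpath : t.IsPath := hppath.takeUntil hxp
      have htne : t.length ≠ 0 := by
        intro h0
        have : a = x := SimpleGraph.Walk.eq_of_length_eq_zero h0
        exact hsep.2.1 (this ▸ hxS)
      set r := t.reverse with hr
      have hrlen : r.length = t.length := SimpleGraph.Walk.length_reverse t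
      obtain ⟨u, hu⟩ : ∃ u, u = r.getVert 1 := ⟨_, rfl⟩
      have hadjxu : G.Adj x u := by
        have h2 : G.Adj (r.getVert 0) (r.getVert (0+1)) := r.adj_getVert_succ (by omega)
        rwa [r.getVert_zero, ← hu] at h2
      have hut : u ∈ t.support := by
        rw [← List.mem_reverse, ← SimpleGraph.Walk.support_reverse]
        exact SimpleGraph.Walk.mem_support_iff_exists_getVert.mpr ⟨1, hu.symm, by rw [SimpleGraph.Walk.length_reverse]; omega⟩
      have hux : u ≠ x := hadjxu.ne'
      -- x is not in the support of t.takeUntil u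
      have hxnotin : x ∉ (t.takeUntil u hut).support := by
        intro hxin
        have hnodup := htpath.support_nodup
        rw [← t.take_spec hut, SimpleGraph.Walk.support_append, List.nodup_append] at hnodup
        have hxdrop : x ∈ (t.dropUntil u hut).support.tail := by
          have hxmem : x ∈ (t.dropUntil u hut).support := SimpleGraph.Walk.end_mem_support _
          rw [SimpleGraph.Walk.support_eq_cons] at hxmem
          rcases List.mem_cons.mp hxmem with h | h
          · exact absurd h.symm hux
          · exact h
        exact hnodup.2.2 x hxin x hxdrop rfl
      -- hence u ∈ Comp a
      have huA : u ∈ Comp G s S a := by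
        refine ⟨?_, ⟨t.takeUntil u hut, fun z hz => ?_⟩⟩
        · have h1 := hpsupp u (p.support_takeUntil_subset hxp hut)
          have hune : u ≠ x := hux
          exact ⟨h1.1, fun huS => h1.2 (Finset.mem_erase.mpr ⟨hune, huS⟩)⟩
        · have hz1 : z ∈ p.support :=
            p.support_takeUntil_subset hxp (t.support_takeUntil_subset hut hz)
          have h1 := hpsupp z hz1
          have hzx : z ≠ x := fun h => hxnotin (h ▸ hz)
          exact ⟨h1.1, fun hzS => h1.2 (Finset.mem_erase.mpr ⟨hzx, hzS⟩)⟩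
      exact hno u huA hadjxu
    · -- walk avoids x entirely, so S was not a separator
      refine hsep.2.2.2 ⟨p, fun z hz => ?_⟩
      have h1 := hpsupp z hz
      have hzx : z ≠ x := fun h => hxp (h ▸ hz)
      exact ⟨h1.1, fun hzS => h1.2 (Finset.mem_erase.mpr ⟨hzx, hzS⟩)⟩
  have := hmin _ hsep'
  have hcard : (S.erase x).card < S.card := Finset.card_erase_lt_of_mem hxS
  omega

end SepLemmas
section SepClique

open SimpleGraph

variable {V : Type*} {G : SimpleGraph V}

lemma min_side_props {x y : V} (hxy : x ≠ y) (hnadj : ¬G.Adj x y) (cA : Set V) (P : G.Walk x y)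
    (hQ : ∀ z ∈ P.support, z ∈ ({x, y} : Set V) ∪ cA)
    (hmin : ∀ w' : G.Walk x y, (∀ z ∈ w'.support, z ∈ ({x, y} : Set V) ∪ cA) →
      P.length ≤ w'.length) :
    P.IsPath ∧ 2 ≤ P.length ∧
      (∀ u v, u ∈ P.support → v ∈ P.support → G.Adj u v → s(u, v) ∈ P.edges) := by
  refine ⟨?_, ?_, ?_⟩
  · by_contra hnp
    obtain ⟨q, hql, hqs⟩ := P.exists_shorter_of_not_path hnp
    have := hmin q (fun z hz => hQ z (hqs z hz))
    omega
  · have h0 : P.length ≠ 0 := fun h => hxy (SimpleGraph.Walk.eq_of_length_eq_zero h)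
    have h1 : P.length ≠ 1 := fun h => hnadj (SimpleGraph.Walk.adj_of_length_eq_one h)
    omega
  · intro u v hu hv hadj
    by_contra he
    obtain ⟨q, hql, hqs⟩ := P.shortcut hu hv hadj he
    have := hmin q (fun z hz => hQ z (hqs z hz))
    omega

lemma sep_clique [DecidableEq V] {s S : Finset V} {a b : V}
    (hG : IsChordal G)
    (hsep : IsSep G s S a b)
    (hmin : ∀ S', IsSep G s S' a b → S.card ≤ S'.card) :
    ∀ x ∈ S, ∀ y ∈ S, x ≠ y → G.Adj x y := by
  intro x hxS y hyS hxy
  by_contra hnadj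
  have hminb : ∀ S', IsSep G s S' b a → S.card ≤ S'.card := fun S' h => hmin S' h.symm
  have hcand : ∀ (cA : Set V), (∀ x' ∈ S, ∃ u ∈ cA, G.Adj x' u) →
      (∀ u u', u ∈ cA → u' ∈ cA → ∃ w : G.Walk u u', ∀ z ∈ w.support, z ∈ cA) →
      ∃ w : G.Walk x y, ∀ z ∈ w.support, z ∈ ({x, y} : Set V) ∪ cA := by
    intro cA hnb hconn
    obtain ⟨u1, hu1, hxu1⟩ := hnb x hxS
    obtain ⟨u2, hu2, hyu2⟩ := hnb y hyS
    obtain ⟨wA, hwA⟩ := hconn u1 u2 hu1 hu2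
    refine ⟨SimpleGraph.Walk.cons hxu1 (wA.concat hyu2.symm), fun z hz => ?_⟩
    rw [SimpleGraph.Walk.support_cons, List.mem_cons] at hz
    rcases hz with rfl | hz
    · exact Or.inl (by simp)
    · rw [SimpleGraph.Walk.support_concat, List.mem_append, List.mem_singleton] at hz
      rcases hz with hz | rfl
      · exact Or.inr (hwA z hz)
      · exact Or.inl (by simp)
  have hsidea := hcand (Comp G s S a)
    (fun x' hx' => sep_min_neighbor hsep hmin hx')
    (fun u u' hu hu' => comp_connected hu hu')
  have hsideb := hcand (Comp G s S b)
    (fun x' hx' => sep_min_neighbor hsep.symm hminb hx')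
    (fun u u' hu hu' => comp_connected hu hu')
  obtain ⟨P1, hP1Q, hP1min⟩ := exists_minimal_walk _ hsidea
  obtain ⟨P2, hP2Q, hP2min⟩ := exists_minimal_walk _ hsideb
  obtain ⟨hP1path, hP1len, hP1chord⟩ := min_side_props hxy hnadj _ P1 hP1Q hP1min
  obtain ⟨hP2path, hP2len, hP2chord⟩ := min_side_props hxy hnadj _ P2 hP2Q hP2min
  -- basic membership facts
  have hxSnA : ∀ z, z ∈ S → z ∈ Comp G s S a → False := fun z hz hzA => (hzA.1.2 hz)
  have hxSnB : ∀ z, z ∈ S → z ∈ Comp G s S b → False := fun z hz hzB => (hzB.1.2 hz)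
  have hP1mem : ∀ z ∈ P1.support, z = x ∨ z = y ∨ z ∈ Comp G s S a := by
    intro z hz
    rcases hP1Q z hz with h | h
    · rcases h with h | h
      · exact Or.inl h
      · exact Or.inr (Or.inl h)
    · exact Or.inr (Or.inr h)
  have hP2mem : ∀ z ∈ P2.support, z = x ∨ z = y ∨ z ∈ Comp G s S b := by
    intro z hz
    rcases hP2Q z hz with h | h
    · rcases h with h | h
      · exact Or.inl h
      · exact Or.inr (Or.inl h)
    · exact Or.inr (Or.inr h)
  set C := P1.append P2.reverse with hC
  have hClen : C.length = P1.length + P2.length := by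
    rw [hC, SimpleGraph.Walk.length_append, SimpleGraph.Walk.length_reverse]
  have hCtrail : C.IsTrail := by
    rw [SimpleGraph.Walk.isTrail_def, hC, SimpleGraph.Walk.edges_append,
      SimpleGraph.Walk.edges_reverse]
    refine List.Nodup.append hP1path.isTrail.edges_nodup
      (List.nodup_reverse.mpr hP2path.isTrail.edges_nodup) ?_
    intro e he1 he2
    rw [List.mem_reverse] at he2
    induction e using Sym2.ind with
    | _ c d =>
      have hcd : G.Adj c d := P1.adj_of_mem_edges he1
      have hc1 : c ∈ P1.support := P1.fst_mem_support_of_mem_edges he1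
      have hd1 : d ∈ P1.support := P1.snd_mem_support_of_mem_edges he1
      have hc2 : c ∈ P2.support := P2.fst_mem_support_of_mem_edges he2
      have hd2 : d ∈ P2.support := P2.snd_mem_support_of_mem_edges he2
      have hcxy : c = x ∨ c = y := by
        rcases hP1mem c hc1 with h | h | h
        · exact Or.inl h
        · exact Or.inr h
        · rcases hP2mem c hc2 with h' | h' | h'
          · exact Or.inl h'
          · exact Or.inr h'
          · exact (comp_disjoint hsep h h').elim
      have hdxy : d = x ∨ d = y := by
        rcases hP1mem d hd1 with h | h | h
        · exact Or.inl h
        · exact Or.inr h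
        · rcases hP2mem d hd2 with h' | h' | h'
          · exact Or.inl h'
          · exact Or.inr h'
          · exact (comp_disjoint hsep h h').elim
      rcases hcxy with rfl | rfl <;> rcases hdxy with rfl | rfl
      · exact hcd.ne rfl
      · exact hnadj hcd
      · exact hnadj hcd.symm
      · exact hcd.ne rfl
  have hCne : C ≠ SimpleGraph.Walk.nil := by
    intro h
    have := congrArg SimpleGraph.Walk.length h
    rw [SimpleGraph.Walk.length_nil] at this
    omega
  have hP1tail_nodup : P1.support.tail.Nodup := by
    have h := hP1path.support_nodup
    rw [P1.support_eq_cons] at h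
    exact (List.nodup_cons.mp h).2
  have hxnotP1tail : x ∉ P1.support.tail := by
    have h := hP1path.support_nodup
    rw [P1.support_eq_cons] at h
    exact (List.nodup_cons.mp h).1
  have hP2r_tail_nodup : P2.reverse.support.tail.Nodup := by
    have h := hP2path.reverse.support_nodup
    rw [P2.reverse.support_eq_cons] at h
    exact (List.nodup_cons.mp h).2
  have hynotP2rtail : y ∉ P2.reverse.support.tail := by
    have h := hP2path.reverse.support_nodup
    rw [P2.reverse.support_eq_cons] at h
    exact (List.nodup_cons.mp h).1
  have hCcycle : C.IsCycle := by
    refine ⟨⟨hCtrail, hCne⟩, ?_⟩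
    rw [hC, SimpleGraph.Walk.tail_support_append]
    refine List.Nodup.append hP1tail_nodup hP2r_tail_nodup ?_
    intro z hz1 hz2
    have hz1s : z ∈ P1.support := List.mem_of_mem_tail hz1
    have hz2s : z ∈ P2.support := by
      have := List.mem_of_mem_tail hz2
      rwa [SimpleGraph.Walk.support_reverse, List.mem_reverse] at this
    have hzx : z ≠ x := fun h => hxnotP1tail (h ▸ hz1)
    have hzy : z ≠ y := fun h => hynotP2rtail (h ▸ hz2)
    rcases hP1mem z hz1s with h | h | h
    · exact hzx h
    · exact hzy h
    · rcases hP2mem z hz2s with h' | h' | h'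
      · exact hzx h'
      · exact hzy h'
      · exact comp_disjoint hsep h h'
  obtain ⟨u, v, hu, hv, huv, he⟩ := hG x C hCcycle (by omega)
  have he1 : s(u, v) ∉ P1.edges := fun h => he (by
    rw [hC, SimpleGraph.Walk.edges_append]
    exact List.mem_append_left _ h)
  have he2 : s(u, v) ∉ P2.edges := fun h => he (by
    rw [hC, SimpleGraph.Walk.edges_append, SimpleGraph.Walk.edges_reverse]
    exact List.mem_append_right _ (List.mem_reverse.mpr h))
  have hu' : u ∈ P1.support ∨ u ∈ P2.support := by
    rcases (SimpleGraph.Walk.mem_support_append_iff _ _).mp (hC ▸ hu) with h | h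
    · exact Or.inl h
    · right; rwa [SimpleGraph.Walk.support_reverse, List.mem_reverse] at h
  have hv' : v ∈ P1.support ∨ v ∈ P2.support := by
    rcases (SimpleGraph.Walk.mem_support_append_iff _ _).mp (hC ▸ hv) with h | h
    · exact Or.inl h
    · right; rwa [SimpleGraph.Walk.support_reverse, List.mem_reverse] at h
  have hcross : ∀ u' v', u' ∈ Comp G s S a → v' ∈ Comp G s S b → G.Adj u' v' → False :=
    fun u' v' hA hB hadj => cross_not_adj hsep hA hB hadj
  have honlyA : ∀ z, z ∈ P1.support → z ∉ P2.support → z ∈ Comp G s S a := by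
    intro z hz1 hz2
    rcases hP1mem z hz1 with h | h | h
    · exact absurd (h ▸ P2.start_mem_support) hz2
    · exact absurd (h ▸ P2.end_mem_support) hz2
    · exact h
  have honlyB : ∀ z, z ∈ P2.support → z ∉ P1.support → z ∈ Comp G s S b := by
    intro z hz2 hz1
    rcases hP2mem z hz2 with h | h | h
    · exact absurd (h ▸ P1.start_mem_support) hz1
    · exact absurd (h ▸ P1.end_mem_support) hz1
    · exact h
  by_cases h1 : u ∈ P1.support ∧ v ∈ P1.support
  · exact he1 (hP1chord u v h1.1 h1.2 huv)
  by_cases h2 : u ∈ P2.support ∧ v ∈ P2.support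
  · exact he2 (hP2chord u v h2.1 h2.2 huv)
  rcases hu' with hu1 | hu2
  · have hv2 : v ∈ P2.support := by
      rcases hv' with h | h
      · exact absurd ⟨hu1, h⟩ h1
      · exact h
    have hunot2 : u ∉ P2.support := fun h => h2 ⟨h, hv2⟩
    have hvnot1 : v ∉ P1.support := fun h => h1 ⟨hu1, h⟩
    exact hcross u v (honlyA u hu1 hunot2) (honlyB v hv2 hvnot1) huv
  · have hv1 : v ∈ P1.support := by
      rcases hv' with h | h
      · exact h
      · exact absurd ⟨hu2, h⟩ h2
    have hunot1 : u ∉ P1.support := fun h => h1 ⟨h, hv1⟩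
    have hvnot2 : v ∉ P2.support := fun h => h2 ⟨hu2, h⟩
    exact hcross v u (honlyA v hv1 hvnot2) (honlyB u hu2 hunot1) huv.symm

end SepClique
section Simplicial

open SimpleGraph

variable {V : Type*} {G : SimpleGraph V}

def SimpPair (G : SimpleGraph V) (s : Finset V) : Prop :=
  ∀ a ∈ s, ∀ b ∈ s, a ≠ b → ¬G.Adj a b →
    ∃ x ∈ s, ∃ y ∈ s, x ≠ y ∧ ¬G.Adj x y ∧
      G.IsClique {u | u ∈ s ∧ G.Adj x u} ∧ G.IsClique {u | u ∈ s ∧ G.Adj y u}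

lemma aux_side [DecidableEq V] {s S : Finset V} {a b : V}
    (IH : ∀ t, t ⊂ s → SimpPair G t)
    (has : a ∈ s) (hbs : b ∈ s)
    (hsep : IsSep G s S a b)
    (hmin : ∀ S', IsSep G s S' a b → S.card ≤ S'.card)
    (hScl : ∀ x ∈ S, ∀ y ∈ S, x ≠ y → G.Adj x y) :
    ∃ x, x ∈ Comp G s S a ∧ G.IsClique {u | u ∈ s ∧ G.Adj x u} := by
  classical
  set A := Comp G s S a with hA
  set A' : Finset V := s.filter (fun z => z ∈ A) with hA'
  have hAA' : ∀ z, z ∈ A' ↔ z ∈ A := by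
    intro z
    rw [hA', Finset.mem_filter]
    exact ⟨fun h => h.2, fun h => ⟨h.1.1, h⟩⟩
  set t := A' ∪ S with htdef
  have htsub : t ⊆ s := by
    rw [htdef]; exact Finset.union_subset (Finset.filter_subset _ _) hsep.1
  have hts : t ⊂ s := by
    rw [Finset.ssubset_iff_of_subset htsub]
    refine ⟨b, hbs, ?_⟩
    rw [htdef, Finset.mem_union]
    rintro (h | h)
    · exact comp_disjoint hsep ((hAA' b).mp h) (mem_comp_self hbs hsep.2.2.1)
    · exact hsep.2.2.1 h
  have hclosure : ∀ x' ∈ A, ∀ u ∈ s, G.Adj x' u → u ∈ t := by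
    intro x' hx' u hu hadj
    rw [htdef, Finset.mem_union]
    by_cases huS : u ∈ S
    · exact Or.inr huS
    · exact Or.inl ((hAA' u).mpr (comp_closed hx' hu huS hadj))
  have hlift : ∀ x' ∈ A, G.IsClique {u | u ∈ t ∧ G.Adj x' u} →
      G.IsClique {u | u ∈ s ∧ G.Adj x' u} := by
    intro x' hx' hcl
    refine SimpleGraph.IsClique.subset ?_ hcl
    intro u hu
    exact ⟨hclosure x' hx' u hu.1 hu.2, hu.2⟩
  by_cases hcl : ∀ c ∈ t, ∀ d ∈ t, c ≠ d → G.Adj c d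
  · have haA : a ∈ A := mem_comp_self has hsep.2.1
    refine ⟨a, haA, hlift a haA ?_⟩
    intro c hc d hd hcd
    exact hcl c hc.1 d hd.1 hcd
  · push_neg at hcl
    obtain ⟨c, hc, d, hd, hcd, hncd⟩ := hcl
    obtain ⟨x, hxt, y, hyt, hxy, hnxy, hcx, hcy⟩ := IH t hts c hc d hd hcd hncd
    by_cases hxA : x ∈ A'
    · exact ⟨x, (hAA' x).mp hxA, hlift x ((hAA' x).mp hxA) hcx⟩
    · have hxSS : x ∈ S := by
        rcases Finset.mem_union.mp (htdef ▸ hxt) with h | h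
        · exact absurd h hxA
        · exact h
      have hyA : y ∈ A' := by
        rcases Finset.mem_union.mp (htdef ▸ hyt) with h | h
        · exact h
        · exact absurd (hScl x hxSS y h hxy) hnxy
      exact ⟨y, (hAA' y).mp hyA, hlift y ((hAA' y).mp hyA) hcy⟩

lemma simp_pair [DecidableEq V] (hG : IsChordal G) : ∀ s : Finset V, SimpPair G s := by
  intro s
  induction s using Finset.strongInduction with
  | _ s IH =>
    intro a has b hbs hab hnadj
    classical
    have hsep0 : IsSep G s (s \ {a, b}) a b := by
      refine ⟨Finset.sdiff_subset, by simp [has], by simp [hbs], ?_⟩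
      rintro ⟨w, hw⟩
      have hlen : w.length ≠ 0 := fun h => hab (SimpleGraph.Walk.eq_of_length_eq_zero h)
      obtain ⟨u, hu⟩ : ∃ u, u = w.getVert 1 := ⟨_, rfl⟩
      have hus : u ∈ w.support :=
        SimpleGraph.Walk.mem_support_iff_exists_getVert.mpr ⟨1, hu.symm, by omega⟩
      have hadj : G.Adj a u := by
        have h2 : G.Adj (w.getVert 0) (w.getVert (0+1)) := w.adj_getVert_succ (by omega)
        rwa [w.getVert_zero, ← hu] at h2
      have h3 := hw u hus
      have h4 : u ∈ ({a, b} : Finset V) := by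
        by_contra h5
        exact h3.2 (Finset.mem_coe.mpr (Finset.mem_sdiff.mpr ⟨Finset.mem_coe.mp h3.1, h5⟩))
      rcases Finset.mem_insert.mp h4 with rfl | h6
      · exact hadj.ne rfl
      · rw [Finset.mem_singleton] at h6
        exact hnadj (h6 ▸ hadj)
    have hex : ∃ n, ∃ S : Finset V, IsSep G s S a b ∧ S.card = n := ⟨_, _, hsep0, rfl⟩
    obtain ⟨S, hsep, hScard⟩ := Nat.find_spec hex
    have hmin : ∀ S', IsSep G s S' a b → S.card ≤ S'.card := fun S' h => by
      rw [hScard]; exact Nat.find_min' hex ⟨S', h, rfl⟩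
    have hScl := sep_clique hG hsep hmin
    obtain ⟨x, hxA, hxcl⟩ := aux_side IH has hbs hsep hmin hScl
    have hminb : ∀ S', IsSep G s S' b a → S.card ≤ S'.card := fun S' h => hmin S' h.symm
    obtain ⟨y, hyB, hycl⟩ := aux_side IH hbs has hsep.symm hminb hScl
    refine ⟨x, ?_, y, ?_, ?_, ?_, hxcl, hycl⟩
    · exact Finset.mem_coe.mp hxA.1.1
    · exact Finset.mem_coe.mp hyB.1.1
    · exact fun h => comp_disjoint hsep (h ▸ hxA) hyB
    · exact cross_not_adj hsep hxA hyB

lemma exists_simplicial [DecidableEq V] (hG : IsChordal G) (s : Finset V) (hs : s.Nonempty) :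
    ∃ v ∈ s, G.IsClique {u | u ∈ s ∧ G.Adj v u} := by
  by_cases hcl : ∀ c ∈ s, ∀ d ∈ s, c ≠ d → G.Adj c d
  · obtain ⟨v, hv⟩ := hs
    refine ⟨v, hv, ?_⟩
    intro c hc d hd hcd
    exact hcl c hc.1 d hd.1 hcd
  · push_neg at hcl
    obtain ⟨c, hc, d, hd, hcd, hncd⟩ := hcl
    obtain ⟨x, hx, _, _, _, _, hcx, _⟩ := simp_pair hG s c hc d hd hcd hncd
    exact ⟨x, hx, hcx⟩

end Simplicial
section Assemble

open SimpleGraph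

variable {V : Type*} {G : SimpleGraph V}

lemma exists_elim_list [DecidableEq V] (hG : IsChordal G) :
    ∀ (n : ℕ) (s : Finset V), s.card = n → ∃ l : List V, l.Nodup ∧ l.toFinset = s ∧
      ∀ (pre : List V) (v : V) (post : List V), l = pre ++ v :: post →
        G.IsClique {u | G.Adj v u ∧ u ∈ post} := by
  intro n
  induction n with
  | zero =>
    intro s hs
    refine ⟨[], by simp, by simpa using (Finset.card_eq_zero.mp hs).symm, ?_⟩
    intro pre v post h
    exact absurd h (by simp)
  | succ n IH =>
    intro s hs
    obtain ⟨v, hv, hvcl⟩ := exists_simplicial hG s (by rw [← Finset.card_pos, hs]; omega)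
    obtain ⟨l', hnd, htf, hprop⟩ := IH (s.erase v) (by rw [Finset.card_erase_of_mem hv, hs]; omega)
    refine ⟨v :: l', ?_, ?_, ?_⟩
    · rw [List.nodup_cons]
      exact ⟨fun h => (Finset.mem_erase.mp (htf ▸ List.mem_toFinset.mpr h)).1 rfl, hnd⟩
    · rw [List.toFinset_cons, htf, Finset.insert_erase hv]
    · intro pre u post h
      cases pre with
      | nil =>
        rw [List.nil_append, List.cons_eq_cons] at h
        obtain ⟨rfl, rfl⟩ := h
        refine SimpleGraph.IsClique.subset ?_ hvcl
        intro z hz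
        have hz2 : z ∈ s.erase v := htf ▸ List.mem_toFinset.mpr hz.2
        exact ⟨(Finset.erase_subset _ _) hz2, hz.1⟩
      | cons w pre' =>
        have h2 : l' = pre' ++ u :: post := by
          have h3 := congrArg List.tail h
          simpa using h3
        exact hprop pre' u post h2

lemma peo_of_chordal [Fintype V] (hG : IsChordal G) :
    ∃ σ : Fin (Fintype.card V) ≃ V, IsPEO G σ := by
  classical
  obtain ⟨l, hnd, htf, hprop⟩ := exists_elim_list hG Finset.univ.card Finset.univ rfl
  have hlen : l.length = Fintype.card V := by
    rw [← Finset.card_univ, ← htf, List.toFinset_card_of_nodup hnd]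
  have hmem : ∀ v : V, v ∈ l := fun v => by
    rw [← List.mem_toFinset, htf]; exact Finset.mem_univ v
  let f : Fin (Fintype.card V) → V := fun i => l.get ⟨i, by rw [hlen]; exact i.2⟩
  have hinj : Function.Injective f := by
    intro i j h
    have h2 := List.nodup_iff_injective_get.mp hnd h
    exact Fin.ext (by simpa using congrArg Fin.val h2)
  have hsurj : Function.Surjective f := by
    intro v
    obtain ⟨k, hk⟩ := List.get_of_mem (hmem v)
    refine ⟨⟨k, by rw [← hlen]; exact k.2⟩, ?_⟩
    show l.get _ = v
    rw [← hk]
  refine ⟨Equiv.ofBijective f ⟨hinj, hsurj⟩, ?_⟩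
  intro i
  have hiv : (i : ℕ) < l.length := by rw [hlen]; exact i.2
  have hsplit : l = l.take (i : ℕ) ++ l.get ⟨(i : ℕ), hiv⟩ :: l.drop ((i : ℕ)+1) := by
    conv_lhs => rw [← List.take_append_drop (i : ℕ) l]
    congr 1
    rw [List.drop_eq_getElem_cons hiv]
    rfl
  refine SimpleGraph.IsClique.subset ?_ (hprop _ _ _ hsplit)
  intro z hz
  obtain ⟨hadj, j, hij, hjz⟩ := hz
  refine ⟨hadj, ?_⟩
  have hjl : (j : ℕ) < l.length := by rw [hlen]; exact j.2
  have hzj : z = l[(j : ℕ)] := by rw [← hjz]; rfl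
  have hk : (j : ℕ) = (i : ℕ) + 1 + ((j : ℕ) - (i : ℕ) - 1) := by
    have : (i : ℕ) < (j : ℕ) := hij
    omega
  rw [hzj]
  rw [List.mem_iff_getElem]
  refine ⟨(j : ℕ) - (i : ℕ) - 1, ?_, ?_⟩
  · rw [List.length_drop]
    have : (i : ℕ) < (j : ℕ) := hij
    omega
  · rw [List.getElem_drop]
    congr 1
    omega

end Assemble

/-- A finite graph admits a perfect elimination order of its vertices if and
only if it is chordal. -/
theorem peo_iff_chordal {V : Type*} [Fintype V] (G : SimpleGraph V) :
    (∃ σ : Fin (Fintype.card V) ≃ V, IsPEO G σ) ↔ IsChordal G := by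
  constructor
  · rintro ⟨σ, hσ⟩
    exact isChordal_of_peo σ hσ
  · intro hG
    exact peo_of_chordal hG
end

section
/- For a decomposable (chordal) Markov random field with positive joint density satisfying the global Markov property, the joint density factorizes as the product of the marginal densities over the cliques divided by the product of the marginal densities over the separators (with multiplicity), where the cliques are taken along a perfect sequence. -/
open SimpleGraph MeasureTheory

open Classical in
/-- The marginal density of `p` on the coordinates in `A`, obtained by
integrating out the coordinates outside `A` (Lebesgue product measure). -/
noncomputable def marginal {V : Type*} [Fintype V] (p : (V → ℝ) → ℝ)
    (A : Set V) (x : V → ℝ) : ℝ :=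
  ∫ y : ↥(Aᶜ) → ℝ, p (fun v => if h : v ∈ A then x v else y ⟨v, h⟩)

/-- `C` separates `A` and `B` in `G`: every walk from `A` to `B` meets `C`. -/
def Separates {V : Type*} (G : SimpleGraph V) (A B C : Set V) : Prop :=
  ∀ a ∈ A, ∀ b ∈ B, ∀ w : G.Walk a b, ∃ c ∈ C, c ∈ w.support

/-- The global Markov property for the density `p` with respect to `G`. -/
def GlobalMarkov {V : Type*} [Fintype V] (G : SimpleGraph V)
    (p : (V → ℝ) → ℝ) : Prop :=
  ∀ A B C : Set V, Disjoint A B → Separates G A B C →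
    ∀ x, marginal p (A ∪ B ∪ C) x * marginal p C x
          = marginal p (A ∪ C) x * marginal p (B ∪ C) x

/-! ### Auxiliary lemmas -/

lemma marginal_univ_eq {V : Type*} [Fintype V] (p : (V → ℝ) → ℝ) (x : V → ℝ) :
    marginal p Set.univ x = p x := by
  rw [marginal]
  simp only [Set.mem_univ, dite_true]
  rw [integral_const]
  simp [volume_pi, Measure.pi_univ, Measure.real]

lemma memH {V : Type*} {m : ℕ} (C : Fin m → Set V) (i : Fin m) (x : V) :
    x ∈ (⋃ k' < i, C k') ↔ ∃ k', k' < i ∧ x ∈ C k' := by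
  simp [Set.mem_iUnion]

lemma edge_clique {V : Type*} [Fintype V] {m : ℕ} (G : SimpleGraph V) (C : Fin m → Set V)
    (hall : ∀ s : Set V, IsMaxClique G s → ∃ i, C i = s)
    {u w : V} (h : G.Adj u w) : ∃ k, u ∈ C k ∧ w ∈ C k := by
  classical
  set T : Set (Set V) := {t | G.IsClique t ∧ u ∈ t ∧ w ∈ t} with hT
  have hTfin : T.Finite := Set.toFinite T
  have hTne : T.Nonempty := by
    refine ⟨{u, w}, ?_, by simp, by simp⟩
    rw [SimpleGraph.isClique_pair]
    exact fun _ => h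
  obtain ⟨t₀, ht₀, hmax⟩ := Set.Finite.exists_maximalFor Set.ncard T hTfin hTne
  have hmc : IsMaxClique G t₀ := by
    refine ⟨ht₀.1, fun t ht hsub => ?_⟩
    have htT : t ∈ T := ⟨ht, hsub ht₀.2.1, hsub ht₀.2.2⟩
    have hle : t₀.ncard ≤ t.ncard := Set.ncard_le_ncard hsub (Set.toFinite t)
    have := hmax (j := t) htT hle
    exact (Set.eq_of_subset_of_ncard_le hsub this.ge (Set.toFinite t)).symm
  obtain ⟨i, hi⟩ := hall t₀ hmc
  exact ⟨i, hi ▸ ht₀.2.1, hi ▸ ht₀.2.2⟩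

lemma core_sep {V : Type*} {m : ℕ} (C : Fin m → Set V)
    (hrip : ∀ i : Fin m, 0 < (i : ℕ) →
      ∃ j, j < i ∧ (C i ∩ ⋃ k < i, C k) ⊆ C j)
    (j : Fin m) (hj : 0 < (j : ℕ)) :
    ∀ K n : ℕ, ∀ v : ℕ → V, ∀ k : ℕ → Fin m,
      (∀ s, s < n → (k s : ℕ) ≤ K) →
      (∀ s, s < n → v s ∈ C (k s) ∧ v (s+1) ∈ C (k s)) →
      v 0 ∈ (⋃ k' < j, C k') → v n ∈ C j →
      ∃ t, t ≤ n ∧ v t ∈ C j ∧ v t ∈ (⋃ k' < j, C k') := by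
  intro K
  induction K using Nat.strong_induction_on with
  | _ K ihK =>
  intro n
  induction n using Nat.strong_induction_on with
  | _ n ihn =>
  intro v k hbd hedge h0 hn
  classical
  rcases Nat.eq_zero_or_pos n with hn0 | hn0
  · subst hn0; exact ⟨0, le_rfl, hn, h0⟩
  by_cases hH : ∃ t, 0 < t ∧ t ≤ n ∧ v t ∈ (⋃ k' < j, C k')
  · obtain ⟨t, ht0, htn, htH⟩ := hH
    obtain ⟨t', ht', h1, h2⟩ := ihn (n - t) (by omega) (fun s => v (t + s)) (fun s => k (t + s))
      (fun s hs => hbd (t+s) (by omega))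
      (fun s hs => by
        have h := hedge (t+s) (by omega)
        refine ⟨h.1, ?_⟩
        show v (t + (s+1)) ∈ _
        rw [show t + (s+1) = (t+s)+1 by omega]; exact h.2)
      htH (by show v (t + (n - t)) ∈ C j; rw [show t + (n - t) = n by omega]; exact hn)
    exact ⟨t + t', by omega, h1, h2⟩
  by_cases hC : ∃ t, t < n ∧ v t ∈ C j
  · obtain ⟨t, htn, htC⟩ := hC
    obtain ⟨t', ht', h1, h2⟩ := ihn t htn v k (fun s hs => hbd s (by omega))
      (fun s hs => hedge s (by omega)) h0 htC
    exact ⟨t', by omega, h1, h2⟩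
  push_neg at hH hC
  have hgt : ∀ s, s < n → j < k s := by
    intro s hs
    rcases lt_trichotomy (k s) j with hlt | heq | hgt
    · exact absurd ((memH C j _).mpr ⟨k s, hlt, (hedge s hs).2⟩) (hH (s+1) (by omega) (by omega))
    · exact absurd (heq ▸ (hedge s hs).1) (hC s hs)
    · exact hgt
  have hK2 : 2 ≤ K := by
    have h1 : (j : ℕ) < (k 0 : ℕ) := hgt 0 hn0
    have h2 := hbd 0 hn0
    omega
  by_cases hK : ∃ s, s < n ∧ (k s : ℕ) = K
  · obtain ⟨s₀, hs₀n, hs₀K⟩ := hK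
    set κ := k s₀ with hκ
    have hjκ : (j : ℕ) < (κ : ℕ) := hgt s₀ hs₀n
    have hκpos : 0 < (κ : ℕ) := by omega
    have hex : ∃ t, v t ∈ C κ := ⟨s₀, (hedge s₀ hs₀n).1⟩
    set l := Nat.find hex with hldef
    have hl : v l ∈ C κ := Nat.find_spec hex
    have hlmin : ∀ t, t < l → v t ∉ C κ := fun t ht => Nat.find_min hex ht
    have hls₀ : l ≤ s₀ := Nat.find_le (hedge s₀ hs₀n).1
    set r := Nat.findGreatest (fun t => v t ∈ C κ) n with hrdef
    have hrs : s₀ + 1 ≤ r := Nat.le_findGreatest (by omega) (hedge s₀ hs₀n).2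
    have hrn : r ≤ n := Nat.findGreatest_le n
    have hr : v r ∈ C κ := Nat.findGreatest_of_ne_zero hrdef.symm (by omega)
    have hrmax : ∀ t, r < t → t ≤ n → v t ∉ C κ := fun t h1 h2 =>
      Nat.findGreatest_is_greatest h1 h2
    have hlr : l < r := by omega
    have hlH : v l ∈ C κ ∩ ⋃ k' < κ, C k' := by
      refine ⟨hl, (memH C κ _).mpr ?_⟩
      rcases Nat.eq_zero_or_pos l with h0l | h0l
      · obtain ⟨k', hk'j, hmem⟩ := (memH C j _).mp h0
        refine ⟨k', ?_, by rw [h0l]; exact hmem⟩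
        rw [Fin.lt_def] at hk'j ⊢; omega
      · have hl1n : l - 1 < n := by omega
        have hedge' := hedge (l-1) hl1n
        have hne : k (l-1) ≠ κ := fun he => hlmin (l-1) (by omega) (he ▸ hedge'.1)
        have hlt : k (l-1) < κ := by
          have hb := hbd (l-1) hl1n
          have hnev : (k (l-1) : ℕ) ≠ (κ : ℕ) := fun hh => hne (Fin.ext hh)
          rw [Fin.lt_def]; omega
        refine ⟨k (l-1), hlt, ?_⟩
        have h2 := hedge'.2; rwa [show l - 1 + 1 = l by omega] at h2
    have hrH : v r ∈ C κ ∩ ⋃ k' < κ, C k' := by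
      refine ⟨hr, (memH C κ _).mpr ?_⟩
      rcases eq_or_lt_of_le hrn with hrn' | hrn'
      · exact ⟨j, by rw [Fin.lt_def]; exact hjκ, by rw [hrn']; exact hn⟩
      · have hedge' := hedge r hrn'
        have hne : k r ≠ κ := fun he => hrmax (r+1) (by omega) (by omega) (he ▸ hedge'.2)
        have hlt : k r < κ := by
          have hb := hbd r hrn'
          have hnev : (k r : ℕ) ≠ (κ : ℕ) := fun hh => hne (Fin.ext hh)
          rw [Fin.lt_def]; omega
        exact ⟨k r, hlt, hedge'.1⟩
    obtain ⟨ρ, hρκ, hρ⟩ := hrip κ hκpos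
    have hvlρ : v l ∈ C ρ := hρ hlH
    have hvrρ : v r ∈ C ρ := hρ hrH
    have hρval : (ρ : ℕ) < (κ : ℕ) := hρκ
    set d := r - l - 1 with hddef
    set n' := n - r + l + 1 with hn'def
    set v' : ℕ → V := fun t => if t ≤ l then v t else v (t + d) with hv'
    set k' : ℕ → Fin m := fun t => if t < l then k t else if t = l then ρ else k (t + d) with hk'
    have hKnotlt : ∀ s, s < l → (k s : ℕ) ≠ K := by
      intro s hs hval
      have he : k s = κ := Fin.ext (by omega)
      exact hlmin s hs (he ▸ (hedge s (by omega)).1)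
    have hKnotgt : ∀ s, r ≤ s → s < n → (k s : ℕ) ≠ K := by
      intro s hs1 hs2 hval
      have hks : k s = κ := Fin.ext (by omega)
      exact hrmax (s+1) (by omega) (by omega) (hks ▸ (hedge s hs2).2)
    have key : ∀ s, s < n' → ((k' s : ℕ) ≤ K - 1) ∧ v' s ∈ C (k' s) ∧ v' (s+1) ∈ C (k' s) := by
      intro s hs
      rcases lt_trichotomy s l with hsl | hsl | hsl
      · have hsn : s < n := by omega
        have h1 : k' s = k s := if_pos hsl
        have h2 : v' s = v s := if_pos (by omega : s ≤ l)
        have h3 : v' (s+1) = v (s+1) := if_pos (by omega : s + 1 ≤ l)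
        refine ⟨?_, ?_, ?_⟩
        · rw [h1]; have hb := hbd s hsn; have hne := hKnotlt s hsl; omega
        · rw [h1, h2]; exact (hedge s hsn).1
        · rw [h1, h3]; exact (hedge s hsn).2
      · have h1 : k' s = ρ := (if_neg (by omega : ¬ s < l)).trans (if_pos hsl)
        have h2 : v' s = v s := if_pos (by omega : s ≤ l)
        have h3 : v' (s+1) = v r := by
          have e : v' (s+1) = v (s + 1 + d) := if_neg (by omega : ¬ s + 1 ≤ l)
          rw [e]; congr 1; omega
        refine ⟨by rw [h1]; omega, ?_, ?_⟩
        · rw [h1, h2, hsl]; exact hvlρ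
        · rw [h1, h3]; exact hvrρ
      · have hold : s + d < n := by omega
        have holdr : r ≤ s + d := by omega
        have h1 : k' s = k (s + d) :=
          (if_neg (by omega : ¬ s < l)).trans (if_neg (by omega : ¬ s = l))
        have h2 : v' s = v (s + d) := if_neg (by omega : ¬ s ≤ l)
        have h3 : v' (s+1) = v (s + 1 + d) := if_neg (by omega : ¬ s + 1 ≤ l)
        refine ⟨?_, ?_, ?_⟩
        · rw [h1]; have hb := hbd (s+d) hold; have hne := hKnotgt (s+d) holdr hold; omega
        · rw [h1, h2]; exact (hedge (s+d) hold).1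
        · rw [h1, h3, show s + 1 + d = (s + d) + 1 by omega]; exact (hedge (s+d) hold).2
    have hv'0 : v' 0 = v 0 := if_pos (Nat.zero_le l)
    have hv'n : v' n' = v n := by
      have e : v' n' = v (n' + d) := if_neg (by omega : ¬ n' ≤ l)
      rw [e]; congr 1; omega
    obtain ⟨t', ht'n', h1, h2⟩ := ihK (K-1) (by omega) n' v' k'
      (fun s hs => (key s hs).1) (fun s hs => ⟨(key s hs).2.1, (key s hs).2.2⟩)
      (by rw [hv'0]; exact h0) (by rw [hv'n]; exact hn)
    by_cases hc : t' ≤ l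
    · have hvt : v' t' = v t' := if_pos hc
      rw [hvt] at h1 h2
      exact ⟨t', by omega, h1, h2⟩
    · have hvt : v' t' = v (t' + d) := if_neg hc
      rw [hvt] at h1 h2
      exact ⟨t' + d, by omega, h1, h2⟩
  · push_neg at hK
    exact ihK (K-1) (by omega) n v k
      (fun s hs => by have h1 := hbd s hs; have h2 := hK s hs; omega) hedge h0 hn

lemma separ {V : Type*} [Fintype V] {m : ℕ} (G : SimpleGraph V) (C : Fin m → Set V)
    (hall : ∀ s : Set V, IsMaxClique G s → ∃ i, C i = s)
    (hrip : ∀ i : Fin m, 0 < (i : ℕ) →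
      ∃ j, j < i ∧ (C i ∩ ⋃ k < i, C k) ⊆ C j)
    (j : Fin m) (hj : 0 < (j : ℕ)) :
    Separates G ((⋃ k' < j, C k') \ (C j ∩ ⋃ k' < j, C k'))
      (C j \ (C j ∩ ⋃ k' < j, C k')) (C j ∩ ⋃ k' < j, C k') := by
  classical
  intro a ha b hb w
  set L := w.support with hL
  have hLlen : L.length = w.length + 1 := w.length_support
  set n := w.length with hn
  set v : ℕ → V := fun t => L.getD t a with hv
  have hLne : L ≠ [] := by
    intro h; rw [h] at hLlen; simp at hLlen
  have hget : ∀ t (ht : t < n + 1), v t = L.get ⟨t, by rw [hLlen]; omega⟩ := by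
    intro t ht
    show L.getD t a = _
    rw [List.getD_eq_getElem?_getD, List.getElem?_eq_getElem (by rw [hLlen]; omega)]; rfl
  have hadj : ∀ s, s < n → G.Adj (v s) (v (s+1)) := by
    intro s hs
    have hchain := w.isChain_adj_support
    rw [List.isChain_iff_getElem] at hchain
    have := hchain s (by rw [hLlen]; omega)
    rw [hget s (by omega), hget (s+1) (by omega)]
    exact this
  have hk : ∀ s, ∃ kk : Fin m, s < n → v s ∈ C kk ∧ v (s+1) ∈ C kk := by
    intro s
    by_cases hs : s < n
    · obtain ⟨kk, h1, h2⟩ := edge_clique G C hall (hadj s hs)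
      exact ⟨kk, fun _ => ⟨h1, h2⟩⟩
    · exact ⟨j, fun h => absurd h hs⟩
  choose k hkspec using hk
  have hcons : L = a :: w.support.tail := w.support_eq_cons
  have hv0 : v 0 = a := by
    show L.getD 0 a = a
    rw [hcons]
    rfl
  have hvn : v n = b := by
    show L.getD n a = b
    rw [List.getD_eq_getElem L a (by rw [hLlen]; omega)]
    have h2 := w.getLast_support
    rw [List.getLast_eq_getElem] at h2
    convert h2 using 2
    rw [← hL, hLlen]
    omega
  obtain ⟨t, htn, h1, h2⟩ := core_sep C hrip j hj m n v k
    (fun s _ => (k s).isLt.le)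
    (fun s hs => hkspec s hs)
    (by rw [hv0]; exact ha.1) (by rw [hvn]; exact hb.1)
  refine ⟨v t, ⟨h1, h2⟩, ?_⟩
  rw [hget t (by omega)]
  exact List.get_mem L ⟨t, by rw [hLlen]; omega⟩

def Dset {V : Type*} {m : ℕ} (C : Fin m → Set V) (n : ℕ) : Set V :=
  ⋃ k : Fin m, ⋃ (_ : (k : ℕ) ≤ n), C k

lemma mem_Dset {V : Type*} {m : ℕ} (C : Fin m → Set V) (n : ℕ) (y : V) :
    y ∈ Dset C n ↔ ∃ k : Fin m, (k : ℕ) ≤ n ∧ y ∈ C k := by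
  simp [Dset]

/-- For a decomposable (chordal) Markov random field with positive density
satisfying the global Markov property, the joint density factorizes as the
product of the clique marginals divided by the product of the separator
marginals, along a perfect sequence of the cliques:
`p(x) · ∏_{i≥2} p(x_{S_i}) = ∏_i p(x_{C_i})`. -/
theorem chordal_mrf_factorization {V : Type*} [Fintype V]
    (G : SimpleGraph V) (hG : IsChordal G)
    (p : (V → ℝ) → ℝ) (hpos : ∀ x, 0 < p x) (hGM : GlobalMarkov G p)
    (m : ℕ) (hm : 0 < m) (C : Fin m → Set V)
    (hmax : ∀ i, IsMaxClique G (C i))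
    (hall : ∀ s : Set V, IsMaxClique G s → ∃ i, C i = s)
    (hcover : (⋃ i, C i) = Set.univ)
    (hrip : ∀ i : Fin m, 0 < (i : ℕ) →
      ∃ j, j < i ∧ (C i ∩ ⋃ k < i, C k) ⊆ C j) :
    ∀ x, p x * ∏ i : Fin m,
        (if 0 < (i : ℕ) then marginal p (C i ∩ ⋃ k < i, C k) x else 1)
      = ∏ i : Fin m, marginal p (C i) x := by
  intro x
  -- the `⋃ k < j` set equals `Dset C n` for `j = n+1`
  have hDH : ∀ n : ℕ, ∀ h : n + 1 < m,
      (⋃ k < (⟨n+1, h⟩ : Fin m), C k) = Dset C n := by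
    intro n h
    have hjv : ((⟨n+1, h⟩ : Fin m) : ℕ) = n + 1 := rfl
    ext y
    rw [memH, mem_Dset]
    constructor
    · rintro ⟨k', hk', hy⟩
      exact ⟨k', by rw [Fin.lt_def] at hk'; exact (by omega : (k' : ℕ) ≤ n), hy⟩
    · rintro ⟨k', hk', hy⟩
      exact ⟨k', by rw [Fin.lt_def]; exact (by omega : (k' : ℕ) < n + 1), hy⟩
  -- the global Markov step along the perfect sequence
  have hGMstep : ∀ n : ℕ, ∀ h : n + 1 < m,
      marginal p (Dset C (n+1)) x * marginal p (C ⟨n+1, h⟩ ∩ Dset C n) x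
        = marginal p (Dset C n) x * marginal p (C ⟨n+1, h⟩) x := by
    intro n h
    set j : Fin m := ⟨n+1, h⟩ with hjdef
    set S : Set V := C j ∩ Dset C n with hS
    have hjpos : 0 < (j : ℕ) := by simp [hjdef]
    have hsepG : Separates G (Dset C n \ S) (C j \ S) S := by
      have := separ G C hall hrip j hjpos
      rwa [hDH n h] at this
    have hdisj : Disjoint (Dset C n \ S) (C j \ S) := by
      rw [Set.disjoint_left]
      rintro y ⟨hy1, hy2⟩ ⟨hy3, _⟩
      exact hy2 ⟨hy3, hy1⟩
    have hgm := hGM _ _ _ hdisj hsepG x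
    have hjval : (j : ℕ) = n + 1 := rfl
    have hsub1 : Dset C n ⊆ Dset C (n+1) := by
      intro y hy
      rw [mem_Dset] at hy ⊢
      obtain ⟨k', h1, h2⟩ := hy
      exact ⟨k', by omega, h2⟩
    have hsub2 : C j ⊆ Dset C (n+1) := by
      intro y hy
      rw [mem_Dset]
      exact ⟨j, hjval.le, hy⟩
    have e1 : (Dset C n \ S) ∪ (C j \ S) ∪ S = Dset C (n+1) := by
      apply Set.Subset.antisymm
      · exact Set.union_subset
          (Set.union_subset (Set.diff_subset.trans hsub1) (Set.diff_subset.trans hsub2))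
          ((hS ▸ Set.inter_subset_left).trans hsub2)
      · intro y hy
        rw [mem_Dset] at hy
        obtain ⟨k', hk', hy⟩ := hy
        rcases Nat.lt_or_ge (k' : ℕ) (n+1) with hlt | hge
        · have hyD : y ∈ Dset C n := (mem_Dset C n y).mpr ⟨k', by omega, hy⟩
          by_cases hyS : y ∈ S
          · exact Or.inr hyS
          · exact Or.inl (Or.inl ⟨hyD, hyS⟩)
        · have hkj : k' = j := Fin.ext (by omega)
          rw [hkj] at hy
          by_cases hyS : y ∈ S
          · exact Or.inr hyS
          · exact Or.inl (Or.inr ⟨hy, hyS⟩)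
    have e2 : (Dset C n \ S) ∪ S = Dset C n := by
      rw [Set.diff_union_self, Set.union_eq_self_of_subset_right]
      rw [hS]; exact Set.inter_subset_right
    have e3 : (C j \ S) ∪ S = C j := by
      rw [Set.diff_union_self, Set.union_eq_self_of_subset_right]
      rw [hS]; exact Set.inter_subset_left
    rw [e1, e2, e3] at hgm
    exact hgm
  -- telescoping induction
  have key : ∀ n, n < m → marginal p (Dset C n) x *
        (∏ i : Fin m, if 0 < (i : ℕ) ∧ (i : ℕ) ≤ n
            then marginal p (C i ∩ ⋃ k < i, C k) x else 1)
      = ∏ i : Fin m, if (i : ℕ) ≤ n then marginal p (C i) x else 1 := by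
    intro n
    induction n with
    | zero =>
      intro h0
      have h0v : ((⟨0, hm⟩ : Fin m) : ℕ) = 0 := rfl
      have hD0 : Dset C 0 = C ⟨0, hm⟩ := by
        ext y
        rw [mem_Dset]
        constructor
        · rintro ⟨k, hk, hy⟩
          have : k = ⟨0, hm⟩ := Fin.ext (by omega)
          rwa [← this]
        · intro hy; exact ⟨⟨0, hm⟩, le_rfl, hy⟩
      have hPS : (∏ i : Fin m, if 0 < (i : ℕ) ∧ (i : ℕ) ≤ 0
          then marginal p (C i ∩ ⋃ k < i, C k) x else 1) = 1 := by
        apply Finset.prod_eq_one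
        intro i _
        rw [if_neg (by omega)]
      have hPC : (∏ i : Fin m, if (i : ℕ) ≤ 0 then marginal p (C i) x else 1)
          = marginal p (C ⟨0, hm⟩) x := by
        rw [Finset.prod_eq_single (⟨0, hm⟩ : Fin m)]
        · rw [if_pos (by simp)]
        · intro i _ hne
          rw [if_neg (fun hc => hne (Fin.ext (by omega)))]
        · intro h; exact absurd (Finset.mem_univ _) h
      rw [hD0, hPS, hPC, mul_one]
    | succ n ih =>
      intro hn1
      have hn : n < m := by omega
      set j : Fin m := ⟨n+1, hn1⟩ with hjdef
      have hjval : (j : ℕ) = n + 1 := rfl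
      have hgm := hGMstep n hn1
      have hSrw : C j ∩ Dset C n = C j ∩ ⋃ k < j, C k := by rw [hDH n hn1]
      rw [hSrw] at hgm
      have hPS : (∏ i : Fin m, if 0 < (i : ℕ) ∧ (i : ℕ) ≤ n + 1
            then marginal p (C i ∩ ⋃ k < i, C k) x else 1)
          = marginal p (C j ∩ ⋃ k < j, C k) x *
            ∏ i : Fin m, (if 0 < (i : ℕ) ∧ (i : ℕ) ≤ n
              then marginal p (C i ∩ ⋃ k < i, C k) x else 1) := by
        have hterm : ∀ i : Fin m, (if 0 < (i : ℕ) ∧ (i : ℕ) ≤ n + 1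
              then marginal p (C i ∩ ⋃ k < i, C k) x else 1)
            = (if i = j then marginal p (C i ∩ ⋃ k < i, C k) x else 1) *
              (if 0 < (i : ℕ) ∧ (i : ℕ) ≤ n
                then marginal p (C i ∩ ⋃ k < i, C k) x else 1) := by
          intro i
          by_cases hij : i = j
          · subst hij
            rw [if_pos (by omega), if_pos rfl, if_neg (by omega), mul_one]
          · have hne : (i : ℕ) ≠ n + 1 := fun hc => hij (Fin.ext (by omega))
            rw [if_neg hij, one_mul]
            by_cases hc : 0 < (i : ℕ) ∧ (i : ℕ) ≤ n
            · rw [if_pos hc, if_pos (by omega)]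
            · rw [if_neg hc, if_neg (by omega)]
        rw [Finset.prod_congr rfl (fun i _ => hterm i), Finset.prod_mul_distrib,
          Finset.prod_ite_eq' Finset.univ j
            (fun i => marginal p (C i ∩ ⋃ k < i, C k) x),
          if_pos (Finset.mem_univ j)]
      have hPC : (∏ i : Fin m, if (i : ℕ) ≤ n + 1 then marginal p (C i) x else 1)
          = marginal p (C j) x *
            ∏ i : Fin m, (if (i : ℕ) ≤ n then marginal p (C i) x else 1) := by
        have hterm : ∀ i : Fin m, (if (i : ℕ) ≤ n + 1 then marginal p (C i) x else 1)
            = (if i = j then marginal p (C i) x else 1) *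
              (if (i : ℕ) ≤ n then marginal p (C i) x else 1) := by
          intro i
          by_cases hij : i = j
          · subst hij
            rw [if_pos (by omega), if_pos rfl, if_neg (by omega), mul_one]
          · have hne : (i : ℕ) ≠ n + 1 := fun hc => hij (Fin.ext (by omega))
            rw [if_neg hij, one_mul]
            by_cases hc : (i : ℕ) ≤ n
            · rw [if_pos hc, if_pos (by omega)]
            · rw [if_neg hc, if_neg (by omega)]
        rw [Finset.prod_congr rfl (fun i _ => hterm i), Finset.prod_mul_distrib,
          Finset.prod_ite_eq' Finset.univ j (fun i => marginal p (C i) x),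
          if_pos (Finset.mem_univ j)]
      rw [hPS, hPC, ← mul_assoc, hgm]
      rw [← ih hn]
      ring
  -- conclude with n = m - 1
  have hDuniv : Dset C (m-1) = Set.univ := by
    ext y
    simp only [Set.mem_univ, iff_true, mem_Dset]
    have : y ∈ ⋃ i, C i := by rw [hcover]; exact Set.mem_univ y
    obtain ⟨k, hk⟩ := Set.mem_iUnion.mp this
    exact ⟨k, by omega, hk⟩
  have hfin := key (m-1) (by omega)
  rw [hDuniv, marginal_univ_eq] at hfin
  have hL : (∏ i : Fin m, if 0 < (i : ℕ) ∧ (i : ℕ) ≤ m - 1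
        then marginal p (C i ∩ ⋃ k < i, C k) x else 1)
      = ∏ i : Fin m, (if 0 < (i : ℕ)
        then marginal p (C i ∩ ⋃ k < i, C k) x else 1) := by
    apply Finset.prod_congr rfl
    intro i _
    have : (0 < (i : ℕ) ∧ (i : ℕ) ≤ m - 1) ↔ 0 < (i : ℕ) := by
      have := i.isLt; omega
    by_cases hc : 0 < (i : ℕ)
    · rw [if_pos (this.mpr hc), if_pos hc]
    · rw [if_neg (fun hx => hc (this.mp hx)), if_neg hc]
  have hR : (∏ i : Fin m, if (i : ℕ) ≤ m - 1 then marginal p (C i) x else 1)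
      = ∏ i : Fin m, marginal p (C i) x := by
    apply Finset.prod_congr rfl
    intro i _
    rw [if_pos (by have := i.isLt; omega)]
  rw [hL, hR] at hfin
  exact hfin
end

section
/- The clique-tree shrinkage target matrix is positive definite: if each clique-level matrix Σ̂̂_c (and each separator-level matrix Σ̂̂_s) is positive definite, then the matrix Ĵ = Σ_{c∈𝒞} [((1−θ)Σ̂_c + θΣ̂̂_c)^{-1}]^V − Σ_{s∈𝒮} [((1−θ)Σ̂_s + θΣ̂̂_s)^{-1}]^V is the precision matrix of a valid (positive-definite) covariance, given that the convex combinations (1−θ)Σ̂_c + θΣ̂̂_c with θ ∈ [0,1] of positive-definite matrices are positive definite. -/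
open Matrix

/-- The principal submatrix of `M` on the index set `c`. -/
def subm {n : ℕ} (M : Matrix (Fin n) (Fin n) ℝ) (c : Finset (Fin n)) :
    Matrix ↥c ↥c ℝ :=
  fun i j => M (i : Fin n) (j : Fin n)

/-- Embed a matrix indexed by `c` into an `n × n` matrix padded with zeros. -/
def embed {n : ℕ} (c : Finset (Fin n)) (M : Matrix ↥c ↥c ℝ) :
    Matrix (Fin n) (Fin n) ℝ :=
  fun i j => if hi : i ∈ c then (if hj : j ∈ c then M ⟨i, hi⟩ ⟨j, hj⟩ else 0) else 0

section CliqueAux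

variable {n : ℕ}

/-- Restrict a vector to a finset. -/
def restr (x : Fin n → ℝ) (s : Finset (Fin n)) : ↥s → ℝ := fun i => x i

/-- Extend a vector on a finset by zero. -/
def ext0 (s : Finset (Fin n)) (y : ↥s → ℝ) : Fin n → ℝ :=
  fun i => if h : i ∈ s then y ⟨i, h⟩ else 0

lemma ext0_dot (s : Finset (Fin n)) (y : ↥s → ℝ) (v : Fin n → ℝ) :
    ext0 s y ⬝ᵥ v = y ⬝ᵥ restr v s := by
  classical
  calc ext0 s y ⬝ᵥ v = ∑ i : Fin n, ext0 s y i * v i := rfl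
    _ = ∑ i ∈ s, ext0 s y i * v i :=
        (Finset.sum_subset (Finset.subset_univ s)
          (fun i _ hi => by simp [ext0, hi])).symm
    _ = ∑ i ∈ s.attach, ext0 s y i.1 * v i.1 := (Finset.sum_attach _ _).symm
    _ = ∑ i : ↥s, y i * restr v s i := by
        rw [Finset.univ_eq_attach]
        exact Finset.sum_congr rfl (fun i _ => by simp [ext0, restr, i.2])
    _ = y ⬝ᵥ restr v s := rfl

lemma dot_ext0 (s : Finset (Fin n)) (y : ↥s → ℝ) (v : Fin n → ℝ) :
    v ⬝ᵥ ext0 s y = restr v s ⬝ᵥ y := by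
  rw [dotProduct_comm, ext0_dot, dotProduct_comm]

lemma mulVec_ext0 {A : Matrix (Fin n) (Fin n) ℝ} {s : Finset (Fin n)} (y : ↥s → ℝ)
    {i : Fin n} (h : i ∈ s) :
    (A *ᵥ ext0 s y) i = (subm A s *ᵥ y) ⟨i, h⟩ := by
  show (fun j => A i j) ⬝ᵥ ext0 s y = _
  rw [dot_ext0]
  rfl

lemma quad_ext0 (A : Matrix (Fin n) (Fin n) ℝ) (s : Finset (Fin n)) (y : ↥s → ℝ) :
    ext0 s y ⬝ᵥ (A *ᵥ ext0 s y) = y ⬝ᵥ (subm A s *ᵥ y) := by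
  rw [ext0_dot]
  congr 1
  funext i
  exact mulVec_ext0 y i.2

lemma embed_mulVec (s : Finset (Fin n)) (N : Matrix ↥s ↥s ℝ) (x : Fin n → ℝ) :
    embed s N *ᵥ x = ext0 s (N *ᵥ restr x s) := by
  funext i
  by_cases h : i ∈ s
  · have : (fun j => embed s N i j) = ext0 s (fun j => N ⟨i, h⟩ j) := by
      funext j
      by_cases hj : j ∈ s <;> simp [embed, ext0, h, hj]
    show (fun j => embed s N i j) ⬝ᵥ x = _
    rw [this, ext0_dot]
    simp [ext0, h]
    rfl
  · show (fun j => embed s N i j) ⬝ᵥ x = _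
    simp [embed, ext0, h, dotProduct]

lemma quad_embed (s : Finset (Fin n)) (N : Matrix ↥s ↥s ℝ) (x : Fin n → ℝ) :
    x ⬝ᵥ (embed s N *ᵥ x) = restr x s ⬝ᵥ (N *ᵥ restr x s) := by
  rw [embed_mulVec, dot_ext0]

lemma subm_posDef {A : Matrix (Fin n) (Fin n) ℝ} (hA : A.PosDef) (s : Finset (Fin n)) :
    (subm A s).PosDef := by
  rw [posDef_iff_dotProduct_mulVec]
  constructor
  · exact hA.1.submatrix (fun i : ↥s => (i : Fin n))
  · intro y hy
    have hx : ext0 s y ≠ 0 := by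
      obtain ⟨i, hi⟩ := Function.ne_iff.mp hy
      refine Function.ne_iff.mpr ⟨i.1, ?_⟩
      simpa [ext0, i.2] using hi
    have h := hA.dotProduct_mulVec_pos hx
    rw [star_trivial] at h
    rw [quad_ext0] at h
    simpa using h

lemma smul_posDef {A : Matrix (Fin n) (Fin n) ℝ} (hA : A.PosDef) {c : ℝ} (hc : 0 < c) :
    (c • A).PosDef := by
  rw [posDef_iff_dotProduct_mulVec]
  constructor
  · show (c • A)ᴴ = c • A
    rw [conjTranspose_smul, hA.1]
    simp
  · intro x hx
    have h := hA.dotProduct_mulVec_pos hx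
    rw [star_trivial] at h ⊢
    rw [smul_mulVec, dotProduct_smul, smul_eq_mul]
    exact mul_pos hc h

lemma conv_posDef {Sig Tar : Matrix (Fin n) (Fin n) ℝ}
    (hSig : Sig.PosDef) (hTar : Tar.PosDef)
    {θ : ℝ} (hθ0 : 0 ≤ θ) (hθ1 : θ ≤ 1) :
    ((1 - θ) • Sig + θ • Tar).PosDef := by
  rcases eq_or_lt_of_le hθ0 with h0 | h0
  · subst h0; simpa using hSig
  · rcases eq_or_lt_of_le hθ1 with h1 | h1
    · subst h1; simpa using hTar
    · exact (smul_posDef hSig (by linarith)).add (smul_posDef hTar h0)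

lemma embed_isHermitian {s : Finset (Fin n)} {N : Matrix ↥s ↥s ℝ}
    (hN : N.IsHermitian) : (embed s N).IsHermitian := by
  show (embed s N)ᴴ = embed s N
  ext i j
  by_cases hi : i ∈ s <;> by_cases hj : j ∈ s <;>
    simp [conjTranspose_apply, embed, hi, hj]
  exact congrFun (congrFun hN ⟨i, hi⟩) ⟨j, hj⟩

lemma symm_dot {A : Matrix (Fin n) (Fin n) ℝ} (hA : A.IsHermitian)
    (u w : Fin n → ℝ) : u ⬝ᵥ (A *ᵥ w) = w ⬝ᵥ (A *ᵥ u) := by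
  have hAt : Aᵀ = A := by
    rw [← conjTranspose_eq_transpose_of_trivial]
    exact hA
  rw [dotProduct_mulVec, ← hAt, vecMul_transpose, dotProduct_comm, hAt]

lemma key {A : Matrix (Fin n) (Fin n) ℝ} (hA : A.PosDef) {s t : Finset (Fin n)}
    (hst : s ⊆ t) (x : Fin n → ℝ) :
    restr x s ⬝ᵥ ((subm A s)⁻¹ *ᵥ restr x s)
      ≤ restr x t ⬝ᵥ ((subm A t)⁻¹ *ᵥ restr x t) := by
  classical
  have hAs : (subm A s).PosDef := subm_posDef hA s
  have hAt : (subm A t).PosDef := subm_posDef hA t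
  set y : ↥s → ℝ := (subm A s)⁻¹ *ᵥ restr x s with hy
  set z : ↥t → ℝ := (subm A t)⁻¹ *ᵥ restr x t with hz
  set w : Fin n → ℝ := ext0 s y with hw
  set u : Fin n → ℝ := ext0 t z with hu
  set q : ℝ := restr x s ⬝ᵥ y with hq
  set Q : ℝ := restr x t ⬝ᵥ z with hQ
  have hsinv : subm A s * (subm A s)⁻¹ = 1 :=
    mul_nonsing_inv _ (isUnit_iff_ne_zero.mpr hAs.det_pos.ne')
  have htinv : subm A t * (subm A t)⁻¹ = 1 :=
    mul_nonsing_inv _ (isUnit_iff_ne_zero.mpr hAt.det_pos.ne')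
  have hsy : subm A s *ᵥ y = restr x s := by
    rw [hy, mulVec_mulVec, hsinv, one_mulVec]
  have htz : subm A t *ᵥ z = restr x t := by
    rw [hz, mulVec_mulVec, htinv, one_mulVec]
  have hww : w ⬝ᵥ (A *ᵥ w) = q := by
    rw [hw, quad_ext0, hsy, dotProduct_comm]
  have huu : u ⬝ᵥ (A *ᵥ u) = Q := by
    rw [hu, quad_ext0, htz, dotProduct_comm]
  have hAu : ∀ i : Fin n, i ∈ t → (A *ᵥ u) i = x i := by
    intro i hi
    rw [hu, mulVec_ext0 z hi, htz]
    rfl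
  have hwAu : w ⬝ᵥ (A *ᵥ u) = q := by
    rw [hw, ext0_dot]
    have : restr (A *ᵥ u) s = restr x s := by
      funext i
      exact hAu i.1 (hst i.2)
    rw [this, dotProduct_comm]
  have huAw : u ⬝ᵥ (A *ᵥ w) = q := by
    rw [symm_dot hA.1, hwAu]
  have hq0 : 0 ≤ q := by
    have := hAs.inv.posSemidef.dotProduct_mulVec_nonneg (restr x s)
    rwa [star_trivial] at this
  have hQ0 : 0 ≤ Q := by
    have := hAt.inv.posSemidef.dotProduct_mulVec_nonneg (restr x t)
    rwa [star_trivial] at this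
  have hnn : ∀ c : ℝ, 0 ≤ Q * (c * c) + (2 * q) * c + q := by
    intro c
    have hps := hA.posSemidef.dotProduct_mulVec_nonneg (c • u + w)
    rw [star_trivial] at hps
    have hexp : (c • u + w) ⬝ᵥ (A *ᵥ (c • u + w))
        = Q * (c * c) + (2 * q) * c + q := by
      rw [mulVec_add, mulVec_smul]
      rw [dotProduct_add, add_dotProduct, add_dotProduct,
        dotProduct_smul, dotProduct_smul, smul_dotProduct, smul_dotProduct]
      rw [huu, hww, hwAu, huAw]
      simp [smul_eq_mul]
      ring
    rw [hexp] at hps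
    exact hps
  have hd := discrim_le_zero hnn
  rw [discrim] at hd
  show q ≤ Q
  nlinarith [hd, hq0, hQ0]

lemma sum_mulVec' {m : ℕ} (A : Fin m → Matrix (Fin n) (Fin n) ℝ) (x : Fin n → ℝ) :
    (∑ i, A i) *ᵥ x = ∑ i, A i *ᵥ x := by
  funext j
  simp only [mulVec, dotProduct, Finset.sum_apply, Matrix.sum_apply, Finset.sum_mul]
  rw [Finset.sum_comm]

lemma dot_sum' {m : ℕ} (v : Fin n → ℝ) (f : Fin m → (Fin n → ℝ)) :
    v ⬝ᵥ (∑ i, f i) = ∑ i, v ⬝ᵥ f i := by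
  simp only [dotProduct, Finset.sum_apply, Finset.mul_sum]
  rw [Finset.sum_comm]

end CliqueAux

/-- The clique-tree shrinkage target construction gives a valid precision
matrix: given a clique forest with cliques `C i` and separators
`S i = C i ∩ (C 0 ∪ ⋯ ∪ C (i-1))`, positive-definite matrices `Sig` (sample
covariance) and `Tar` (shrinkage target), and `θ ∈ [0,1]`, the matrix
`Ĵ = Σ_c [((1−θ)Σ̂_c + θΣ̂̂_c)⁻¹]^V − Σ_s [((1−θ)Σ̂_s + θΣ̂̂_s)⁻¹]^V`
is positive definite, i.e. it is the precision matrix of a valid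
(positive-definite) covariance. -/
theorem clique_tree_shrinkage_posdef {n m : ℕ}
    (Sig Tar : Matrix (Fin n) (Fin n) ℝ)
    (hSig : Sig.PosDef) (hTar : Tar.PosDef)
    (θ : ℝ) (hθ0 : 0 ≤ θ) (hθ1 : θ ≤ 1)
    (C : Fin m → Finset (Fin n))
    (hcover : ∀ v, ∃ i, v ∈ C i)
    (hrip : ∀ i : Fin m, 0 < (i : ℕ) →
      ∃ j, j < i ∧ (C i ∩ (Finset.univ.filter (· < i)).biUnion C) ⊆ C j)
    (S : Fin m → Finset (Fin n))
    (hS : ∀ i, S i = C i ∩ (Finset.univ.filter (· < i)).biUnion C) :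
    (∑ i : Fin m,
        embed (C i) ((1 - θ) • subm Sig (C i) + θ • subm Tar (C i))⁻¹
      - ∑ i : Fin m,
        embed (S i) ((1 - θ) • subm Sig (S i) + θ • subm Tar (S i))⁻¹).PosDef := by
  classical
  set M : Matrix (Fin n) (Fin n) ℝ := (1 - θ) • Sig + θ • Tar with hMdef
  have hM : M.PosDef := conv_posDef hSig hTar hθ0 hθ1
  have hsub : ∀ s : Finset (Fin n),
      (1 - θ) • subm Sig s + θ • subm Tar s = subm M s := by
    intro s
    ext i j
    simp [subm, hMdef, Matrix.add_apply, Matrix.smul_apply]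
  simp only [hsub]
  rw [posDef_iff_dotProduct_mulVec]
  constructor
  · have h1 : ∀ (f : Fin m → Finset (Fin n)),
        (∑ i, embed (f i) (subm M (f i))⁻¹).IsHermitian := by
      intro f
      show _ᴴ = _
      rw [conjTranspose_sum]
      exact Finset.sum_congr rfl fun i _ =>
        embed_isHermitian (subm_posDef hM (f i)).inv.isHermitian
    exact (h1 C).sub (h1 S)
  · intro x hx
    rw [star_trivial, sub_mulVec, dotProduct_sub, sum_mulVec', sum_mulVec',
      dot_sum', dot_sum', ← Finset.sum_sub_distrib]
    -- notation for the quadratic forms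
    have hqC : ∀ i, x ⬝ᵥ (embed (C i) (subm M (C i))⁻¹ *ᵥ x)
        = restr x (C i) ⬝ᵥ ((subm M (C i))⁻¹ *ᵥ restr x (C i)) := fun i =>
      quad_embed _ _ _
    have hqS : ∀ i, x ⬝ᵥ (embed (S i) (subm M (S i))⁻¹ *ᵥ x)
        = restr x (S i) ⬝ᵥ ((subm M (S i))⁻¹ *ᵥ restr x (S i)) := fun i =>
      quad_embed _ _ _
    -- pick the minimal clique on which x does not vanish
    obtain ⟨v, hv⟩ := Function.ne_iff.mp hx
    obtain ⟨iv, hiv⟩ := hcover v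
    set T : Finset (Fin m) := Finset.univ.filter (fun i => restr x (C i) ≠ 0) with hT
    have hTne : T.Nonempty := by
      refine ⟨iv, ?_⟩
      simp only [hT, Finset.mem_filter, Finset.mem_univ, true_and]
      exact Function.ne_iff.mpr ⟨⟨v, hiv⟩, hv⟩
    set i₀ : Fin m := T.min' hTne with hi₀
    have hi₀T : i₀ ∈ T := T.min'_mem hTne
    have hCne : restr x (C i₀) ≠ 0 := by
      have := hi₀T
      simp only [hT, Finset.mem_filter] at this
      exact this.2
    have hbelow : ∀ j : Fin m, j < i₀ → restr x (C j) = 0 := by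
      intro j hj
      by_contra hne
      have : j ∈ T := by simp [hT, hne]
      exact absurd (T.min'_le j this) (not_le.mpr hj)
    have hSzero : restr x (S i₀) = 0 := by
      funext w
      obtain ⟨wv, hwv⟩ := w
      have hw := hwv
      rw [hS i₀, Finset.mem_inter, Finset.mem_biUnion] at hw
      obtain ⟨_, j, hj, hwj⟩ := hw
      simp only [Finset.mem_filter, Finset.mem_univ, true_and] at hj
      have := congrFun (hbelow j hj) ⟨wv, hwj⟩
      simpa [restr] using this
    refine Finset.sum_pos' ?_ ⟨i₀, Finset.mem_univ _, ?_⟩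
    · intro i _
      rw [hqC i, hqS i, sub_nonneg]
      exact key hM (by rw [hS i]; exact Finset.inter_subset_left) x
    · rw [hqC i₀, hqS i₀, hSzero]
      simp only [zero_dotProduct]
      rw [sub_zero]
      have := (subm_posDef hM (C i₀)).inv.dotProduct_mulVec_pos hCne
      rwa [star_trivial] at this
end
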